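/- arXiv:1410.7213 — 3 statements merged into one kernel-verified Lean document; each statement's English description precedes it below -/
import Mathlib

section
/- Let n ≥ 11 and 3 ≤ r ≤ n−5. Then ex(n−1+r;T_n*) = ex(n−1+r;{K_{1,n−2},T_n*}). -/
open SimpleGraph

/-- `G` contains a copy of `H` as a subgraph: there is an injective map
preserving adjacency. -/
def ContainsCopy {V : Type*} {W : Type*} (G : SimpleGraph V) (H : SimpleGraph W) : Prop :=
  ∃ f : W ↪ V, ∀ a b, H.Adj a b → G.Adj (f a) (f b)

/-- `exNum p H` is the maximal number of edges in a simple graph of order `p`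
not containing a copy of `H`. -/
noncomputable def exNum (p : ℕ) {W : Type*} (H : SimpleGraph W) : ℕ :=
  sSup {m : ℕ | ∃ G : SimpleGraph (Fin p), ¬ ContainsCopy G H ∧ Nat.card G.edgeSet = m}

/-- `exNum2 p H₁ H₂` is the maximal number of edges in a simple graph of order `p`
containing no copy of `H₁` and no copy of `H₂`. -/
noncomputable def exNum2 (p : ℕ) {W₁ W₂ : Type*} (H₁ : SimpleGraph W₁) (H₂ : SimpleGraph W₂) : ℕ :=
  sSup {m : ℕ | ∃ G : SimpleGraph (Fin p),
    ¬ ContainsCopy G H₁ ∧ ¬ ContainsCopy G H₂ ∧ Nat.card G.edgeSet = m}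

/-- The tree `T_n` on vertices `v_0, …, v_{n-1}` with edges
`v_0v_1, …, v_0v_{n-2}` and `v_{n-2}v_{n-1}`: the unique tree on `n` vertices
of maximal degree `n-2`. -/
def Tn (n : ℕ) : SimpleGraph (Fin n) :=
  SimpleGraph.fromRel (fun a b =>
    (a.val = 0 ∧ 1 ≤ b.val ∧ b.val ≤ n - 2) ∨ (a.val = n - 2 ∧ b.val = n - 1))

/-- The tree `T_n^*` on vertices `v_0, …, v_{n-1}` with edges
`v_0v_1, …, v_0v_{n-3}`, `v_{n-3}v_{n-2}` and `v_{n-2}v_{n-1}`. -/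
def TnStar (n : ℕ) : SimpleGraph (Fin n) :=
  SimpleGraph.fromRel (fun a b =>
    (a.val = 0 ∧ 1 ≤ b.val ∧ b.val ≤ n - 3) ∨ (a.val = n - 3 ∧ b.val = n - 2) ∨
    (a.val = n - 2 ∧ b.val = n - 1))


section CopyLemmas

variable {p n : ℕ}

/-- Builder: a path u-x-y-z plus n-4 spare neighbours of u gives a copy of TnStar n. -/
lemma tnstar_mk (hn : 11 ≤ n) (G : SimpleGraph (Fin p)) [DecidableRel G.Adj]
    {u x y z : Fin p}
    (hux : G.Adj u x) (hxy : G.Adj x y) (hyz : G.Adj y z)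
    (huy : u ≠ y) (huz : u ≠ z) (hxz : x ≠ z)
    (hcard : n - 4 ≤ ((G.neighborFinset u) \ {x, y, z}).card) :
    ContainsCopy G (TnStar n) := by
  obtain ⟨T, hTsub, hTcard⟩ := Finset.exists_subset_card_eq hcard
  have hmem : ∀ i : Fin (n-4), T.orderEmbOfFin hTcard i ∈ G.neighborFinset u \ ({x, y, z} : Finset (Fin p)) :=
    fun i => hTsub (T.orderEmbOfFin_mem hTcard i)
  set e : Fin (n-4) → Fin p := fun i => T.orderEmbOfFin hTcard i with he
  have hadj : ∀ i, G.Adj u (e i) := by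
    intro i
    have := hmem i
    rw [Finset.mem_sdiff, mem_neighborFinset] at this
    exact this.1
  have hnotxyz : ∀ i, e i ≠ x ∧ e i ≠ y ∧ e i ≠ z := by
    intro i
    have := hmem i
    rw [Finset.mem_sdiff] at this
    have h2 := this.2
    simp only [Finset.mem_insert, Finset.mem_singleton] at h2
    push_neg at h2
    exact h2
  have hne_u : ∀ i, e i ≠ u := fun i h => G.irrefl (h ▸ (hadj i))
  have einj : Function.Injective e := (T.orderEmbOfFin hTcard).injective
  have hnn : 7 ≤ n - 4 := by omega
  -- the embedding
  have hxu : x ≠ u := fun h => by rw [h] at hux; exact G.irrefl hux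
  have hxy' : x ≠ y := G.ne_of_adj hxy
  have hyz' : y ≠ z := G.ne_of_adj hyz
  classical
  let f : Fin n → Fin p := fun i =>
    if h0 : i.val = 0 then u
    else if h1 : i.val ≤ n - 4 then e ⟨i.val - 1, by omega⟩
    else if h2 : i.val = n - 3 then x
    else if h3 : i.val = n - 2 then y
    else z
  have hcat : ∀ i : Fin n, i.val = 0 ∨ (1 ≤ i.val ∧ i.val ≤ n-4) ∨ i.val = n-3 ∨ i.val = n-2 ∨ i.val = n-1 := by
    intro i; have := i.isLt; omega
  have hf0 : ∀ i : Fin n, i.val = 0 → f i = u := by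
    intro i h; simp only [f]; rw [dif_pos h]
  have hfe : ∀ (i : Fin n) (h1 : 1 ≤ i.val) (h2 : i.val ≤ n - 4), f i = e ⟨i.val - 1, by omega⟩ := by
    intro i h1 h2; simp only [f]; rw [dif_neg (by omega), dif_pos h2]
  have hfx : ∀ i : Fin n, i.val = n - 3 → f i = x := by
    intro i h; simp only [f]; rw [dif_neg (by omega), dif_neg (by omega), dif_pos h]
  have hfy : ∀ i : Fin n, i.val = n - 2 → f i = y := by
    intro i h; simp only [f]
    rw [dif_neg (by omega), dif_neg (by omega), dif_neg (by omega), dif_pos h]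
  have hfz : ∀ i : Fin n, i.val = n - 1 → f i = z := by
    intro i h; simp only [f]
    rw [dif_neg (by omega), dif_neg (by omega), dif_neg (by omega), dif_neg (by omega)]
  have finj : Function.Injective f := by
    intro i j hij
    rcases hcat i with hi | hi | hi | hi | hi <;> rcases hcat j with hj | hj | hj | hj | hj
    · exact Fin.ext (by omega)
    · rw [hf0 i hi, hfe j hj.1 hj.2] at hij; exact absurd hij.symm (hne_u _)
    · rw [hf0 i hi, hfx j hj] at hij; exact absurd hij.symm hxu
    · rw [hf0 i hi, hfy j hj] at hij; exact absurd hij huy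
    · rw [hf0 i hi, hfz j hj] at hij; exact absurd hij huz
    · rw [hfe i hi.1 hi.2, hf0 j hj] at hij; exact absurd hij (hne_u _)
    · rw [hfe i hi.1 hi.2, hfe j hj.1 hj.2] at hij
      have := einj hij
      have : i.val - 1 = j.val - 1 := congrArg Fin.val this
      exact Fin.ext (by omega)
    · rw [hfe i hi.1 hi.2, hfx j hj] at hij; exact absurd hij (hnotxyz _).1
    · rw [hfe i hi.1 hi.2, hfy j hj] at hij; exact absurd hij (hnotxyz _).2.1
    · rw [hfe i hi.1 hi.2, hfz j hj] at hij; exact absurd hij (hnotxyz _).2.2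
    · rw [hfx i hi, hf0 j hj] at hij; exact absurd hij.symm hxu.symm
    · rw [hfx i hi, hfe j hj.1 hj.2] at hij; exact absurd hij.symm (hnotxyz _).1
    · exact Fin.ext (by omega)
    · rw [hfx i hi, hfy j hj] at hij; exact absurd hij hxy'
    · rw [hfx i hi, hfz j hj] at hij; exact absurd hij hxz
    · rw [hfy i hi, hf0 j hj] at hij; exact absurd hij huy.symm
    · rw [hfy i hi, hfe j hj.1 hj.2] at hij; exact absurd hij.symm (hnotxyz _).2.1
    · rw [hfy i hi, hfx j hj] at hij; exact absurd hij hxy'.symm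
    · exact Fin.ext (by omega)
    · rw [hfy i hi, hfz j hj] at hij; exact absurd hij hyz'
    · rw [hfz i hi, hf0 j hj] at hij; exact absurd hij huz.symm
    · rw [hfz i hi, hfe j hj.1 hj.2] at hij; exact absurd hij.symm (hnotxyz _).2.2
    · rw [hfz i hi, hfx j hj] at hij; exact absurd hij hxz.symm
    · rw [hfz i hi, hfy j hj] at hij; exact absurd hij hyz'.symm
    · exact Fin.ext (by omega)
  refine ⟨⟨f, finj⟩, ?_⟩
  intro a b hab
  rw [TnStar, fromRel_adj] at hab
  obtain ⟨hne, hrel⟩ := hab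
  simp only [Function.Embedding.coeFn_mk]
  have key : ∀ a b : Fin n,
      (a.val = 0 ∧ 1 ≤ b.val ∧ b.val ≤ n - 3) ∨ (a.val = n - 3 ∧ b.val = n - 2) ∨
      (a.val = n - 2 ∧ b.val = n - 1) → G.Adj (f a) (f b) := by
    intro a b hrel
    rcases hrel with ⟨ha, hb1, hb2⟩ | ⟨ha, hb⟩ | ⟨ha, hb⟩
    · rw [hf0 a ha]
      rcases Nat.lt_or_ge b.val (n-3) with hb | hb
      · rw [hfe b hb1 (by omega)]; exact hadj _
      · rw [hfx b (by omega)]; exact hux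
    · rw [hfx a ha, hfy b hb]; exact hxy
    · rw [hfy a ha, hfz b hb]; exact hyz
  rcases hrel with h | h
  · exact key a b h
  · exact (key b a h).symm


section CopyLemmas2


variable {p n : ℕ}

lemma tnstar_elim (hn : 11 ≤ n) (G : SimpleGraph (Fin p)) [DecidableRel G.Adj]
    (h : ContainsCopy G (TnStar n)) :
    ∃ u x y z : Fin p, G.Adj u x ∧ G.Adj x y ∧ G.Adj y z ∧
      u ≠ y ∧ u ≠ z ∧ x ≠ z ∧
      n - 4 ≤ ((G.neighborFinset u) \ {x, y, z}).card := by
  obtain ⟨f, hf⟩ := h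
  have h0 : (0 : ℕ) < n := by omega
  let i0 : Fin n := ⟨0, by omega⟩
  let ix : Fin n := ⟨n-3, by omega⟩
  let iy : Fin n := ⟨n-2, by omega⟩
  let iz : Fin n := ⟨n-1, by omega⟩
  have adj1 : (TnStar n).Adj i0 ix := by
    rw [TnStar, fromRel_adj]
    exact ⟨by simp [i0, ix, Fin.ext_iff]; omega, Or.inl (Or.inl ⟨rfl, by simp [ix]; omega⟩)⟩
  have adj2 : (TnStar n).Adj ix iy := by
    rw [TnStar, fromRel_adj]
    exact ⟨by simp [iy, ix, Fin.ext_iff]; omega, Or.inl (Or.inr (Or.inl ⟨rfl, rfl⟩))⟩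
  have adj3 : (TnStar n).Adj iy iz := by
    rw [TnStar, fromRel_adj]
    exact ⟨by simp [iy, iz, Fin.ext_iff]; omega, Or.inl (Or.inr (Or.inr ⟨rfl, rfl⟩))⟩
  refine ⟨f i0, f ix, f iy, f iz, hf _ _ adj1, hf _ _ adj2, hf _ _ adj3,
    fun h => by have := f.injective h; simp [i0, iy, Fin.ext_iff] at this; omega,
    fun h => by have := f.injective h; simp [i0, iz, Fin.ext_iff] at this; omega,
    fun h => by have := f.injective h; simp [ix, iz, Fin.ext_iff] at this; omega, ?_⟩
  classical
  have key : ∀ j : Fin (n-4), f ⟨j.val + 1, by omega⟩ ∈ (G.neighborFinset (f i0)) \ ({f ix, f iy, f iz} : Finset (Fin p)) := by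
    intro j
    rw [Finset.mem_sdiff, mem_neighborFinset]
    constructor
    · apply hf
      rw [TnStar, fromRel_adj]
      exact ⟨by simp [i0, Fin.ext_iff], Or.inl (Or.inl ⟨rfl, by simp; omega⟩)⟩
    · simp only [Finset.mem_insert, Finset.mem_singleton]
      push_neg
      refine ⟨fun h => ?_, fun h => ?_, fun h => ?_⟩ <;>
        { have := f.injective h; simp [ix, iy, iz, Fin.ext_iff] at this; omega }
  calc n - 4 = (Finset.univ : Finset (Fin (n-4))).card := by simp
    _ ≤ _ := by
        apply Finset.card_le_card_of_injOn (fun j => f ⟨j.val + 1, by omega⟩)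
        · intro j _; exact key j
        · intro a _ b _ hab
          have := f.injective hab
          simp only [Fin.mk.injEq] at this
          exact Fin.ext (by omega)

lemma star_elim (hn : 11 ≤ n) (G : SimpleGraph (Fin p)) [DecidableRel G.Adj]
    (h : ContainsCopy G (completeBipartiteGraph (Fin 1) (Fin (n-2)))) :
    ∃ u : Fin p, n - 2 ≤ G.degree u := by
  obtain ⟨f, hf⟩ := h
  refine ⟨f (Sum.inl ⟨0, by omega⟩), ?_⟩
  rw [← card_neighborFinset_eq_degree]
  calc n - 2 = (Finset.univ : Finset (Fin (n-2))).card := by simp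
    _ ≤ _ := by
        apply Finset.card_le_card_of_injOn (fun j => f (Sum.inr j))
        · intro j _
          rw [Finset.mem_coe, mem_neighborFinset]
          apply hf
          simp
        · intro a _ b _ hab
          have := f.injective hab
          simpa using this

lemma star_mk (hn : 11 ≤ n) (G : SimpleGraph (Fin p)) [DecidableRel G.Adj]
    {u : Fin p} (h : n - 2 ≤ G.degree u) :
    ContainsCopy G (completeBipartiteGraph (Fin 1) (Fin (n-2))) := by
  rw [← card_neighborFinset_eq_degree] at h
  obtain ⟨T, hTsub, hTcard⟩ := Finset.exists_subset_card_eq h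
  set e : Fin (n-2) → Fin p := fun i => T.orderEmbOfFin hTcard i with he
  have hadj : ∀ i, G.Adj u (e i) := by
    intro i
    have := hTsub (T.orderEmbOfFin_mem hTcard i)
    rwa [mem_neighborFinset] at this
  have hne : ∀ i, e i ≠ u := fun i hh => G.irrefl (hh ▸ hadj i)
  have einj : Function.Injective e := (T.orderEmbOfFin hTcard).injective
  classical
  let f : Fin 1 ⊕ Fin (n-2) → Fin p := Sum.elim (fun _ => u) e
  have finj : Function.Injective f := by
    intro a b hab
    rcases a with a | a <;> rcases b with b | b
    · exact congrArg Sum.inl (Subsingleton.elim a b)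
    · exact absurd hab.symm (hne b)
    · exact absurd hab (hne a)
    · simpa using einj hab
  refine ⟨⟨f, finj⟩, ?_⟩
  intro a b hab
  simp only [completeBipartiteGraph_adj] at hab
  match a, b with
  | Sum.inl a, Sum.inr b => exact hadj b
  | Sum.inr a, Sum.inl b => exact (hadj a).symm
  | Sum.inl a, Sum.inl b => simp at hab
  | Sum.inr a, Sum.inr b => simp at hab

end CopyLemmas2

section Bound

variable {p n r : ℕ}

set_option maxHeartbeats 2000000 in
lemma boundA (hn : 11 ≤ n) (hr1 : 3 ≤ r) (hr2 : r + 5 ≤ n) (hp : p = n - 1 + r)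
    (G : SimpleGraph (Fin p)) [DecidableRel G.Adj]
    (hfree : ¬ ContainsCopy G (TnStar n))
    (u : Fin p) (hd : n - 2 ≤ G.degree u) :
    2 * G.edgeFinset.card ≤ (n-1)*(n-2) + r*(r-1) := by
  have hpn : n + 2 ≤ p := by omega
  -- no good path
  have hpath : ∀ x y z : Fin p, G.Adj u x → G.Adj x y → G.Adj y z →
      u ≠ y → u ≠ z → x ≠ z → ((G.neighborFinset u) \ {x, y, z}).card < n - 4 := by
    intro x y z h1 h2 h3 h4 h5 h6
    by_contra hcon
    push_neg at hcon
    exact hfree (tnstar_mk hn G h1 h2 h3 h4 h5 h6 hcon)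
  set A : Finset (Fin p) := G.neighborFinset u with hA
  have hAcard : A.card = G.degree u := G.card_neighborFinset_eq_degree u
  have huA : u ∉ A := G.notMem_neighborFinset_self u
  set B : Finset (Fin p) := Finset.univ \ insert u A with hB
  have huB : u ∉ B := by simp [hB]
  have hdisj : Disjoint A B := by
    rw [Finset.disjoint_right]
    intro w hw
    simp only [hB, Finset.mem_sdiff, Finset.mem_insert] at hw
    tauto
  have huniv : (Finset.univ : Finset (Fin p)) = insert u (A ∪ B) := by
    ext w
    simp only [Finset.mem_univ, true_iff, Finset.mem_insert, Finset.mem_union, hB,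
      Finset.mem_sdiff, Finset.mem_univ, true_and]
    by_cases h1 : w = u
    · tauto
    · by_cases h2 : w ∈ A <;> tauto
  have hsplit : ∀ f : Fin p → ℕ, ∑ v, f v = f u + (∑ v ∈ A, f v + ∑ v ∈ B, f v) := by
    intro f
    rw [huniv, Finset.sum_insert (by simp [Finset.mem_union]; tauto), Finset.sum_union hdisj]
  have hBcard : B.card = p - 1 - G.degree u := by
    rw [hB, Finset.card_sdiff_of_subset (Finset.subset_univ _), Finset.card_insert_of_notMem huA,
      hAcard]
    simp; omega
  have hdeg_le : ∀ v : Fin p, ∀ Z : Finset (Fin p), G.neighborFinset v ⊆ Z → G.degree v ≤ Z.card := by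
    intro v Z hZ
    rw [← G.card_neighborFinset_eq_degree v]
    exact Finset.card_le_card hZ
  have handshake := G.sum_degrees_eq_twice_card_edges
  -- case on degree u
  rcases Nat.eq_or_lt_of_le hd with hcase | hcase
  · -- degree u = n - 2
    have hdu : G.degree u = n - 2 := hcase.symm
    have hAc : A.card = n - 2 := by rw [hAcard, hdu]
    have hBc : B.card = r := by rw [hBcard, hdu]; omega
    have hyB : ∀ y ∈ B, ¬ G.Adj u y ∧ y ≠ u := by
      intro y hy
      simp only [hB, Finset.mem_sdiff, Finset.mem_insert, Finset.mem_univ, true_and, hA,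
        mem_neighborFinset] at hy
      push_neg at hy
      exact ⟨hy.2, hy.1⟩
    have hBA : ∀ y : Fin p, ¬ G.Adj u y → y ≠ u → y ∉ A := by
      intro y h1 h2
      simp only [hA, mem_neighborFinset]
      exact h1
    -- spare count when y ∉ N(u)
    have hspare : ∀ x y z : Fin p, y ∉ A → n - 4 ≤ (A \ {x, y, z}).card := by
      intro x y z hy
      have heq : A \ {x, y, z} = A \ {x, z} := by
        ext w
        simp only [Finset.mem_sdiff, Finset.mem_insert, Finset.mem_singleton]
        constructor
        · rintro ⟨hw, h2⟩; exact ⟨hw, by tauto⟩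
        · rintro ⟨hw, h2⟩
          refine ⟨hw, ?_⟩
          push_neg
          refine ⟨by tauto, fun hwy => ?_, by tauto⟩
          rw [hwy] at hw; exact hy hw
      rw [heq]
      calc n - 4 ≤ A.card - ({x, z} : Finset (Fin p)).card := by
            rw [hAc]
            have : ({x, z} : Finset (Fin p)).card ≤ 2 := Finset.card_insert_le _ _ |>.trans (by simp)
            omega
        _ ≤ _ := Finset.le_card_sdiff _ _
    have hspare' : ∀ x y z : Fin p, z ∉ A → n - 4 ≤ (A \ {x, y, z}).card := by
      intro x y z hz
      have heq : A \ {x, y, z} = A \ {x, y} := by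
        ext w
        simp only [Finset.mem_sdiff, Finset.mem_insert, Finset.mem_singleton]
        constructor
        · rintro ⟨hw, h2⟩; exact ⟨hw, by tauto⟩
        · rintro ⟨hw, h2⟩
          refine ⟨hw, ?_⟩
          push_neg
          refine ⟨by tauto, by tauto, fun hwz => ?_⟩
          rw [hwz] at hw; exact hz hw
      rw [heq]
      calc n - 4 ≤ A.card - ({x, y} : Finset (Fin p)).card := by
            rw [hAc]
            have : ({x, y} : Finset (Fin p)).card ≤ 2 := Finset.card_insert_le _ _ |>.trans (by simp)
            omega
        _ ≤ _ := Finset.le_card_sdiff _ _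
    -- F1 : pendant structure of B-vertices attached to A
    have hF1 : ∀ y, y ∉ A → y ≠ u → ∀ x ∈ A, G.Adj x y → ∀ z, G.Adj y z → z = x := by
      intro y hyA hyu x hx hxy z hyz
      by_contra hzx
      have hux : G.Adj u x := by rwa [hA, mem_neighborFinset] at hx
      have huz : u ≠ z := by
        intro h
        rw [← h] at hyz
        exact hyA (by rw [hA, mem_neighborFinset]; exact hyz.symm)
      have := hpath x y z hux hxy hyz (Ne.symm hyu) huz (fun h => hzx h.symm)
      have h2 := hspare x y z hyA
      omega
    -- F2 : A-vertices with an A-neighbour have no B-neighbour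
    have hF2 : ∀ x ∈ A, ∀ x' ∈ A, G.Adj x x' → ∀ y, y ∉ A → y ≠ u → G.Adj x y → False := by
      intro x hx x' hx' hxx' y hyA hyu hxy
      have hux' : G.Adj u x' := by rwa [hA, mem_neighborFinset] at hx'
      have hux : u ≠ x := by intro h; rw [← h] at hx; exact huA hx
      have huy : u ≠ y := Ne.symm hyu
      have hx'y : x' ≠ y := by intro h; rw [h] at hx'; exact hyA hx'
      have := hpath x' x y hux' hxx'.symm hxy hux huy hx'y
      have h2 := hspare' x' x y hyA
      omega
    -- subcase: is there an A-B edge?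
    by_cases hAB : ∃ x ∈ A, ∃ y, y ∉ A ∧ y ≠ u ∧ G.Adj x y
    · -- every A-vertex has degree ≤ n-3, every B-vertex degree ≤ r-1
      obtain ⟨x₀, hx₀A, y₀, hy₀A, hy₀u, hx₀y₀⟩ := hAB
      have hx₀noA : ∀ w ∈ A, ¬ G.Adj x₀ w := by
        intro w hw hadj
        exact hF2 x₀ hx₀A w hw hadj y₀ hy₀A hy₀u hx₀y₀
      have hdegA : ∀ x ∈ A, G.degree x ≤ n - 3 := by
        intro x hx
        by_cases hxA : ∃ x' ∈ A, G.Adj x x'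
        · obtain ⟨x', hx'A, hxx'⟩ := hxA
          have hxx₀ : x ≠ x₀ := by
            intro h
            exact hx₀noA x' hx'A (h ▸ hxx')
          have hsub : G.neighborFinset x ⊆ insert u ((A.erase x).erase x₀) := by
            intro w hw
            rw [mem_neighborFinset] at hw
            simp only [Finset.mem_insert, Finset.mem_erase]
            by_cases hwu : w = u
            · tauto
            · have hwA : w ∈ A := by
                by_contra hwB
                exact hF2 x hx x' hx'A hxx' w hwB hwu hw
              have hwx₀ : w ≠ x₀ := by
                intro h
                exact hx₀noA x hx (h ▸ hw).symm
              exact Or.inr ⟨hwx₀, G.ne_of_adj hw.symm, hwA⟩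
          have := hdeg_le x _ hsub
          have hcards : (insert u ((A.erase x).erase x₀)).card ≤ n - 3 := by
            have h1 : ((A.erase x).erase x₀).card = n - 4 := by
              rw [Finset.card_erase_of_mem, Finset.card_erase_of_mem hx, hAc]
              · omega
              · exact Finset.mem_erase.mpr ⟨Ne.symm hxx₀, hx₀A⟩
            calc (insert u ((A.erase x).erase x₀)).card ≤ _ + 1 := Finset.card_insert_le _ _
              _ ≤ n - 3 := by rw [h1]; omega
          omega
        · push_neg at hxA
          have hsub : G.neighborFinset x ⊆ insert u B := by
            intro w hw
            rw [mem_neighborFinset] at hw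
            simp only [Finset.mem_insert]
            by_cases hwu : w = u
            · tauto
            · right
              simp only [hB, Finset.mem_sdiff, Finset.mem_univ, true_and, Finset.mem_insert]
              push_neg
              refine ⟨hwu, fun hwA => hxA w hwA hw⟩
          have := hdeg_le x _ hsub
          have : (insert u B).card ≤ r + 1 := by
            calc (insert u B).card ≤ B.card + 1 := Finset.card_insert_le _ _
              _ = r + 1 := by rw [hBc]
          omega
      have hdegB : ∀ y ∈ B, G.degree y ≤ r - 1 := by
        intro y hy
        obtain ⟨h1, h2⟩ := hyB y hy
        have hyA : y ∉ A := hBA y h1 h2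
        by_cases hyAB : ∃ x ∈ A, G.Adj x y
        · obtain ⟨x, hxA, hxy⟩ := hyAB
          have hsub : G.neighborFinset y ⊆ {x} := by
            intro w hw
            rw [mem_neighborFinset] at hw
            simp only [Finset.mem_singleton]
            exact hF1 y hyA h2 x hxA hxy w hw
          have := hdeg_le y _ hsub
          simp at this
          omega
        · push_neg at hyAB
          have hsub : G.neighborFinset y ⊆ B.erase y := by
            intro w hw
            rw [mem_neighborFinset] at hw
            simp only [Finset.mem_erase]
            refine ⟨fun h => G.irrefl (h ▸ hw), ?_⟩
            simp only [hB, Finset.mem_sdiff, Finset.mem_univ, true_and, Finset.mem_insert]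
            push_neg
            constructor
            · intro h; rw [h] at hw; exact h1 hw.symm
            · intro hwA; exact hyAB w hwA hw.symm
          have := hdeg_le y _ hsub
          have : (B.erase y).card = r - 1 := by rw [Finset.card_erase_of_mem hy, hBc]
          omega
      -- sum up
      have hsum : ∑ v, G.degree v ≤ (n-2) + ((n-2)*(n-3) + r*(r-1)) := by
        rw [hsplit]
        have h1 : ∑ v ∈ A, G.degree v ≤ (n-2) * (n-3) := by
          calc ∑ v ∈ A, G.degree v ≤ A.card • (n-3) := Finset.sum_le_card_nsmul _ _ _ hdegA
            _ = (n-2)*(n-3) := by rw [hAc]; simp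
        have h2 : ∑ v ∈ B, G.degree v ≤ r * (r-1) := by
          calc ∑ v ∈ B, G.degree v ≤ B.card • (r-1) := Finset.sum_le_card_nsmul _ _ _ hdegB
            _ = r*(r-1) := by rw [hBc]; simp
        omega
      rw [← handshake]
      calc ∑ v, G.degree v ≤ (n-2) + ((n-2)*(n-3) + r*(r-1)) := hsum
        _ ≤ (n-1)*(n-2) + r*(r-1) := by
            obtain ⟨a, ha⟩ : ∃ a, n = r + 5 + a := ⟨n - r - 5, by omega⟩
            subst ha
            have e1 : r + 5 + a - 1 = r + 4 + a := by omega
            have e2 : r + 5 + a - 2 = r + 3 + a := by omega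
            have e3 : r + 5 + a - 3 = r + 2 + a := by omega
            rw [e1, e2, e3]
            nlinarith
    · -- no A-B edge
      push_neg at hAB
      have hdegA : ∀ x ∈ A, G.degree x ≤ n - 2 := by
        intro x hx
        have hsub : G.neighborFinset x ⊆ insert u (A.erase x) := by
          intro w hw
          rw [mem_neighborFinset] at hw
          simp only [Finset.mem_insert, Finset.mem_erase]
          by_cases hwu : w = u
          · tauto
          · right
            refine ⟨G.ne_of_adj hw.symm, ?_⟩
            by_contra hwA
            exact hAB x hx w hwA hwu hw
        have := hdeg_le x _ hsub
        have : (insert u (A.erase x)).card ≤ n - 2 := by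
          calc (insert u (A.erase x)).card ≤ (A.erase x).card + 1 := Finset.card_insert_le _ _
            _ ≤ n - 2 := by rw [Finset.card_erase_of_mem hx, hAc]; omega
        omega
      have hdegB : ∀ y ∈ B, G.degree y ≤ r - 1 := by
        intro y hy
        obtain ⟨h1, h2⟩ := hyB y hy
        have hyA : y ∉ A := hBA y h1 h2
        have hsub : G.neighborFinset y ⊆ B.erase y := by
          intro w hw
          rw [mem_neighborFinset] at hw
          simp only [Finset.mem_erase]
          refine ⟨fun h => G.irrefl (h ▸ hw), ?_⟩
          simp only [hB, Finset.mem_sdiff, Finset.mem_univ, true_and, Finset.mem_insert]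
          push_neg
          constructor
          · intro h; rw [h] at hw; exact h1 hw.symm
          · intro hwA; exact hAB w hwA y hyA h2 hw.symm
        have := hdeg_le y _ hsub
        have : (B.erase y).card = r - 1 := by rw [Finset.card_erase_of_mem hy, hBc]
        omega
      have hsum : ∑ v, G.degree v ≤ (n-2) + ((n-2)*(n-2) + r*(r-1)) := by
        rw [hsplit]
        have h1 : ∑ v ∈ A, G.degree v ≤ (n-2) * (n-2) := by
          calc ∑ v ∈ A, G.degree v ≤ A.card • (n-2) := Finset.sum_le_card_nsmul _ _ _ hdegA
            _ = (n-2)*(n-2) := by rw [hAc]; simp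
        have h2 : ∑ v ∈ B, G.degree v ≤ r * (r-1) := by
          calc ∑ v ∈ B, G.degree v ≤ B.card • (r-1) := Finset.sum_le_card_nsmul _ _ _ hdegB
            _ = r*(r-1) := by rw [hBc]; simp
        omega
      rw [← handshake]
      calc ∑ v, G.degree v ≤ (n-2) + ((n-2)*(n-2) + r*(r-1)) := hsum
        _ ≤ (n-1)*(n-2) + r*(r-1) := by
            obtain ⟨a, ha⟩ : ∃ a, n = r + 5 + a := ⟨n - r - 5, by omega⟩
            subst ha
            have e1 : r + 5 + a - 1 = r + 4 + a := by omega
            have e2 : r + 5 + a - 2 = r + 3 + a := by omega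
            rw [e1, e2]
            nlinarith
  · -- degree u ≥ n - 1
    have hd1 : n - 1 ≤ G.degree u := by omega
    -- every vertex ≠ u has degree ≤ r
    have hdeg : ∀ y : Fin p, y ≠ u → G.degree y ≤ r := by
      intro y hyu
      by_cases hyA2 : ∃ x ∈ A, G.Adj x y
      · obtain ⟨x, hxA, hxy⟩ := hyA2
        have hux : G.Adj u x := by rwa [hA, mem_neighborFinset] at hxA
        have hNy : G.neighborFinset y ⊆ {u, x} := by
          intro z hz
          rw [mem_neighborFinset] at hz
          simp only [Finset.mem_insert, Finset.mem_singleton]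
          by_contra hcon
          push_neg at hcon
          have huz : u ≠ z := fun h => hcon.1 h.symm
          have hxz : x ≠ z := fun h => hcon.2 h.symm
          have := hpath x y z hux hxy hz (Ne.symm hyu) huz hxz
          have hge : n - 4 ≤ (A \ {x, y, z}).card := by
            calc n - 4 ≤ A.card - ({x,y,z} : Finset (Fin p)).card := by
                  have hc3 : ({x,y,z} : Finset (Fin p)).card ≤ 3 := by
                    apply le_trans (Finset.card_insert_le _ _)
                    have h4 : ({y,z} : Finset (Fin p)).card ≤ 2 :=
                      le_trans (Finset.card_insert_le _ _) (by simp)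
                    omega
                  have hc4 : n - 1 ≤ A.card := by rw [hAcard]; omega
                  omega
              _ ≤ _ := Finset.le_card_sdiff _ _
          omega
        have := hdeg_le y _ hNy
        have : ({u, x} : Finset (Fin p)).card ≤ 2 := Finset.card_insert_le _ _ |>.trans (by simp)
        omega
      · push_neg at hyA2
        have hNy : G.neighborFinset y ⊆ insert u B := by
          intro w hw
          rw [mem_neighborFinset] at hw
          simp only [Finset.mem_insert]
          by_cases hwu : w = u
          · tauto
          · right
            simp only [hB, Finset.mem_sdiff, Finset.mem_univ, true_and, Finset.mem_insert]
            push_neg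
            refine ⟨hwu, fun hwA => hyA2 w hwA hw.symm⟩
        have := hdeg_le y _ hNy
        have hup : G.degree u ≤ p - 1 := by
          rw [← G.card_neighborFinset_eq_degree u, ← hA]
          have hsubu : A ⊆ Finset.univ.erase u := by
            intro w hw
            simp only [Finset.mem_erase, Finset.mem_univ, and_true]
            intro hwu; rw [hwu] at hw; exact huA hw
          calc A.card ≤ (Finset.univ.erase u).card := Finset.card_le_card hsubu
            _ = p - 1 := by
                rw [Finset.card_erase_of_mem (Finset.mem_univ u), Finset.card_univ,
                  Fintype.card_fin]
        have hc : (insert u B).card ≤ B.card + 1 := Finset.card_insert_le _ _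
        rw [hBcard] at hc
        omega
    have hsum : ∑ v, G.degree v ≤ (p-1) + (p-1) * r := by
      have : ∑ v, G.degree v = G.degree u + ∑ v ∈ Finset.univ.erase u, G.degree v := by
        rw [← Finset.sum_erase_add _ _ (Finset.mem_univ u)]; ring
      rw [this]
      have h1 : G.degree u ≤ p - 1 := by
        rw [← G.card_neighborFinset_eq_degree u, ← hA]
        have hsubu : A ⊆ Finset.univ.erase u := by
          intro w hw
          simp only [Finset.mem_erase, Finset.mem_univ, and_true]
          intro hwu; rw [hwu] at hw; exact huA hw
        calc A.card ≤ (Finset.univ.erase u).card := Finset.card_le_card hsubu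
          _ = p - 1 := by
              rw [Finset.card_erase_of_mem (Finset.mem_univ u), Finset.card_univ,
                Fintype.card_fin]
      have h2 : ∑ v ∈ Finset.univ.erase u, G.degree v ≤ (p-1) * r := by
        have hcerase : (Finset.univ.erase u).card = p - 1 := by
          rw [Finset.card_erase_of_mem (Finset.mem_univ u), Finset.card_univ, Fintype.card_fin]
        calc ∑ v ∈ Finset.univ.erase u, G.degree v ≤ (Finset.univ.erase u).card • r := by
              apply Finset.sum_le_card_nsmul
              intro x hx
              exact hdeg x (Finset.mem_erase.mp hx).1
          _ = (p-1) * r := by rw [hcerase]; simp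
      omega
    rw [← handshake]
    calc ∑ v, G.degree v ≤ (p-1) + (p-1)*r := hsum
      _ ≤ (n-1)*(n-2) + r*(r-1) := by
          obtain ⟨a, ha⟩ : ∃ a, n = r + 5 + a := ⟨n - r - 5, by omega⟩
          subst ha
          obtain ⟨b, hb⟩ : ∃ b, r = 3 + b := ⟨r - 3, by omega⟩
          subst hb
          have e0 : p - 1 = (3+b) + 5 + a - 2 + (3+b) := by omega
          have e1 : (3+b) + 5 + a - 1 = (3+b) + 4 + a := by omega
          have e2 : (3+b) + 5 + a - 2 = (3+b) + 3 + a := by omega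
          have e3 : (3+b) - 1 = 2 + b := by omega
          rw [e0, e1, e2, e3]
          nlinarith
end Bound

section ModHelpers

lemma diff_eval {q a b : ℕ} (hq : 0 < q) (ha : a < q) (hb : b < q) :
    (b + (q - a)) % q = if a ≤ b then b - a else b + q - a := by
  split_ifs with h
  · have e : b + (q - a) = (b - a) + q := by omega
    rw [e, Nat.add_mod_right, Nat.mod_eq_of_lt (by omega)]
  · have e : b + (q - a) = b + q - a := by omega
    rw [e, Nat.mod_eq_of_lt (by omega)]

lemma mod_add_sub {q a j : ℕ} (hq : 0 < q) (ha : a < q) (hj : j ≤ q) :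
    ((a + j) % q + (q - j)) % q = a := by
  rw [Nat.mod_add_mod]
  have e : a + j + (q - j) = a + q := by omega
  rw [e, Nat.add_mod_right, Nat.mod_eq_of_lt ha]

lemma mod_diff_recover {q a b j : ℕ} (hq : 0 < q) (ha : a < q) (hj : j < q)
    (h : b = (a + j) % q) : (b + (q - a)) % q = j := by
  subst h
  rw [Nat.mod_add_mod]
  have e : a + j + (q - a) = j + q := by omega
  rw [e, Nat.add_mod_right, Nat.mod_eq_of_lt hj]

lemma mod_diff_build {q a b : ℕ} (hq : 0 < q) (ha : a < q) (hb : b < q) :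
    (a + (b + (q - a)) % q) % q = b := by
  rw [Nat.add_mod_mod]
  have e : a + (b + (q - a)) = b + q := by omega
  rw [e, Nat.add_mod_right, Nat.mod_eq_of_lt hb]

end ModHelpers

section Circulant

/-- distance set of the circulant -/
def Jset (q k : ℕ) : Finset ℕ := Finset.Ico 1 (k+1) ∪ Finset.Ico (q-k) q

/-- circulant neighbours of `a` in `ZMod q` (as naturals `< q`) -/
def circN (q k a : ℕ) : Finset ℕ := (Jset q k).image (fun j => (a + j) % q)

lemma Jset_mem {q k j : ℕ} : j ∈ Jset q k ↔ (1 ≤ j ∧ j ≤ k) ∨ (q - k ≤ j ∧ j < q) := by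
  simp only [Jset, Finset.mem_union, Finset.mem_Ico]
  omega

lemma Jset_card {q k : ℕ} (hkq : 2*k + 1 ≤ q) : (Jset q k).card = 2 * k := by
  rw [Jset, Finset.card_union_of_disjoint, Nat.card_Ico, Nat.card_Ico]
  · omega
  · rw [Finset.disjoint_left]
    intro j hj hj'
    rw [Finset.mem_Ico] at hj hj'
    omega

lemma circN_mem_iff {q k a : ℕ} (hq : 0 < q) (hkq : 2*k+1 ≤ q) (ha : a < q) (b : ℕ) :
    b ∈ circN q k a ↔ b < q ∧ b ≠ a ∧
      (((max a b - min a b) ≤ k ∧ 1 ≤ max a b - min a b) ∨ q - k ≤ max a b - min a b) := by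
  constructor
  · intro hb
    rw [circN, Finset.mem_image] at hb
    obtain ⟨j, hj, hjb⟩ := hb
    have hjq : 1 ≤ j ∧ j < q := by
      rw [Jset_mem] at hj; omega
    have hblt : b < q := hjb ▸ Nat.mod_lt _ hq
    have hdiff : (b + (q - a)) % q = j := mod_diff_recover hq ha hjq.2 hjb.symm
    rw [diff_eval hq ha hblt] at hdiff
    rw [Jset_mem] at hj
    split_ifs at hdiff <;> omega
  · rintro ⟨hblt, hne, hcond⟩
    rw [circN, Finset.mem_image]
    refine ⟨(b + (q - a)) % q, ?_, mod_diff_build hq ha hblt⟩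
    rw [Jset_mem, diff_eval hq ha hblt]
    split_ifs <;> omega

lemma circN_card {q k a : ℕ} (hq : 0 < q) (hkq : 2*k+1 ≤ q) (ha : a < q) :
    (circN q k a).card = 2 * k := by
  rw [circN, Finset.card_image_of_injOn, Jset_card hkq]
  intro j1 hj1 j2 hj2 he
  have h1 : j1 < q := by rw [Finset.mem_coe, Jset_mem] at hj1; omega
  have h2 : j2 < q := by rw [Finset.mem_coe, Jset_mem] at hj2; omega
  dsimp only at he
  have e1 := mod_diff_recover hq ha h1 (rfl : (a + j1) % q = (a + j1) % q)
  have e2 := mod_diff_recover hq ha h2 (rfl : (a + j2) % q = (a + j2) % q)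
  rw [he] at e1
  omega

end Circulant

section Matching

/-- partner in the near-perfect matching -/
def prt (q m a : ℕ) : ℕ :=
  if q = 2*m then (if a < m then a + m else a - m)
  else (if a = 0 then m else if a < m then a + m + 1 else if a = m then 0 else a - (m+1))

/-- the matching edge at `a` (empty if `dd` is even or `a` unmatched) -/
def msetF (q m dd a : ℕ) : Finset ℕ :=
  if dd % 2 = 1 ∧ (q = 2*m ∨ a ≠ m + 1) then {prt q m a} else ∅

lemma msetF_mem {q m dd a b : ℕ} :
    b ∈ msetF q m dd a ↔ dd % 2 = 1 ∧ (q = 2*m ∨ a ≠ m + 1) ∧ b = prt q m a := by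
  rw [msetF]
  split_ifs with h
  · simp only [Finset.mem_singleton]; tauto
  · simp only [Finset.notMem_empty]; tauto

variable {q m k dd : ℕ}

lemma prt_spec (hm : q = 2*m ∨ q = 2*m+1) (hm1 : 1 ≤ m) {a : ℕ} (ha : a < q)
    (hmat : q = 2*m ∨ a ≠ m + 1) :
    prt q m a < q ∧ prt q m a ≠ a ∧
      (max a (prt q m a) - min a (prt q m a) = m ∨
        (q = 2*m+1 ∧ max a (prt q m a) - min a (prt q m a) = m+1)) ∧
      prt q m (prt q m a) = a ∧ (q = 2*m ∨ prt q m a ≠ m + 1) := by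
  rcases hm with h | h
  · rw [prt, if_pos h]
    by_cases hc : a < m
    · rw [if_pos hc, prt, if_pos h, if_neg (by omega)]
      omega
    · rw [if_neg hc, prt, if_pos h, if_pos (by omega)]
      omega
  · have hq2 : ¬ (q = 2*m) := by omega
    rw [prt, if_neg hq2]
    rcases Nat.lt_or_ge a m with hc | hc
    · rcases Nat.eq_or_lt_of_le (Nat.zero_le a) with h0 | h0
      · rw [if_pos h0.symm, prt, if_neg hq2, if_neg (by omega), if_neg (by omega), if_pos rfl]
        omega
      · rw [if_neg (by omega), if_pos hc, prt, if_neg hq2, if_neg (by omega), if_neg (by omega),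
          if_neg (by omega)]
        omega
    · rcases Nat.eq_or_lt_of_le hc with hc2 | hc2
      · rw [if_neg (by omega), if_neg (by omega), if_pos hc2.symm, prt, if_neg hq2, if_pos rfl]
        omega
      · have ha2 : m + 2 ≤ a := by omega
        rw [if_neg (by omega), if_neg (by omega), if_neg (by omega), prt, if_neg hq2,
          if_neg (by omega), if_pos (by omega)]
        omega

end Matching

section HN

/-- all H-neighbours -/
def hnbrs (q k m dd a : ℕ) : Finset ℕ := circN q k a ∪ msetF q m dd a

variable {q k m dd : ℕ}

lemma hnbrs_lt (hq : 0 < q) (hkq : 2*k+1 ≤ q) (hm : q = 2*m ∨ q = 2*m+1) (hm1 : 1 ≤ m)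
    {a b : ℕ} (ha : a < q) (hb : b ∈ hnbrs q k m dd a) : b < q := by
  rw [hnbrs, Finset.mem_union] at hb
  rcases hb with hb | hb
  · exact ((circN_mem_iff hq hkq ha b).mp hb).1
  · rw [msetF_mem] at hb
    obtain ⟨-, hmat, hbp⟩ := hb
    exact hbp ▸ (prt_spec hm hm1 ha hmat).1

lemma hnbrs_ne (hq : 0 < q) (hkq : 2*k+1 ≤ q) (hm : q = 2*m ∨ q = 2*m+1) (hm1 : 1 ≤ m)
    {a b : ℕ} (ha : a < q) (hb : b ∈ hnbrs q k m dd a) : b ≠ a := by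
  rw [hnbrs, Finset.mem_union] at hb
  rcases hb with hb | hb
  · exact ((circN_mem_iff hq hkq ha b).mp hb).2.1
  · rw [msetF_mem] at hb
    obtain ⟨-, hmat, hbp⟩ := hb
    exact hbp ▸ (prt_spec hm hm1 ha hmat).2.1

lemma hnbrs_symm (hq : 0 < q) (hkq : 2*k+1 ≤ q) (hm : q = 2*m ∨ q = 2*m+1) (hm1 : 1 ≤ m)
    {a b : ℕ} (ha : a < q) (hb : b < q) (h : b ∈ hnbrs q k m dd a) : a ∈ hnbrs q k m dd b := by
  rw [hnbrs, Finset.mem_union] at h ⊢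
  rcases h with h | h
  · left
    rw [circN_mem_iff hq hkq ha] at h
    rw [circN_mem_iff hq hkq hb]
    refine ⟨ha, fun hab => h.2.1 hab.symm, ?_⟩
    have : max a b = max b a ∧ min a b = min b a := ⟨Nat.max_comm a b, Nat.min_comm a b⟩
    omega
  · right
    rw [msetF_mem] at h ⊢
    obtain ⟨hdd, hmat, hbp⟩ := h
    obtain ⟨h1, h2, h3, h4, h5⟩ := prt_spec hm hm1 ha hmat
    subst hbp
    exact ⟨hdd, h5, h4.symm⟩

lemma hnbrs_disj (hq : 0 < q) (hkq : 2*k+1 ≤ q) (hm : q = 2*m ∨ q = 2*m+1)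
    (hkm : k + 1 ≤ m) (hm1 : 1 ≤ m)
    {a : ℕ} (ha : a < q) : Disjoint (circN q k a) (msetF q m dd a) := by
  rw [Finset.disjoint_right]
  intro b hb hbc
  rw [msetF_mem] at hb
  obtain ⟨-, hmat, hbp⟩ := hb
  obtain ⟨h1, h2, h3, h4, h5⟩ := prt_spec hm hm1 ha hmat
  rw [circN_mem_iff hq hkq ha] at hbc
  subst hbp
  omega

lemma hnbrs_card_ge (hq : 0 < q) (hkq : 2*k+1 ≤ q) (ha : a < q) :
    2 * k ≤ (hnbrs q k m dd a).card := by
  calc 2*k = (circN q k a).card := (circN_card hq hkq ha).symm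
    _ ≤ _ := Finset.card_le_card (Finset.subset_union_left)

lemma hnbrs_card_matched (hq : 0 < q) (hkq : 2*k+1 ≤ q) (hm : q = 2*m ∨ q = 2*m+1)
    (hkm : k + 1 ≤ m) (hm1 : 1 ≤ m) {a : ℕ} (ha : a < q)
    (hdd : dd % 2 = 1) (hmat : q = 2*m ∨ a ≠ m + 1) :
    (hnbrs q k m dd a).card = 2 * k + 1 := by
  rw [hnbrs, Finset.card_union_of_disjoint (hnbrs_disj hq hkq hm hkm hm1 ha),
    circN_card hq hkq ha, msetF, if_pos ⟨hdd, hmat⟩, Finset.card_singleton]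

lemma hnbrs_card_le (hq : 0 < q) (hkq : 2*k+1 ≤ q) {a : ℕ} (ha : a < q) :
    (hnbrs q k m dd a).card ≤ 2 * k + dd % 2 := by
  calc (hnbrs q k m dd a).card ≤ (circN q k a).card + (msetF q m dd a).card :=
        Finset.card_union_le _ _
    _ ≤ 2*k + dd % 2 := by
        rw [circN_card hq hkq ha]
        have : (msetF q m dd a).card ≤ dd % 2 := by
          rw [msetF]
          split_ifs with h
          · rw [Finset.card_singleton]; omega
          · simp
        omega

end HN

section WGraph

variable {p q c k m dd : ℕ}

/-- the witness graph: independent block of size `c` joined to an `H`-block of size `q` -/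
def WAdj (q k m dd : ℕ) (p : ℕ) (v w : Fin p) : Prop :=
  v ≠ w ∧ ((q ≤ v.val ∧ w.val < q) ∨ (q ≤ w.val ∧ v.val < q) ∨
    (v.val < q ∧ w.val < q ∧
      (w.val ∈ hnbrs q k m dd v.val ∨ v.val ∈ hnbrs q k m dd w.val)))

instance WAdj.decidable (q k m dd p : ℕ) : DecidableRel (WAdj q k m dd p) := by
  intro v w
  unfold WAdj
  infer_instance

def WG (q k m dd p : ℕ) : SimpleGraph (Fin p) where
  Adj := WAdj q k m dd p
  symm := by
    constructor
    intro v w h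
    obtain ⟨h1, h2⟩ := h
    exact ⟨h1.symm, by tauto⟩
  loopless := ⟨fun v h => h.1 rfl⟩

instance WG.decidableAdj (q k m dd p : ℕ) : DecidableRel (WG q k m dd p).Adj :=
  WAdj.decidable q k m dd p

/-- counting vertices of `Fin p` with value in a finset -/
lemma card_filter_val (p : ℕ) (s : Finset ℕ) (hs : ∀ b ∈ s, b < p) :
    (Finset.univ.filter (fun w : Fin p => w.val ∈ s)).card = s.card := by
  apply Finset.card_bij (fun w _ => w.val)
  · intro w hw
    exact (Finset.mem_filter.mp hw).2
  · intro w1 hw1 w2 hw2 h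
    exact Fin.ext h
  · intro b hb
    exact ⟨⟨b, hs b hb⟩, Finset.mem_filter.mpr ⟨Finset.mem_univ _, hb⟩, rfl⟩

lemma card_filter_lt (p q : ℕ) (hqp : q ≤ p) :
    (Finset.univ.filter (fun w : Fin p => w.val < q)).card = q := by
  have : (Finset.univ.filter (fun w : Fin p => w.val < q))
      = (Finset.univ.filter (fun w : Fin p => w.val ∈ Finset.range q)) := by
    apply Finset.filter_congr
    intro w _
    simp [Finset.mem_range]
  rw [this, card_filter_val p _ (fun b hb => lt_of_lt_of_le (Finset.mem_range.mp hb) hqp),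
    Finset.card_range]

lemma card_filter_ge (p q : ℕ) (hqp : q ≤ p) :
    (Finset.univ.filter (fun w : Fin p => q ≤ w.val)).card = p - q := by
  have h1 : (Finset.univ.filter (fun w : Fin p => q ≤ w.val))
      = Finset.univ \ (Finset.univ.filter (fun w : Fin p => w.val < q)) := by
    ext w
    simp only [Finset.mem_filter, Finset.mem_univ, true_and, Finset.mem_sdiff]
    omega
  rw [h1, Finset.card_sdiff_of_subset (Finset.filter_subset _ _), card_filter_lt p q hqp,
    Finset.card_univ, Fintype.card_fin]

variable (hq : 0 < q) (hkq : 2*k+1 ≤ q) (hm : q = 2*m ∨ q = 2*m+1) (hkm : k + 1 ≤ m)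
  (hm1 : 1 ≤ m) (hpq : q + c = p)

include hq hkq hm hm1 hpq in
lemma WG_nbhd_C {v : Fin p} (hv : q ≤ v.val) :
    (WG q k m dd p).neighborFinset v = Finset.univ.filter (fun w : Fin p => w.val < q) := by
  ext w
  rw [mem_neighborFinset, Finset.mem_filter]
  constructor
  · rintro ⟨hne, hcase⟩
    refine ⟨Finset.mem_univ _, ?_⟩
    rcases hcase with h | h | h
    · exact h.2
    · omega
    · omega
  · rintro ⟨-, hw⟩
    exact ⟨by intro h; rw [h] at hv; omega, Or.inl ⟨hv, hw⟩⟩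

include hq hkq hm hm1 hpq in
lemma WG_deg_C {v : Fin p} (hv : q ≤ v.val) : (WG q k m dd p).degree v = q := by
  rw [← card_neighborFinset_eq_degree, WG_nbhd_C hq hkq hm hm1 hpq hv,
    card_filter_lt p q (by omega)]

include hq hkq hm hm1 hpq in
lemma WG_nbhd_D {v : Fin p} (hv : v.val < q) :
    (WG q k m dd p).neighborFinset v =
      (Finset.univ.filter (fun w : Fin p => q ≤ w.val)) ∪
      (Finset.univ.filter (fun w : Fin p => w.val ∈ hnbrs q k m dd v.val)) := by
  ext w
  rw [mem_neighborFinset, Finset.mem_union, Finset.mem_filter, Finset.mem_filter]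
  constructor
  · rintro ⟨hne, hcase⟩
    rcases hcase with h | h | h
    · omega
    · exact Or.inl ⟨Finset.mem_univ _, h.1⟩
    · refine Or.inr ⟨Finset.mem_univ _, ?_⟩
      rcases h.2.2 with h2 | h2
      · exact h2
      · exact hnbrs_symm hq hkq hm hm1 h.2.1 h.1 h2
  · rintro (⟨-, hw⟩ | ⟨-, hw⟩)
    · exact ⟨by intro h; rw [h] at hv; omega, Or.inr (Or.inl ⟨hw, hv⟩)⟩
    · have hwlt : w.val < q := hnbrs_lt hq hkq hm hm1 hv hw
      refine ⟨?_, Or.inr (Or.inr ⟨hv, hwlt, Or.inl hw⟩)⟩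
      intro h
      subst h
      exact (hnbrs_ne hq hkq hm hm1 hv hw) rfl

include hq hkq hm hm1 hpq in
lemma WG_deg_D {v : Fin p} (hv : v.val < q) :
    (WG q k m dd p).degree v = c + (hnbrs q k m dd v.val).card := by
  rw [← card_neighborFinset_eq_degree, WG_nbhd_D hq hkq hm hm1 hpq hv,
    Finset.card_union_of_disjoint, card_filter_ge p q (by omega),
    card_filter_val p _ (fun b hb => by
      have := hnbrs_lt hq hkq hm hm1 hv hb; omega)]
  · omega
  · rw [Finset.disjoint_left]
    intro w hw1 hw2
    rw [Finset.mem_filter] at hw1 hw2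
    have := hnbrs_lt hq hkq hm hm1 hv hw2.2
    omega

end WGraph

section Arith

lemma arithAB (n r : ℕ) (hn : 11 ≤ n) (hr1 : 3 ≤ r) (hr2 : r + 5 ≤ n) :
    (n-1)*(n-2) + r*(r-1) ≤ 2*((n-3)*(r+2)) + (n-3)*(n-r-6) := by
  obtain ⟨b, rfl⟩ : ∃ b, r = 3 + b := ⟨r-3, by omega⟩
  obtain ⟨a, rfl⟩ : ∃ a, n = 8 + b + a := ⟨n - (8+b), by omega⟩
  have hab : 3 ≤ b + a := by omega
  have e1 : 8 + b + a - 1 = 7 + b + a := by omega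
  have e2 : 8 + b + a - 2 = 6 + b + a := by omega
  have e3 : 8 + b + a - 3 = 5 + b + a := by omega
  have e4 : 3 + b - 1 = 2 + b := by omega
  rw [e1, e2, e3, e4]
  rcases Nat.eq_zero_or_pos a with ha | ha
  · subst ha
    have e5 : 8 + b + 0 - (3+b) - 6 = 0 := by omega
    rw [e5]
    nlinarith
  · obtain ⟨a', rfl⟩ : ∃ a', a = a' + 1 := ⟨a - 1, by omega⟩
    have e5 : 8 + b + (a'+1) - (3+b) - 6 = a' := by omega
    rw [e5]
    nlinarith

lemma arithC (n r : ℕ) (hn : 12 ≤ n) (hr1 : 3 ≤ r) (hr2 : r + 5 ≤ n) :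
    (n-1)*(n-2) + r*(r-1) ≤
      2*((n-3)*(r+2)) + ((n-3)-1)*(n-r-6) + ((n-r-6)-1) := by
  obtain ⟨b, rfl⟩ : ∃ b, r = 3 + b := ⟨r-3, by omega⟩
  obtain ⟨a, rfl⟩ : ∃ a, n = 8 + b + a := ⟨n - (8+b), by omega⟩
  have hab : 4 ≤ b + a := by omega
  have e1 : 8 + b + a - 1 = 7 + b + a := by omega
  have e2 : 8 + b + a - 2 = 6 + b + a := by omega
  have e3 : 8 + b + a - 3 = 5 + b + a := by omega
  have e4 : 3 + b - 1 = 2 + b := by omega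
  rw [e1, e2, e3, e4]
  have e6 : 5 + b + a - 1 = 4 + b + a := by omega
  rw [e6]
  rcases Nat.eq_zero_or_pos a with ha | ha
  · subst ha
    have e5 : 8 + b + 0 - (3+b) - 6 = 0 := by omega
    rw [e5]
    nlinarith
  · obtain ⟨a', rfl⟩ : ∃ a', a = a' + 1 := ⟨a - 1, by omega⟩
    have e5 : 8 + b + (a'+1) - (3+b) - 6 = a' := by omega
    rw [e5]
    rcases Nat.eq_zero_or_pos a' with ha' | ha'
    · subst ha'
      simp only [Nat.zero_sub]
      nlinarith
    · obtain ⟨a'', rfl⟩ : ∃ a'', a' = a'' + 1 := ⟨a' - 1, by omega⟩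
      have e7 : a'' + 1 - 1 = a'' := by omega
      rw [e7]
      nlinarith

end Arith

section WitnessSum

lemma hnbrs_zero (q m a : ℕ) : hnbrs q 0 m 0 a = ∅ := by
  simp [hnbrs, circN, Jset, msetF]

/-- degree sum lower bound for the witness graph -/
lemma wit_degsum (n r : ℕ) (hn : 11 ≤ n) (hr1 : 3 ≤ r) (hr2 : r + 5 ≤ n) :
    (n-1)*(n-2) + r*(r-1) ≤
      ∑ v, (WG (n-3) ((n-r-6)/2) ((n-3)/2) (n-r-6) (n-1+r)).degree v := by
  have hq : 0 < n-3 := by omega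
  have hkq : 2*((n-r-6)/2)+1 ≤ n-3 := by omega
  have hm : n-3 = 2*((n-3)/2) ∨ n-3 = 2*((n-3)/2)+1 := by omega
  have hkm : (n-r-6)/2 + 1 ≤ (n-3)/2 := by omega
  have hm1 : 1 ≤ (n-3)/2 := by omega
  have hpq : (n-3) + (r+2) = n-1+r := by omega
  set G := WG (n-3) ((n-r-6)/2) ((n-3)/2) (n-r-6) (n-1+r) with hG
  rw [← Finset.sum_filter_add_sum_filter_not Finset.univ (fun v : Fin (n-1+r) => v.val < n-3)]
  -- the C-side sum
  have hCsum : ∑ v ∈ Finset.univ.filter (fun v : Fin (n-1+r) => ¬ v.val < n-3), G.degree v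
      = (r+2) * (n-3) := by
    rw [Finset.sum_congr rfl (fun v hv => ?_), Finset.sum_const, smul_eq_mul]
    · congr 1
      have : (Finset.univ.filter (fun v : Fin (n-1+r) => ¬ v.val < n-3))
          = (Finset.univ.filter (fun v : Fin (n-1+r) => n-3 ≤ v.val)) := by
        apply Finset.filter_congr; intro w _; simp [not_lt]
      rw [this, card_filter_ge _ _ (by omega)]
      omega
    · rw [Finset.mem_filter] at hv
      exact WG_deg_C hq hkq hm hm1 hpq (by omega)
  rw [hCsum]
  -- the D-side sum
  have hDsum : ∑ v ∈ Finset.univ.filter (fun v : Fin (n-1+r) => v.val < n-3), G.degree v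
      = (n-3) * (r+2) +
        ∑ v ∈ Finset.univ.filter (fun v : Fin (n-1+r) => v.val < n-3),
          (hnbrs (n-3) ((n-r-6)/2) ((n-3)/2) (n-r-6) v.val).card := by
    rw [Finset.sum_congr rfl
      (fun v hv => WG_deg_D hq hkq hm hm1 hpq (Finset.mem_filter.mp hv).2),
      Finset.sum_add_distrib, Finset.sum_const, smul_eq_mul, card_filter_lt _ _ (by omega)]
  rw [hDsum]
  have hDcard : (Finset.univ.filter (fun v : Fin (n-1+r) => v.val < n-3)).card = n-3 :=
    card_filter_lt _ _ (by omega)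
  -- lower bound the hnbrs sum
  by_cases hpar : (n-r-6) % 2 = 1
  · by_cases hqpar : n-3 = 2*((n-3)/2)
    · -- q even : all vertices matched
      have hsum : (n-3) * (2*((n-r-6)/2)+1) ≤
          ∑ v ∈ Finset.univ.filter (fun v : Fin (n-1+r) => v.val < n-3),
            (hnbrs (n-3) ((n-r-6)/2) ((n-3)/2) (n-r-6) v.val).card := by
        calc (n-3) * (2*((n-r-6)/2)+1)
            = (Finset.univ.filter (fun v : Fin (n-1+r) => v.val < n-3)).card • (2*((n-r-6)/2)+1) := by
              rw [hDcard]; simp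
          _ ≤ _ := Finset.card_nsmul_le_sum _ _ _ (fun v hv =>
              le_of_eq (hnbrs_card_matched hq hkq hm hkm hm1
                (Finset.mem_filter.mp hv).2 hpar (Or.inl hqpar)).symm)
      have harith := arithAB n r hn hr1 hr2
      have he : 2*((n-r-6)/2)+1 = n-r-6 := by omega
      rw [he] at hsum
      have hmc : (r+2)*(n-3) = (n-3)*(r+2) := Nat.mul_comm _ _
      omega
    · -- q odd : all vertices except m+1 matched
      have hqodd : n-3 = 2*((n-3)/2)+1 := by omega
      have hn12 : 12 ≤ n := by omega
      set x₁ : Fin (n-1+r) := ⟨(n-3)/2 + 1, by omega⟩ with hx₁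
      have hx₁mem : x₁ ∈ Finset.univ.filter (fun v : Fin (n-1+r) => v.val < n-3) := by
        rw [Finset.mem_filter]
        refine ⟨Finset.mem_univ _, ?_⟩
        rw [hx₁]
        show (n-3)/2 + 1 < n-3
        omega
      have hsum : ((n-3)-1) * (2*((n-r-6)/2)+1) + 2*((n-r-6)/2) ≤
          ∑ v ∈ Finset.univ.filter (fun v : Fin (n-1+r) => v.val < n-3),
            (hnbrs (n-3) ((n-r-6)/2) ((n-3)/2) (n-r-6) v.val).card := by
        rw [← Finset.sum_erase_add _ _ hx₁mem]
        have h1 : ((n-3)-1) * (2*((n-r-6)/2)+1) ≤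
            ∑ v ∈ (Finset.univ.filter (fun v : Fin (n-1+r) => v.val < n-3)).erase x₁,
              (hnbrs (n-3) ((n-r-6)/2) ((n-3)/2) (n-r-6) v.val).card := by
          calc ((n-3)-1) * (2*((n-r-6)/2)+1)
              = ((Finset.univ.filter (fun v : Fin (n-1+r) => v.val < n-3)).erase x₁).card
                  • (2*((n-r-6)/2)+1) := by
                rw [Finset.card_erase_of_mem hx₁mem, hDcard]; simp
            _ ≤ _ := Finset.card_nsmul_le_sum _ _ _ (fun v hv => by
                rw [Finset.mem_erase, Finset.mem_filter] at hv
                refine le_of_eq (hnbrs_card_matched hq hkq hm hkm hm1 hv.2.2 hpar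
                  (Or.inr ?_)).symm
                intro hval
                exact hv.1 (Fin.ext (by rw [hval, hx₁])))
        have h2 : 2*((n-r-6)/2) ≤
            (hnbrs (n-3) ((n-r-6)/2) ((n-3)/2) (n-r-6) x₁.val).card :=
          hnbrs_card_ge hq hkq (by rw [hx₁]; show (n-3)/2 + 1 < n-3; omega)
        omega
      have harith := arithC n r hn12 hr1 hr2
      have he : 2*((n-r-6)/2)+1 = n-r-6 := by omega
      have he2 : 2*((n-r-6)/2) = (n-r-6)-1 := by omega
      rw [he, he2] at hsum
      have hmc : (r+2)*(n-3) = (n-3)*(r+2) := Nat.mul_comm _ _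
      omega
  · -- dd even
    have hsum : (n-3) * (2*((n-r-6)/2)) ≤
        ∑ v ∈ Finset.univ.filter (fun v : Fin (n-1+r) => v.val < n-3),
          (hnbrs (n-3) ((n-r-6)/2) ((n-3)/2) (n-r-6) v.val).card := by
      calc (n-3) * (2*((n-r-6)/2))
          = (Finset.univ.filter (fun v : Fin (n-1+r) => v.val < n-3)).card • (2*((n-r-6)/2)) := by
            rw [hDcard]; simp
        _ ≤ _ := Finset.card_nsmul_le_sum _ _ _ (fun v hv =>
            hnbrs_card_ge hq hkq (Finset.mem_filter.mp hv).2)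
    have harith := arithAB n r hn hr1 hr2
    have he : 2*((n-r-6)/2) = n-r-6 := by omega
    rw [he] at hsum
    have hmc : (r+2)*(n-3) = (n-3)*(r+2) := Nat.mul_comm _ _
    omega

end WitnessSum

section WitnessMore

variable {p q c k m dd : ℕ}

lemma WG_adj_of_CD {v w : Fin p} (hv : q ≤ v.val) (hw : w.val < q) :
    (WG q k m dd p).Adj v w :=
  ⟨by intro h; rw [h] at hv; omega, Or.inl ⟨hv, hw⟩⟩

lemma WG_adj_of_DC {v w : Fin p} (hv : v.val < q) (hw : q ≤ w.val) :
    (WG q k m dd p).Adj v w :=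
  ⟨by intro h; rw [h] at hv; omega, Or.inr (Or.inl ⟨hw, hv⟩)⟩

lemma WG_adj_cases {v w : Fin p} (h : (WG q k m dd p).Adj v w) :
    (q ≤ v.val ∧ w.val < q) ∨ (q ≤ w.val ∧ v.val < q) ∨
    (v.val < q ∧ w.val < q ∧
      (w.val ∈ hnbrs q k m dd v.val ∨ v.val ∈ hnbrs q k m dd w.val)) := h.2

lemma wit_deg_le (n r : ℕ) (hn : 11 ≤ n) (hr1 : 3 ≤ r) (hr2 : r + 5 ≤ n) :
    ∀ v : Fin (n-1+r), (WG (n-3) ((n-r-6)/2) ((n-3)/2) (n-r-6) (n-1+r)).degree v ≤ n-3 := by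
  intro v
  have hq : 0 < n-3 := by omega
  have hkq : 2*((n-r-6)/2)+1 ≤ n-3 := by omega
  have hm : n-3 = 2*((n-3)/2) ∨ n-3 = 2*((n-3)/2)+1 := by omega
  have hm1 : 1 ≤ (n-3)/2 := by omega
  have hpq : (n-3) + (r+2) = n-1+r := by omega
  by_cases hv : v.val < n-3
  · rw [WG_deg_D hq hkq hm hm1 hpq hv]
    have := hnbrs_card_le (m := (n-3)/2) (dd := n-r-6) hq hkq hv
    omega
  · rw [WG_deg_C hq hkq hm hm1 hpq (by omega)]

end WitnessMore


section Glue

lemma nat_card_edgeSet {p : ℕ} (G : SimpleGraph (Fin p)) [DecidableRel G.Adj] :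
    Nat.card G.edgeSet = G.edgeFinset.card := by
  rw [SimpleGraph.edgeFinset_card, Nat.card_eq_fintype_card]

lemma wit_no_tnstar (n r : ℕ) (hn : 11 ≤ n) (hr1 : 3 ≤ r) (hr2 : r + 5 ≤ n) :
    ¬ ContainsCopy (WG (n-3) ((n-r-6)/2) ((n-3)/2) (n-r-6) (n-1+r)) (TnStar n) := by
  intro hcopy
  have hq : 0 < n-3 := by omega
  have hkq : 2*((n-r-6)/2)+1 ≤ n-3 := by omega
  have hm : n-3 = 2*((n-3)/2) ∨ n-3 = 2*((n-3)/2)+1 := by omega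
  have hm1 : 1 ≤ (n-3)/2 := by omega
  have hpq : (n-3) + (r+2) = n-1+r := by omega
  set G := WG (n-3) ((n-r-6)/2) ((n-3)/2) (n-r-6) (n-1+r) with hG
  obtain ⟨u, x, y, z, hux, hxy, hyz, huy, huz, hxz, hcard⟩ := tnstar_elim hn G hcopy
  have hdegle : G.degree u ≤ n - 3 := wit_deg_le n r hn hr1 hr2 u
  have hxN : x ∈ G.neighborFinset u := by
    rw [mem_neighborFinset]; exact hux
  have hcardN : (G.neighborFinset u).card = G.degree u := G.card_neighborFinset_eq_degree u
  have hnotN : ∀ w, w = y ∨ w = z → x ≠ w → w ∉ G.neighborFinset u := by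
    intro w hw hxw hwN
    have hsub2 : ({x, w} : Finset (Fin (n-1+r))) ⊆ G.neighborFinset u := by
      intro t ht
      rcases Finset.mem_insert.mp ht with rfl | ht
      · exact hxN
      · rw [Finset.mem_singleton] at ht
        subst ht
        exact hwN
    have hcard2 : (G.neighborFinset u \ {x, w}).card = (G.neighborFinset u).card - 2 := by
      rw [Finset.card_sdiff_of_subset hsub2, Finset.card_insert_of_notMem (by simp [hxw]),
        Finset.card_singleton]
    have hsub3 : G.neighborFinset u \ {x, y, z} ⊆ G.neighborFinset u \ {x, w} := by
      intro t ht
      rw [Finset.mem_sdiff] at ht ⊢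
      refine ⟨ht.1, ?_⟩
      have h2 := ht.2
      simp only [Finset.mem_insert, Finset.mem_singleton] at h2 ⊢
      rcases hw with rfl | rfl <;> tauto
    have := Finset.card_le_card hsub3
    omega
  have hyN : y ∉ G.neighborFinset u := hnotN y (Or.inl rfl) (G.ne_of_adj hxy)
  have hzN : z ∉ G.neighborFinset u := hnotN z (Or.inr rfl) hxz
  by_cases hu : u.val < n - 3
  · by_cases hdd : n - r - 6 = 0
    · have hyD : y.val < n-3 := by
        by_contra hy2
        refine hyN ?_
        rw [mem_neighborFinset]
        exact WG_adj_of_DC hu (by omega)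
      have hzD : z.val < n-3 := by
        by_contra hz2
        refine hzN ?_
        rw [mem_neighborFinset]
        exact WG_adj_of_DC hu (by omega)
      have hadjyz : (WG (n-3) ((n-r-6)/2) ((n-3)/2) (n-r-6) (n-1+r)).Adj y z := hyz
      rcases WG_adj_cases hadjyz with h | h | h
      · omega
      · omega
      · rcases h.2.2 with hmem | hmem <;>
        · rw [hdd] at hmem
          simp only [Nat.zero_div] at hmem
          rw [hnbrs_zero] at hmem
          exact absurd hmem (Finset.notMem_empty _)
    · have hdegD : G.degree u = (r+2) +
          (hnbrs (n-3) ((n-r-6)/2) ((n-3)/2) (n-r-6) u.val).card :=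
        WG_deg_D (c := r+2) hq hkq hm hm1 hpq hu
      have hle := hnbrs_card_le (q := n-3) (k := (n-r-6)/2) (m := (n-3)/2) (dd := n-r-6)
        hq hkq hu
      have hdu : n - 3 ≤ G.degree u := by
        have hins : (insert x (G.neighborFinset u \ {x,y,z})).card ≤
            (G.neighborFinset u).card := by
          apply Finset.card_le_card
          intro t ht
          rcases Finset.mem_insert.mp ht with rfl | ht
          · exact hxN
          · exact (Finset.mem_sdiff.mp ht).1
        rw [Finset.card_insert_of_notMem (by simp)] at hins
        omega
      omega
  · have hyC : n-3 ≤ y.val := by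
      by_contra hy2
      refine hyN ?_
      rw [mem_neighborFinset]
      exact WG_adj_of_CD (by omega) (by omega)
    have hzC : n-3 ≤ z.val := by
      by_contra hz2
      refine hzN ?_
      rw [mem_neighborFinset]
      exact WG_adj_of_CD (by omega) (by omega)
    have hadjyz : (WG (n-3) ((n-r-6)/2) ((n-3)/2) (n-r-6) (n-1+r)).Adj y z := hyz
    rcases WG_adj_cases hadjyz with h | h | h <;> omega

end Glue

set_option maxHeartbeats 1000000 in
theorem stmt15 (n r : ℕ) (hn : 11 ≤ n) (hr1 : 3 ≤ r) (hr2 : r ≤ n - 5) :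
    exNum (n - 1 + r) (TnStar n) =
      exNum2 (n - 1 + r) (completeBipartiteGraph (Fin 1) (Fin (n - 2))) (TnStar n) := by
  classical
  have hr2' : r + 5 ≤ n := by omega
  set G₀ := WG (n-3) ((n-r-6)/2) ((n-3)/2) (n-r-6) (n-1+r) with hG₀
  have hnotn₀ : ¬ ContainsCopy G₀ (TnStar n) := wit_no_tnstar n r hn hr1 hr2'
  have hnostar₀ : ¬ ContainsCopy G₀ (completeBipartiteGraph (Fin 1) (Fin (n-2))) := by
    intro h
    obtain ⟨u, hu⟩ := star_elim hn G₀ h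
    have h2 : G₀.degree u ≤ n - 3 := wit_deg_le n r hn hr1 hr2' u
    omega
  have hedges₀ : (n-1)*(n-2) + r*(r-1) ≤ 2 * Nat.card G₀.edgeSet := by
    rw [nat_card_edgeSet]
    have h1 := wit_degsum n r hn hr1 hr2'
    rw [SimpleGraph.sum_degrees_eq_twice_card_edges] at h1
    exact h1
  rw [exNum, exNum2]
  set S1 := {m : ℕ | ∃ G : SimpleGraph (Fin (n-1+r)),
    ¬ ContainsCopy G (TnStar n) ∧ Nat.card G.edgeSet = m} with hS1
  set S2 := {m : ℕ | ∃ G : SimpleGraph (Fin (n-1+r)),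
    ¬ ContainsCopy G (completeBipartiteGraph (Fin 1) (Fin (n-2))) ∧
    ¬ ContainsCopy G (TnStar n) ∧ Nat.card G.edgeSet = m} with hS2
  have hsub : S2 ⊆ S1 := by
    rintro m ⟨G, h1, h2, h3⟩
    exact ⟨G, h2, h3⟩
  have hbdd1 : BddAbove S1 := by
    refine ⟨Nat.card (Sym2 (Fin (n-1+r))), ?_⟩
    rintro m ⟨G, -, rfl⟩
    exact Nat.card_le_card_of_injective _ Subtype.val_injective
  have hbdd2 : BddAbove S2 := hbdd1.mono hsub
  have hmem₀ : Nat.card G₀.edgeSet ∈ S2 := ⟨G₀, hnostar₀, hnotn₀, rfl⟩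
  have hne2 : S2.Nonempty := ⟨_, hmem₀⟩
  apply le_antisymm
  · apply csSup_le (hne2.mono hsub)
    rintro m ⟨G, hGfree, rfl⟩
    by_cases hstar : ∃ v, n - 2 ≤ G.degree v
    · obtain ⟨u, hu⟩ := hstar
      have hb := boundA hn hr1 hr2' rfl G hGfree u hu
      have hle : Nat.card G.edgeSet ≤ Nat.card G₀.edgeSet := by
        rw [nat_card_edgeSet, nat_card_edgeSet] at *
        omega
      exact hle.trans (le_csSup hbdd2 hmem₀)
    · push_neg at hstar
      have hnostar : ¬ ContainsCopy G (completeBipartiteGraph (Fin 1) (Fin (n-2))) := by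
        intro h
        obtain ⟨u, hu⟩ := star_elim hn G h
        have := hstar u
        omega
      exact le_csSup hbdd2 ⟨G, hnostar, hGfree, rfl⟩
  · exact csSup_le_csSup hbdd1 hne2 hsub
end CopyLemmas
end

section
/- Let p ≥ 11 with p ≡ 4 (mod 10). Then ex(p;T_{11}*) = (9p−22)/2. -/
open SimpleGraph

namespace Stmt18

open Finset

set_option linter.unusedSectionVars false
set_option linter.unusedVariables false

def dfn (n : ℕ) : ℕ :=
  if 17 ≤ n then 25 else [0,9,16,16,24,16,16,16,16,9,0,11,12,13,22,15,16].getD n 0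

lemma dfn_ge17 {n : ℕ} (h : 17 ≤ n) : dfn n = 25 := by rw [dfn, if_pos h]

lemma dfn_lt17 {n : ℕ} (h : n < 17) :
    dfn n = [0,9,16,16,24,16,16,16,16,9,0,11,12,13,22,15,16].getD n 0 := by
  rw [dfn, if_neg (by omega)]

lemma dfn_single {a : ℕ} (h : a % 10 = 4) : 22 ≤ dfn a := by
  rcases le_or_gt 17 a with h17 | h17
  · rw [dfn_ge17 h17]; omega
  · rw [dfn_lt17 h17]
    interval_cases a <;> first | decide | omega

lemma dfn_pos {a : ℕ} (h1 : 1 ≤ a) (h : a ≠ 10) : 9 ≤ dfn a := by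
  rcases le_or_gt 17 a with h17 | h17
  · rw [dfn_ge17 h17]; omega
  · rw [dfn_lt17 h17]
    interval_cases a <;> first | decide | omega

lemma dfn_pair {a b : ℕ} (ha : a ≠ 10) (hb : b ≠ 10) (ha1 : 1 ≤ a) (hb1 : 1 ≤ b)
    (h : (a + b) % 10 = 4) : 22 ≤ dfn a + dfn b := by
  rcases le_or_gt 17 a with h17 | h17
  · rw [dfn_ge17 h17]; omega
  · rcases le_or_gt 17 b with h17b | h17b
    · rw [dfn_ge17 h17b]; omega
    · rw [dfn_lt17 h17, dfn_lt17 h17b]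
      interval_cases a <;> interval_cases b <;> first | decide | omega

lemma numberLemma {ι : Type*} [DecidableEq ι] (s : Finset ι) (m : ι → ℕ)
    (h1 : ∀ i ∈ s, 1 ≤ m i) (hmod : (∑ i ∈ s, m i) % 10 = 4) :
    22 ≤ ∑ i ∈ s, dfn (m i) := by
  classical
  set T := s.filter (fun i => m i ≠ 10) with hT
  have hTs : T ⊆ s := filter_subset _ _
  have hsplit : ∑ i ∈ s \ T, m i + ∑ i ∈ T, m i = ∑ i ∈ s, m i := Finset.sum_sdiff hTs
  have h10 : ∀ i ∈ s \ T, m i = 10 := by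
    intro i hi
    rcases mem_sdiff.1 hi with ⟨his, hiT⟩
    by_contra hne
    exact hiT (mem_filter.2 ⟨his, hne⟩)
  have hconst : ∑ i ∈ s \ T, m i = 10 * (s \ T).card := by
    rw [Finset.sum_congr rfl h10]
    simp [mul_comm]
  have hTmod : (∑ i ∈ T, m i) % 10 = 4 := by omega
  have hTsub : ∑ i ∈ T, dfn (m i) ≤ ∑ i ∈ s, dfn (m i) :=
    Finset.sum_le_sum_of_subset hTs
  have hmemT : ∀ i ∈ T, m i ≠ 10 := fun i hi => (mem_filter.1 hi).2
  rcases lt_or_ge T.card 3 with hc | hc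
  · interval_cases h : T.card
    · rw [Finset.card_eq_zero.1 h] at hTmod; simp at hTmod
    · obtain ⟨i, hi⟩ := Finset.card_eq_one.1 h
      have hiT : i ∈ T := by rw [hi]; exact mem_singleton_self i
      have hms : ∑ j ∈ T, m j = m i := by rw [hi]; simp
      have h22 := dfn_single (a := m i) (by omega)
      have hds : dfn (m i) ≤ ∑ j ∈ T, dfn (m j) := by rw [hi]; simp
      omega
    · obtain ⟨i, j, hij, hij2⟩ := Finset.card_eq_two.1 h
      have hiT : i ∈ T := by rw [hij2]; simp
      have hjT : j ∈ T := by rw [hij2]; simp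
      have hsum : ∑ x ∈ T, m x = m i + m j := by rw [hij2, Finset.sum_pair hij]
      have hsum2 : ∑ x ∈ T, dfn (m x) = dfn (m i) + dfn (m j) := by
        rw [hij2, Finset.sum_pair hij]
      have h22 := dfn_pair (hmemT i hiT) (hmemT j hjT) (h1 i (hTs hiT)) (h1 j (hTs hjT))
        (by omega)
      omega
  · have h9 : ∀ i ∈ T, 9 ≤ dfn (m i) := fun i hi =>
      dfn_pos (h1 i (hTs hi)) (hmemT i hi)
    have h27 : T.card * 9 ≤ ∑ i ∈ T, dfn (m i) := by
      calc T.card * 9 = ∑ _i ∈ T, 9 := by rw [Finset.sum_const, smul_eq_mul]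
      _ ≤ _ := Finset.sum_le_sum h9
    omega


variable {V : Type*} [Fintype V] [DecidableEq V] [LinearOrder V]
  {G : SimpleGraph V} [DecidableRel G.Adj]

/-- Build a copy of `T₁₁*` from a path `v-x-y-z` plus 7 extra neighbors of `v`. -/
lemma copy_of_path (v x y z : V) (t : Fin 7 → V)
    (htinj : Function.Injective t)
    (htadj : ∀ i, G.Adj v (t i))
    (htx : ∀ i, t i ≠ x) (hty : ∀ i, t i ≠ y) (htz : ∀ i, t i ≠ z)
    (hvx : G.Adj v x) (hxy : G.Adj x y) (hyz : G.Adj y z)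
    (hyv : y ≠ v) (hzv : z ≠ v) (hzx : z ≠ x) :
    ContainsCopy G (TnStar 11) := by
  classical
  set t' : ℕ → V := fun n => t ⟨n % 7, Nat.mod_lt _ (by norm_num)⟩ with ht'
  set f : Fin 11 → V := fun i =>
    if h0 : (i : ℕ) = 0 then v
    else if h7 : (i : ℕ) ≤ 7 then t' ((i : ℕ) - 1)
    else if h8 : (i : ℕ) = 8 then x
    else if h9 : (i : ℕ) = 9 then y
    else z with hf
  have hvt : ∀ n, v ≠ t' n := fun n => (G.ne_of_adj (htadj _))
  have ht'adj : ∀ n, G.Adj v (t' n) := fun n => htadj _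
  have ht'x : ∀ n, t' n ≠ x := fun n => htx _
  have ht'y : ∀ n, t' n ≠ y := fun n => hty _
  have ht'z : ∀ n, t' n ≠ z := fun n => htz _
  have ht'inj : ∀ m n, m < 7 → n < 7 → t' m = t' n → m = n := by
    intro m n hm hn h
    have := htinj h
    have := Fin.mk.injEq (m % 7) _ (n % 7) _ ▸ this
    omega
  have hfinj : Function.Injective f := by
    intro i j h
    have hi := i.isLt
    have hj := j.isLt
    simp only [hf] at h
    split_ifs at h <;>
      first
        | (exact Fin.ext (by omega))
        | (exact absurd h (hvt _))
        | (exact absurd h.symm (hvt _))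
        | (exact absurd h (G.ne_of_adj hvx))
        | (exact absurd h.symm (G.ne_of_adj hvx))
        | (exact absurd h hyv.symm) | (exact absurd h.symm hyv.symm)
        | (exact absurd h hzv.symm) | (exact absurd h.symm hzv.symm)
        | (exact absurd h (ht'x _)) | (exact absurd h.symm (ht'x _))
        | (exact absurd h (ht'y _)) | (exact absurd h.symm (ht'y _))
        | (exact absurd h (ht'z _)) | (exact absurd h.symm (ht'z _))
        | (exact absurd h (G.ne_of_adj hxy))
        | (exact absurd h.symm (G.ne_of_adj hxy))
        | (exact absurd h (G.ne_of_adj hyz))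
        | (exact absurd h.symm (G.ne_of_adj hyz))
        | (exact absurd h hzx.symm) | (exact absurd h.symm hzx.symm)
        | (exact Fin.ext (by have := ht'inj _ _ (by omega) (by omega) h; omega))
  refine ⟨⟨f, hfinj⟩, ?_⟩
  intro a b hab
  have hcls : (a.val = 0 ∧ 1 ≤ b.val ∧ b.val ≤ 8) ∨ (b.val = 0 ∧ 1 ≤ a.val ∧ a.val ≤ 8) ∨
       (a.val = 8 ∧ b.val = 9) ∨ (b.val = 8 ∧ a.val = 9) ∨
       (a.val = 9 ∧ b.val = 10) ∨ (b.val = 9 ∧ a.val = 10) := by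
    simp only [TnStar, SimpleGraph.fromRel_adj, ne_eq, Fin.ext_iff] at hab
    omega
  have hfval0 : ∀ c : Fin 11, c.val = 0 → f c = v := by
    intro c hc; simp only [hf]; rw [dif_pos hc]
  have hfval17 : ∀ c : Fin 11, 1 ≤ c.val → c.val ≤ 7 → f c = t' (c.val - 1) := by
    intro c hc1 hc7; simp only [hf]; rw [dif_neg (by omega), dif_pos hc7]
  have hfval8 : ∀ c : Fin 11, c.val = 8 → f c = x := by
    intro c hc; simp only [hf]; rw [dif_neg (by omega), dif_neg (by omega), dif_pos hc]
  have hfval9 : ∀ c : Fin 11, c.val = 9 → f c = y := by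
    intro c hc; simp only [hf]
    rw [dif_neg (by omega), dif_neg (by omega), dif_neg (by omega), dif_pos hc]
  have hfval10 : ∀ c : Fin 11, c.val = 10 → f c = z := by
    intro c hc; simp only [hf]
    rw [dif_neg (by omega), dif_neg (by omega), dif_neg (by omega), dif_neg (by omega)]
  show G.Adj (f a) (f b)
  rcases hcls with ⟨ha, hb1, hb8⟩ | ⟨hb, ha1, ha8⟩ | ⟨ha, hb⟩ | ⟨hb, ha⟩ |
    ⟨ha, hb⟩ | ⟨hb, ha⟩
  · rw [hfval0 a ha]
    rcases le_or_gt b.val 7 with h7 | h7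
    · rw [hfval17 b hb1 h7]; exact ht'adj _
    · rw [hfval8 b (by omega)]; exact hvx
  · rw [hfval0 b hb]
    rcases le_or_gt a.val 7 with h7 | h7
    · rw [hfval17 a ha1 h7]; exact (ht'adj _).symm
    · rw [hfval8 a (by omega)]; exact hvx.symm
  · rw [hfval8 a ha, hfval9 b hb]; exact hxy
  · rw [hfval8 b hb, hfval9 a ha]; exact hxy.symm
  · rw [hfval9 a ha, hfval10 b hb]; exact hyz
  · rw [hfval9 b hb, hfval10 a ha]; exact hyz.symm

/-- In a `T₁₁*`-free graph, along any path `v-x-y-z` the vertex `v` has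
at most `6` further neighbors. -/
lemma free_path_bound (hfree : ¬ ContainsCopy G (TnStar 11)) {v x y z : V}
    (hvx : G.Adj v x) (hxy : G.Adj x y) (hyz : G.Adj y z)
    (hyv : y ≠ v) (hzv : z ≠ v) (hzx : z ≠ x) :
    ((G.neighborFinset v) \ {x, y, z}).card ≤ 6 := by
  by_contra hcard
  obtain ⟨T, hTsub, hT7⟩ := Finset.exists_subset_card_eq
    (n := 7) (s := (G.neighborFinset v) \ {x, y, z}) (by omega)
  have hTadj : ∀ w ∈ T, G.Adj v w := by
    intro w hw
    have := (Finset.mem_sdiff.1 (hTsub hw)).1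
    rwa [mem_neighborFinset] at this
  have hTnot : ∀ w ∈ T, w ≠ x ∧ w ≠ y ∧ w ≠ z := by
    intro w hw
    have := (Finset.mem_sdiff.1 (hTsub hw)).2
    simp only [Finset.mem_insert, Finset.mem_singleton] at this
    tauto
  let iso := T.orderIsoOfFin hT7
  refine hfree (copy_of_path v x y z (fun i => (iso i : V)) ?_ ?_ ?_ ?_ ?_ hvx hxy hyz hyv hzv hzx)
  · intro i j hij
    exact iso.injective (Subtype.ext hij)
  · intro i; exact hTadj _ (iso i).2
  · intro i; exact (hTnot _ (iso i).2).1
  · intro i; exact (hTnot _ (iso i).2).2.1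
  · intro i; exact (hTnot _ (iso i).2).2.2

/-- Walk closure for a set of vertices. -/
lemma mem_of_walk {D : Set V} (hcl : ∀ ⦃a b : V⦄, a ∈ D → G.Adj a b → b ∈ D) :
    ∀ {v w : V}, G.Walk v w → v ∈ D → w ∈ D
  | _, _, SimpleGraph.Walk.nil, hv => hv
  | _, _, SimpleGraph.Walk.cons h p, hv => mem_of_walk hcl p (hcl hv h)

lemma mem_of_reachable {D : Set V} (hcl : ∀ ⦃a b : V⦄, a ∈ D → G.Adj a b → b ∈ D)
    {v w : V} (hv : v ∈ D) (h : G.Reachable v w) : w ∈ D := by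
  obtain ⟨p⟩ := h
  exact mem_of_walk hcl p hv

lemma dfn_le_25 (n : ℕ) : dfn n ≤ 25 := by
  rcases le_or_gt 17 n with h | h
  · rw [dfn_ge17 h]
  · rw [dfn, if_neg (by omega)]
    interval_cases n <;> decide

lemma dfn_7n {n : ℕ} (h : 11 ≤ n) : dfn n + 54 ≤ 7 * n := by
  rcases le_or_gt 17 n with h17 | h17
  · rw [dfn_ge17 h17]; omega
  · rw [dfn, if_neg (by omega)]
    interval_cases n <;> decide

lemma dfn_7n' {n : ℕ} (h : 11 ≤ n) : dfn n + 7 * n ≤ 9 * n := by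
  rcases le_or_gt 17 n with h17 | h17
  · rw [dfn_ge17 h17]; omega
  · rw [dfn, if_neg (by omega)]
    interval_cases n <;> decide

lemma dfn_mid {n : ℕ} (h : 11 ≤ n) (h16 : n ≤ 16) (h14 : n ≠ 14) : dfn n = n := by
  rw [dfn, if_neg (by omega)]
  interval_cases n <;> first | decide | omega

lemma dfn14 : dfn 14 = 22 := by decide

lemma dfn_small {n : ℕ} (h1 : 1 ≤ n) (h10 : n ≤ 10) : dfn n + n * (n - 1) ≤ 9 * n := by
  rw [dfn, if_neg (by omega)]
  interval_cases n <;> decide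


/- helpers on sdiff cardinalities -/
lemma card_le_sdiff_gen (s : Finset V) (a b c : V) :
    s.card ≤ (s \ {a, b, c}).card + 3 := by
  have h1 : #(s \ {a,b,c}) + #(s ∩ {a,b,c}) = #s := card_sdiff_add_card_inter s _
  have h3 : #(s ∩ ({a,b,c} : Finset V)) ≤ 3 := by
    refine le_trans (card_le_card inter_subset_right) ?_
    refine le_trans (card_insert_le _ _) ?_
    refine Nat.succ_le_succ (le_trans (card_insert_le _ _) ?_)
    simp
  omega

lemma card_le_sdiff_mid {s : Finset V} {a b c : V} (hb : b ∉ s) :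
    s.card ≤ (s \ {a, b, c}).card + 2 := by
  have h1 : #(s \ {a,b,c}) + #(s ∩ {a,b,c}) = #s := card_sdiff_add_card_inter s _
  have h2 : s ∩ {a,b,c} ⊆ {a,c} := by
    intro u hu
    rcases mem_inter.1 hu with ⟨hus, hut⟩
    simp only [mem_insert, mem_singleton] at hut ⊢
    rcases hut with rfl | rfl | rfl
    · exact Or.inl rfl
    · exact absurd hus hb
    · exact Or.inr rfl
  have h3 : #(s ∩ ({a,b,c} : Finset V)) ≤ 2 := by
    refine le_trans (card_le_card h2) ?_
    refine le_trans (card_insert_le _ _) ?_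
    simp
  omega

lemma card_le_sdiff_last {s : Finset V} {a b c : V} (hc : c ∉ s) :
    s.card ≤ (s \ {a, b, c}).card + 2 := by
  have h1 : #(s \ {a,b,c}) + #(s ∩ {a,b,c}) = #s := card_sdiff_add_card_inter s _
  have h2 : s ∩ {a,b,c} ⊆ {a,b} := by
    intro u hu
    rcases mem_inter.1 hu with ⟨hus, hut⟩
    simp only [mem_insert, mem_singleton] at hut ⊢
    rcases hut with rfl | rfl | rfl
    · exact Or.inl rfl
    · exact Or.inr rfl
    · exact absurd hus hc
  have h3 : #(s ∩ ({a,b,c} : Finset V)) ≤ 2 := by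
    refine le_trans (card_le_card h2) ?_
    refine le_trans (card_insert_le _ _) ?_
    simp
  omega

/-- symmetric double counting of edges between two finsets -/
lemma double_count (A B : Finset V) :
    ∑ a ∈ A, (G.neighborFinset a ∩ B).card = ∑ b ∈ B, (G.neighborFinset b ∩ A).card := by
  have h : ∀ (Y : Finset V) (a : V),
      (G.neighborFinset a ∩ Y) = Y.filter (fun y => G.Adj a y) := by
    intro Y a; ext u
    simp only [mem_inter, mem_filter, mem_neighborFinset]
    tauto
  have hsym : ∀ a b : V, (if G.Adj a b then (1:ℕ) else 0) = if G.Adj b a then 1 else 0 := by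
    intro a b
    by_cases hh : G.Adj a b
    · rw [if_pos hh, if_pos hh.symm]
    · rw [if_neg hh, if_neg (fun c => hh c.symm)]
  calc ∑ a ∈ A, #(G.neighborFinset a ∩ B)
      = ∑ a ∈ A, ∑ b ∈ B, if G.Adj a b then 1 else 0 := by
        refine sum_congr rfl fun a _ => ?_
        rw [h B a, card_filter]
    _ = ∑ b ∈ B, ∑ a ∈ A, if G.Adj a b then 1 else 0 := sum_comm
    _ = ∑ b ∈ B, ∑ a ∈ A, if G.Adj b a then 1 else 0 := by
        refine sum_congr rfl fun b _ => sum_congr rfl fun a _ => hsym a b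
    _ = ∑ b ∈ B, #(G.neighborFinset b ∩ A) := by
        refine sum_congr rfl fun b _ => ?_
        rw [h A b, card_filter]

/-- every vertex having degree ≥ 9 makes the rest of its component pendant-like -/
lemma pendant_structure (hfree : ¬ ContainsCopy G (TnStar 11)) {S : Finset V}
    (hconn : ∀ v ∈ S, ∀ w ∈ S, G.Reachable v w)
    {v : V} (hv : v ∈ S) (hdv : 9 ≤ G.degree v) :
    ∀ w ∈ S, w = v ∨ G.Adj v w ∨ (∃ a, G.Adj v a ∧ ∀ z, G.Adj w z → z = a) := by
  intro w hw
  set D : Set V :=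
    {u | u = v ∨ G.Adj v u ∨ (∃ a, G.Adj v a ∧ ∀ z, G.Adj u z → z = a)} with hD
  have hclosed : ∀ ⦃a b : V⦄, a ∈ D → G.Adj a b → b ∈ D := by
    rintro a b (rfl | ha | ⟨c, hc, hq⟩) hab
    · exact Or.inr (Or.inl hab)
    · by_cases hbv : b = v
      · exact Or.inl hbv
      by_cases hbA : G.Adj v b
      · exact Or.inr (Or.inl hbA)
      refine Or.inr (Or.inr ⟨a, ha, ?_⟩)
      intro z hz
      by_contra hza
      have hzv : z ≠ v := by
        intro h
        exact hbA ((h ▸ hz).symm)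
      have hbound := free_path_bound hfree ha hab hz hbv hzv hza
      have hbN : b ∉ G.neighborFinset v := by
        rw [mem_neighborFinset]; exact hbA
      have h2 := card_le_sdiff_mid (s := G.neighborFinset v) (a := a) (c := z) hbN
      rw [card_neighborFinset_eq_degree] at h2
      omega
    · exact Or.inr (Or.inl ((hq b hab) ▸ hc))
  exact mem_of_reachable hclosed (Or.inl rfl) (hconn v hv w hw)

/-- component bound when some vertex has degree ≥ 10 -/
lemma comp_bound_ge10 (hfree : ¬ ContainsCopy G (TnStar 11)) {S : Finset V}
    (hcl : ∀ v ∈ S, ∀ w, G.Adj v w → w ∈ S)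
    (hconn : ∀ v ∈ S, ∀ w ∈ S, G.Reachable v w)
    {v : V} (hv : v ∈ S) (hdv : 10 ≤ G.degree v) :
    ∑ u ∈ S, G.degree u + 3 ≤ 3 * S.card := by
  classical
  set A := G.neighborFinset v with hA
  have hAS : A ⊆ S := fun a ha => hcl v hv a ((mem_neighborFinset _ _ _).1 ha)
  have hvA : v ∉ A := by simp [hA]
  have hins : insert v A ⊆ S := by
    intro u hu
    rcases mem_insert.1 hu with rfl | hu
    · exact hv
    · exact hAS hu
  set P := S \ insert v A with hP
  have hPs : ∀ w ∈ P, w ∈ S ∧ w ≠ v ∧ ¬ G.Adj v w := by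
    intro w hw
    rcases mem_sdiff.1 hw with ⟨hwS, hwn⟩
    refine ⟨hwS, ?_, ?_⟩
    · intro h; exact hwn (h ▸ mem_insert_self _ _)
    · intro h; exact hwn (mem_insert_of_mem ((mem_neighborFinset _ _ _).2 h))
  have hpend := pendant_structure hfree hconn hv (by omega)
  have hPpend : ∀ w ∈ P, ∃ a, G.Adj v a ∧ ∀ z, G.Adj w z → z = a := by
    intro w hw
    obtain ⟨hwS, hwv, hwA⟩ := hPs w hw
    rcases hpend w hwS with rfl | h | h
    · exact absurd rfl hwv
    · exact absurd h hwA
    · exact h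
  have hPdeg : ∀ w ∈ P, G.degree w ≤ 1 := by
    intro w hw
    obtain ⟨a, _, hq⟩ := hPpend w hw
    rw [← card_neighborFinset_eq_degree]
    refine le_trans (card_le_card (t := {a}) ?_) (by simp)
    intro z hz
    rw [mem_singleton]
    exact hq z ((mem_neighborFinset _ _ _).1 hz)
  have hAA : ∀ a ∈ A, #(G.neighborFinset a ∩ A) ≤ 1 := by
    intro a ha
    by_contra hcon
    obtain ⟨x1, hx1, x2, hx2, hne⟩ := Finset.one_lt_card.1 (show 1 < #(G.neighborFinset a ∩ A) by omega)
    rcases mem_inter.1 hx1 with ⟨hx1n, hx1A⟩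
    rcases mem_inter.1 hx2 with ⟨hx2n, hx2A⟩
    have hva : G.Adj v a := (mem_neighborFinset _ _ _).1 ha
    have hvx1 : G.Adj v x1 := (mem_neighborFinset _ _ _).1 hx1A
    have hvx2 : G.Adj v x2 := (mem_neighborFinset _ _ _).1 hx2A
    have hbound := free_path_bound hfree hvx1 ((mem_neighborFinset _ _ _).1 hx1n).symm
      ((mem_neighborFinset _ _ _).1 hx2n) (G.ne_of_adj hva).symm (G.ne_of_adj hvx2).symm
      hne.symm
    have h2 := card_le_sdiff_gen (G.neighborFinset v) x1 a x2
    rw [card_neighborFinset_eq_degree] at h2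
    omega
  have hAdeg : ∀ a ∈ A, G.degree a ≤ 2 + #(G.neighborFinset a ∩ P) := by
    intro a ha
    have hsub : G.neighborFinset a ⊆
        insert v ((G.neighborFinset a ∩ A) ∪ (G.neighborFinset a ∩ P)) := by
      intro u hu
      have huS : u ∈ S := hcl a (hAS ha) u ((mem_neighborFinset _ _ _).1 hu)
      by_cases huv : u = v
      · exact huv ▸ mem_insert_self _ _
      by_cases huA : u ∈ A
      · exact mem_insert_of_mem (mem_union_left _ (mem_inter.2 ⟨hu, huA⟩))
      · refine mem_insert_of_mem (mem_union_right _ (mem_inter.2 ⟨hu, ?_⟩))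
        rw [hP, mem_sdiff]
        refine ⟨huS, ?_⟩
        intro hins'
        rcases mem_insert.1 hins' with rfl | h
        · exact huv rfl
        · exact huA h
    rw [← card_neighborFinset_eq_degree]
    refine le_trans (card_le_card hsub) ?_
    refine le_trans (card_insert_le _ _) ?_
    have h1 := card_union_le (G.neighborFinset a ∩ A) (G.neighborFinset a ∩ P)
    have h2 := hAA a ha
    omega
  have hsum_pa : ∑ a ∈ A, #(G.neighborFinset a ∩ P) ≤ #P := by
    rw [double_count]
    calc ∑ w ∈ P, #(G.neighborFinset w ∩ A) ≤ ∑ w ∈ P, 1 := by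
          refine Finset.sum_le_sum fun w hw => ?_
          have h1 : #(G.neighborFinset w ∩ A) ≤ G.degree w := by
            rw [← card_neighborFinset_eq_degree]
            exact card_le_card inter_subset_left
          have := hPdeg w hw
          omega
      _ = #P := by simp
  have hsumA : ∑ a ∈ A, G.degree a ≤ 2 * #A + ∑ a ∈ A, #(G.neighborFinset a ∩ P) := by
    calc ∑ a ∈ A, G.degree a ≤ ∑ a ∈ A, (2 + #(G.neighborFinset a ∩ P)) :=
          Finset.sum_le_sum hAdeg
      _ = 2 * #A + ∑ a ∈ A, #(G.neighborFinset a ∩ P) := by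
          rw [Finset.sum_add_distrib, Finset.sum_const, smul_eq_mul, mul_comm]
  have hsumP : ∑ w ∈ P, G.degree w ≤ #P := by
    calc ∑ w ∈ P, G.degree w ≤ ∑ w ∈ P, 1 := Finset.sum_le_sum hPdeg
      _ = #P := by simp
  have hsplit : ∑ u ∈ P, G.degree u + ∑ u ∈ insert v A, G.degree u = ∑ u ∈ S, G.degree u :=
    Finset.sum_sdiff hins
  have hsumins : ∑ u ∈ insert v A, G.degree u = G.degree v + ∑ u ∈ A, G.degree u :=
    Finset.sum_insert hvA
  have hcards : #(insert v A) = #A + 1 := card_insert_of_notMem hvA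
  have hcardP : #P + #(insert v A) = #S := by
    rw [hP, card_sdiff_of_subset hins]
    have := card_le_card hins
    omega
  have hAcard : #A = G.degree v := card_neighborFinset_eq_degree _ _
  have hle : #(insert v A) ≤ #S := card_le_card hins
  omega

/-- component bound when max degree is 9 -/
lemma comp_bound_eq9 (hfree : ¬ ContainsCopy G (TnStar 11)) {S : Finset V}
    (hcl : ∀ v ∈ S, ∀ w, G.Adj v w → w ∈ S)
    (hconn : ∀ v ∈ S, ∀ w ∈ S, G.Reachable v w)
    (hdegle : ∀ u ∈ S, G.degree u ≤ 9)
    {v : V} (hv : v ∈ S) (hdv : G.degree v = 9) (hn : 11 ≤ S.card) :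
    ∑ u ∈ S, G.degree u ≤ 2 * S.card + 54 := by
  classical
  set A := G.neighborFinset v with hA
  have hAS : A ⊆ S := fun a ha => hcl v hv a ((mem_neighborFinset _ _ _).1 ha)
  have hvA : v ∉ A := by simp [hA]
  have hins : insert v A ⊆ S := by
    intro u hu
    rcases mem_insert.1 hu with rfl | hu
    · exact hv
    · exact hAS hu
  set P := S \ insert v A with hP
  have hPs : ∀ w ∈ P, w ∈ S ∧ w ≠ v ∧ ¬ G.Adj v w := by
    intro w hw
    rcases mem_sdiff.1 hw with ⟨hwS, hwn⟩
    refine ⟨hwS, ?_, ?_⟩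
    · intro h; exact hwn (h ▸ mem_insert_self _ _)
    · intro h; exact hwn (mem_insert_of_mem ((mem_neighborFinset _ _ _).2 h))
  have hpend := pendant_structure hfree hconn hv (by omega)
  have hPpend : ∀ w ∈ P, ∃ a, G.Adj v a ∧ ∀ z, G.Adj w z → z = a := by
    intro w hw
    obtain ⟨hwS, hwv, hwA⟩ := hPs w hw
    rcases hpend w hwS with rfl | h | h
    · exact absurd rfl hwv
    · exact absurd h hwA
    · exact h
  have hdegpos : ∀ w ∈ S, w ≠ v → 1 ≤ G.degree w := by
    intro w hw hwv
    obtain ⟨pwalk⟩ := hconn w hw v hv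
    cases pwalk with
    | nil => exact absurd rfl hwv
    | @cons _ u _ h p =>
      rw [← card_neighborFinset_eq_degree]
      exact card_pos.2 ⟨u, (mem_neighborFinset _ _ _).2 h⟩
  have hPdeg : ∀ w ∈ P, G.degree w = 1 := by
    intro w hw
    obtain ⟨a, _, hq⟩ := hPpend w hw
    have h1 : G.degree w ≤ 1 := by
      rw [← card_neighborFinset_eq_degree]
      refine le_trans (card_le_card (t := {a}) ?_) (by simp)
      intro z hz
      rw [mem_singleton]
      exact hq z ((mem_neighborFinset _ _ _).1 hz)
    have h2 := hdegpos w (hPs w hw).1 (hPs w hw).2.1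
    omega
  set H := A.filter (fun a => 0 < #(G.neighborFinset a ∩ P)) with hH
  have hHA : H ⊆ A := filter_subset _ _
  have hcardP : #P + (#A + 1) = #S := by
    rw [hP, card_sdiff_of_subset hins, card_insert_of_notMem hvA]
    have h := card_le_card hins
    rw [card_insert_of_notMem hvA] at h
    omega
  have hAcard : #A = 9 := by rw [hA, card_neighborFinset_eq_degree, hdv]
  have hPpos : 0 < #P := by omega
  have hH1 : 1 ≤ #H := by
    obtain ⟨w, hw⟩ := card_pos.1 hPpos
    have hdw := hPdeg w hw
    have : 0 < #(G.neighborFinset w) := by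
      rw [card_neighborFinset_eq_degree, hdw]; omega
    obtain ⟨u, hu⟩ := card_pos.1 this
    obtain ⟨a, hva, hq⟩ := hPpend w hw
    have hua : u = a := hq u ((mem_neighborFinset _ _ _).1 hu)
    have haA : a ∈ A := (mem_neighborFinset _ _ _).2 hva
    have haH : a ∈ H := by
      rw [hH, mem_filter]
      refine ⟨haA, card_pos.2 ⟨w, mem_inter.2 ⟨?_, hw⟩⟩⟩
      rw [mem_neighborFinset]
      exact (hua ▸ ((mem_neighborFinset _ _ _).1 hu)).symm
    exact card_pos.2 ⟨a, haH⟩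
  have hHnoA : ∀ a ∈ H, ∀ u ∈ A, ¬ G.Adj a u := by
    intro a ha u hu hadj
    rcases mem_filter.1 ha with ⟨haA, hpa⟩
    obtain ⟨w, hw⟩ := card_pos.1 hpa
    rcases mem_inter.1 hw with ⟨hwn, hwP⟩
    have hva : G.Adj v a := (mem_neighborFinset _ _ _).1 haA
    have hvu : G.Adj v u := (mem_neighborFinset _ _ _).1 hu
    have haw : G.Adj a w := (mem_neighborFinset _ _ _).1 hwn
    have hwv : w ≠ v := (hPs w hwP).2.1
    have hwu : w ≠ u := by
      intro h
      exact (hPs w hwP).2.2 (h ▸ hvu)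
    have hbound := free_path_bound hfree hvu hadj.symm haw (G.ne_of_adj hva).symm
      hwv hwu
    have hwN : w ∉ G.neighborFinset v := by
      rw [mem_neighborFinset]; exact (hPs w hwP).2.2
    have h2 := card_le_sdiff_last (s := G.neighborFinset v) (a := u) (b := a) hwN
    rw [card_neighborFinset_eq_degree] at h2
    omega
  have hHdeg : ∀ a ∈ H, G.degree a ≤ 1 + #(G.neighborFinset a ∩ P) := by
    intro a ha
    have hsub : G.neighborFinset a ⊆ insert v (G.neighborFinset a ∩ P) := by
      intro u hu
      have hau : G.Adj a u := (mem_neighborFinset _ _ _).1 hu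
      have huS : u ∈ S := hcl a (hAS (hHA ha)) u hau
      by_cases huv : u = v
      · exact huv ▸ mem_insert_self _ _
      by_cases huA : u ∈ A
      · exact absurd hau (hHnoA a ha u huA)
      · refine mem_insert_of_mem (mem_inter.2 ⟨hu, ?_⟩)
        rw [hP, mem_sdiff]
        refine ⟨huS, ?_⟩
        intro hins'
        rcases mem_insert.1 hins' with rfl | h
        · exact huv rfl
        · exact huA h
    rw [← card_neighborFinset_eq_degree]
    exact le_trans (card_le_card hsub) (by
      have := card_insert_le v (G.neighborFinset a ∩ P)
      omega)
  have hnonH : ∀ a ∈ A \ H, G.degree a ≤ 9 - #H := by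
    intro a ha
    rcases mem_sdiff.1 ha with ⟨haA, haH⟩
    have hsub : G.neighborFinset a ⊆ insert v ((A \ H).erase a) := by
      intro u hu
      have hau : G.Adj a u := (mem_neighborFinset _ _ _).1 hu
      have huS : u ∈ S := hcl a (hAS haA) u hau
      by_cases huv : u = v
      · exact huv ▸ mem_insert_self _ _
      have huP : u ∉ P := by
        intro huP
        refine haH ?_
        rw [hH, mem_filter]
        exact ⟨haA, card_pos.2 ⟨u, mem_inter.2 ⟨hu, huP⟩⟩⟩
      have huA : u ∈ A := by
        by_contra huA
        refine huP ?_
        rw [hP, mem_sdiff]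
        refine ⟨huS, ?_⟩
        intro hins'
        rcases mem_insert.1 hins' with rfl | h
        · exact huv rfl
        · exact huA h
      have huH : u ∉ H := by
        intro huH
        exact hHnoA u huH a haA hau.symm
      refine mem_insert_of_mem (mem_erase.2 ⟨?_, mem_sdiff.2 ⟨huA, huH⟩⟩)
      intro h
      exact (G.ne_of_adj hau).symm h
    rw [← card_neighborFinset_eq_degree]
    refine le_trans (card_le_card hsub) ?_
    have h1 := card_insert_le v ((A \ H).erase a)
    have h2 : #((A \ H).erase a) = #(A \ H) - 1 := card_erase_of_mem (mem_sdiff.2 ⟨haA, haH⟩)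
    have h3 : #(A \ H) = 9 - #H := by
      rw [card_sdiff_of_subset hHA, hAcard]
    have h4 : 1 ≤ #(A \ H) := card_pos.2 ⟨a, mem_sdiff.2 ⟨haA, haH⟩⟩
    have h5 : #H ≤ 9 := hAcard ▸ card_le_card hHA
    omega
  have hsum_pa : ∑ a ∈ H, #(G.neighborFinset a ∩ P) ≤ #P := by
    refine le_trans (Finset.sum_le_sum_of_subset hHA) ?_
    rw [double_count]
    calc ∑ w ∈ P, #(G.neighborFinset w ∩ A) ≤ ∑ w ∈ P, 1 := by
          refine Finset.sum_le_sum fun w hw => ?_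
          have h1 : #(G.neighborFinset w ∩ A) ≤ G.degree w := by
            rw [← card_neighborFinset_eq_degree]
            exact card_le_card inter_subset_left
          have := hPdeg w hw
          omega
      _ = #P := by simp
  have hsumH : ∑ a ∈ H, G.degree a ≤ #H + #P := by
    calc ∑ a ∈ H, G.degree a ≤ ∑ a ∈ H, (1 + #(G.neighborFinset a ∩ P)) :=
          Finset.sum_le_sum hHdeg
      _ = #H + ∑ a ∈ H, #(G.neighborFinset a ∩ P) := by
          rw [Finset.sum_add_distrib, Finset.sum_const, smul_eq_mul, mul_one]
      _ ≤ #H + #P := by omega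
  have hsumnonH : ∑ a ∈ A \ H, G.degree a ≤ (9 - #H) * (9 - #H) := by
    have h3 : #(A \ H) = 9 - #H := by rw [card_sdiff_of_subset hHA, hAcard]
    calc ∑ a ∈ A \ H, G.degree a ≤ #(A \ H) • (9 - #H) :=
          Finset.sum_le_card_nsmul _ _ _ hnonH
      _ = (9 - #H) * (9 - #H) := by rw [h3, smul_eq_mul]
  have hsumP : ∑ w ∈ P, G.degree w = #P := by
    rw [Finset.sum_congr rfl hPdeg]
    simp
  have hsplitA : ∑ a ∈ A \ H, G.degree a + ∑ a ∈ H, G.degree a = ∑ a ∈ A, G.degree a :=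
    Finset.sum_sdiff hHA
  have hsplit : ∑ u ∈ P, G.degree u + ∑ u ∈ insert v A, G.degree u = ∑ u ∈ S, G.degree u :=
    Finset.sum_sdiff hins
  have hsumins : ∑ u ∈ insert v A, G.degree u = G.degree v + ∑ u ∈ A, G.degree u :=
    Finset.sum_insert hvA
  have h5 : 1 ≤ #H := hH1
  have h6 : #H ≤ 9 := hAcard ▸ card_le_card hHA
  have hquad : #H + (9 - #H) * (9 - #H) ≤ 65 := by
    interval_cases h : #H <;> omega
  omega
/-- helper: two of the three removed elements are not in `s` -/
lemma card_le_sdiff_two {s : Finset V} {a b c : V} (hb : b ∉ s) (hc : c ∉ s) :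
    s.card ≤ (s \ {a, b, c}).card + 1 := by
  have h1 : #(s \ {a,b,c}) + #(s ∩ {a,b,c}) = #s := card_sdiff_add_card_inter s _
  have h2 : s ∩ {a,b,c} ⊆ {a} := by
    intro u hu
    rcases mem_inter.1 hu with ⟨hus, hut⟩
    simp only [mem_insert, mem_singleton] at hut ⊢
    rcases hut with rfl | rfl | rfl
    · rfl
    · exact absurd hus hb
    · exact absurd hus hc
  have h3 : #(s ∩ ({a,b,c} : Finset V)) ≤ 1 := le_trans (card_le_card h2) (by simp)
  omega

/-- structure around a degree ≥ 8 vertex: every component member is either a neighbor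
of `v` or has all its neighbors among the neighbors of `v`. -/
lemma AB_structure (hfree : ¬ ContainsCopy G (TnStar 11)) {S : Finset V}
    (hconn : ∀ v ∈ S, ∀ w ∈ S, G.Reachable v w)
    {v : V} (hv : v ∈ S) (hdv : 8 ≤ G.degree v) :
    ∀ w ∈ S, w ∈ G.neighborFinset v ∨ (G.neighborFinset w ⊆ G.neighborFinset v) := by
  intro w hw
  set D : Set V :=
    {u | u ∈ G.neighborFinset v ∨ (G.neighborFinset u ⊆ G.neighborFinset v)} with hD
  have hclosed : ∀ ⦃a b : V⦄, a ∈ D → G.Adj a b → b ∈ D := by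
    rintro a b (ha | ha) hab
    · by_cases hbA : b ∈ G.neighborFinset v
      · exact Or.inl hbA
      by_cases hbv : b = v
      · exact Or.inr (by subst hbv; exact fun z hz => hz)
      refine Or.inr ?_
      intro z hz
      by_contra hzA
      have hbz : G.Adj b z := (mem_neighborFinset _ _ _).1 hz
      have hva : G.Adj v a := (mem_neighborFinset _ _ _).1 ha
      have hzv : z ≠ v := by
        intro h
        subst h
        exact hbA ((mem_neighborFinset _ _ _).2 hbz.symm)
      have hza : z ≠ a := by
        intro h
        exact hzA (h ▸ ha)
      have hbound := free_path_bound hfree hva hab hbz hbv hzv hza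
      have hbN : b ∉ G.neighborFinset v := hbA
      have hzN : z ∉ G.neighborFinset v := hzA
      have h2 := card_le_sdiff_two (s := G.neighborFinset v) (a := a) hbN hzN
      rw [card_neighborFinset_eq_degree] at h2
      omega
    · exact Or.inl (ha ((mem_neighborFinset _ _ _).2 hab))
  have hvD : v ∈ D := Or.inr (fun z hz => hz)
  exact mem_of_reachable hclosed hvD (hconn v hv w hw)

/-- component bound, max degree 8, large component -/
lemma comp_bound_le8_big (hfree : ¬ ContainsCopy G (TnStar 11)) {S : Finset V}
    (hcl : ∀ v ∈ S, ∀ w, G.Adj v w → w ∈ S)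
    (hconn : ∀ v ∈ S, ∀ w ∈ S, G.Reachable v w)
    (hdegle : ∀ u ∈ S, G.degree u ≤ 8)
    {v : V} (hv : v ∈ S) (hdv : G.degree v = 8) :
    ∑ u ∈ S, G.degree u ≤ 128 := by
  classical
  set A := G.neighborFinset v with hA
  have hAS : A ⊆ S := fun a ha => hcl v hv a ((mem_neighborFinset _ _ _).1 ha)
  have hAcard : #A = 8 := by rw [hA, card_neighborFinset_eq_degree, hdv]
  set B := S \ A with hB
  have hBsub : ∀ b ∈ B, G.neighborFinset b ⊆ A := by
    intro b hb
    rcases mem_sdiff.1 hb with ⟨hbS, hbA⟩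
    rcases AB_structure hfree hconn hv (by omega) b hbS with h | h
    · exact absurd h hbA
    · exact h
  have hSB : ∑ b ∈ B, G.degree b ≤ ∑ a ∈ A, G.degree a := by
    have h1 : ∑ b ∈ B, G.degree b = ∑ b ∈ B, #(G.neighborFinset b ∩ A) :=
      Finset.sum_congr rfl (fun b hb => by
        rw [← card_neighborFinset_eq_degree, inter_eq_left.2 (hBsub b hb)])
    have h2 : ∑ b ∈ B, #(G.neighborFinset b ∩ A) = ∑ a ∈ A, #(G.neighborFinset a ∩ B) :=
      (double_count A B).symm
    have h3 : ∑ a ∈ A, #(G.neighborFinset a ∩ B) ≤ ∑ a ∈ A, G.degree a :=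
      Finset.sum_le_sum (fun a _ => by
        rw [← card_neighborFinset_eq_degree]; exact card_le_card inter_subset_left)
    omega
  have hSA : ∑ a ∈ A, G.degree a ≤ 64 := by
    have := Finset.sum_le_card_nsmul A (fun a => G.degree a) 8
      (fun a ha => hdegle a (hAS ha))
    rw [hAcard, smul_eq_mul] at this
    omega
  have hsd : ∑ u ∈ B, G.degree u + ∑ u ∈ A, G.degree u = ∑ u ∈ S, G.degree u :=
    Finset.sum_sdiff hAS
  omega

/-- component bound, max degree 8, component of size 14 (the sharp case) -/
lemma comp_bound_le8_14 (hfree : ¬ ContainsCopy G (TnStar 11)) {S : Finset V}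
    (hcl : ∀ v ∈ S, ∀ w, G.Adj v w → w ∈ S)
    (hconn : ∀ v ∈ S, ∀ w ∈ S, G.Reachable v w)
    (hdegle : ∀ u ∈ S, G.degree u ≤ 8)
    {v : V} (hv : v ∈ S) (hdv : G.degree v = 8) (hcard : S.card = 14) :
    ∑ u ∈ S, G.degree u ≤ 104 := by
  classical
  set A := G.neighborFinset v with hA
  have hAS : A ⊆ S := fun a ha => hcl v hv a ((mem_neighborFinset _ _ _).1 ha)
  have hAcard : #A = 8 := by rw [hA, card_neighborFinset_eq_degree, hdv]
  set B := S \ A with hB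
  have hBcard : #B = 6 := by rw [hB, card_sdiff_of_subset hAS, hAcard, hcard]
  have hBsub : ∀ b ∈ B, G.neighborFinset b ⊆ A := by
    intro b hb
    rcases mem_sdiff.1 hb with ⟨hbS, hbA⟩
    rcases AB_structure hfree hconn hv (by omega) b hbS with h | h
    · exact absurd h hbA
    · exact h
  set dA := fun a => #(G.neighborFinset a ∩ A) with hdA
  set dB := fun a => #(G.neighborFinset a ∩ B) with hdB
  have hdeg_split : ∀ a ∈ S, G.degree a = dA a + dB a := by
    intro a haS
    have hsub : G.neighborFinset a ⊆ S :=
      fun u hu => hcl a haS u ((mem_neighborFinset _ _ _).1 hu)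
    have hAB : A ∪ B = S := union_sdiff_of_subset hAS
    have heq : G.neighborFinset a = (G.neighborFinset a ∩ A) ∪ (G.neighborFinset a ∩ B) := by
      rw [← inter_union_distrib_left, hAB, inter_eq_left.2 hsub]
    have hdisj : Disjoint (G.neighborFinset a ∩ A) (G.neighborFinset a ∩ B) :=
      Disjoint.mono inter_subset_right inter_subset_right disjoint_sdiff
    rw [← card_neighborFinset_eq_degree, heq, card_union_of_disjoint hdisj]
  have hSB : ∑ b ∈ B, G.degree b = ∑ a ∈ A, dB a := by
    have h1 : ∑ b ∈ B, G.degree b = ∑ b ∈ B, #(G.neighborFinset b ∩ A) :=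
      Finset.sum_congr rfl (fun b hb => by
        rw [← card_neighborFinset_eq_degree, inter_eq_left.2 (hBsub b hb)])
    rw [h1, hdB]
    exact (double_count A B).symm
  set ψ := fun a => dA a + 2 * dB a with hψ
  have hSS : ∑ u ∈ S, G.degree u = ∑ a ∈ A, ψ a := by
    have hsd : ∑ u ∈ B, G.degree u + ∑ u ∈ A, G.degree u = ∑ u ∈ S, G.degree u :=
      Finset.sum_sdiff hAS
    have hAeq : ∑ a ∈ A, G.degree a = ∑ a ∈ A, (dA a + dB a) :=
      Finset.sum_congr rfl (fun a ha => hdeg_split a (hAS ha))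
    have : ∑ a ∈ A, ψ a = ∑ a ∈ A, dB a + ∑ a ∈ A, (dA a + dB a) := by
      rw [← Finset.sum_add_distrib]
      refine Finset.sum_congr rfl fun a _ => ?_
      simp only [hψ]
      ring
    rw [this, ← hSB, ← hAeq, hsd]
  have hdB6 : ∀ a, dB a ≤ 6 := by
    intro a
    simp only [hdB]
    calc #(G.neighborFinset a ∩ B) ≤ #B := card_le_card inter_subset_right
      _ = 6 := hBcard
  have hψ14 : ∀ a ∈ A, ψ a ≤ 14 := by
    intro a ha
    have h1 := hdeg_split a (hAS ha)
    have h2 := hdegle a (hAS ha)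
    have h3 := hdB6 a
    simp only [hψ]
    omega
  by_cases hall : ∀ a ∈ A, ψ a ≤ 13
  · rw [hSS]
    have h := Finset.sum_le_card_nsmul A ψ 13 hall
    rw [hAcard, smul_eq_mul] at h
    exact le_trans (le_of_eq rfl) h
  · push_neg at hall
    obtain ⟨u, huA, hu13⟩ := hall
    have hψu : ψ u = 14 := le_antisymm (hψ14 u huA) hu13
    have h1 := hdeg_split u (hAS huA)
    have h2 := hdegle u (hAS huA)
    have h3 := hdB6 u
    have hdegu : G.degree u = 8 := by simp only [hψ] at hψu; omega
    have hdBu : dB u = 6 := by simp only [hψ] at hψu; omega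
    have hdAu : dA u = 2 := by omega
    have hBfull : ∀ b ∈ B, G.Adj u b := by
      have hsub : G.neighborFinset u ∩ B ⊆ B := inter_subset_right
      have heq : G.neighborFinset u ∩ B = B :=
        Finset.eq_of_subset_of_card_le hsub (by simp only [hdB] at hdBu; rw [hBcard]; omega)
      intro b hb
      have hb' : b ∈ G.neighborFinset u ∩ B := by rw [heq]; exact hb
      exact (mem_neighborFinset _ _ _).1 (mem_inter.1 hb').1
    have hdAu' : #(G.neighborFinset u ∩ A) = 2 := by simp only [hdA] at hdAu; exact hdAu
    obtain ⟨x1, x2, hx12ne, hXeq⟩ := Finset.card_eq_two.1 hdAu'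
    have hx1m : x1 ∈ G.neighborFinset u ∩ A := hXeq ▸ mem_insert_self _ _
    have hx2m : x2 ∈ G.neighborFinset u ∩ A := by
      rw [hXeq]; exact mem_insert_of_mem (mem_singleton_self _)
    have hx1A : x1 ∈ A := (mem_inter.1 hx1m).2
    have hx2A : x2 ∈ A := (mem_inter.1 hx2m).2
    have hux1 : G.Adj u x1 := (mem_neighborFinset _ _ _).1 (mem_inter.1 hx1m).1
    have hux2 : G.Adj u x2 := (mem_neighborFinset _ _ _).1 (mem_inter.1 hx2m).1
    have hune1 : u ≠ x1 := G.ne_of_adj hux1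
    have hune2 : u ≠ x2 := G.ne_of_adj hux2
    set Outer := A \ {u, x1, x2} with hOuter
    have htsub : ({u, x1, x2} : Finset V) ⊆ A := by
      intro w hw
      rcases mem_insert.1 hw with rfl | hw
      · exact huA
      rcases mem_insert.1 hw with rfl | hw
      · exact hx1A
      · exact (mem_singleton.1 hw) ▸ hx2A
    have htcard : #({u, x1, x2} : Finset V) = 3 := by
      rw [card_insert_of_notMem, card_insert_of_notMem, card_singleton]
      · simp [hx12ne]
      · simp [hune1, hune2]
    have hOcard : #Outer = 5 := by
      rw [hOuter, card_sdiff_of_subset htsub, htcard, hAcard]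
    have hOuterA : Outer ⊆ A := sdiff_subset
    have hOuter_nadj : ∀ a ∈ Outer, ¬ G.Adj u a := by
      intro a ha hadj
      rcases mem_sdiff.1 ha with ⟨haA, hanot⟩
      have : a ∈ G.neighborFinset u ∩ A :=
        mem_inter.2 ⟨(mem_neighborFinset _ _ _).2 hadj, haA⟩
      rw [hXeq] at this
      refine hanot ?_
      rcases mem_insert.1 this with rfl | h
      · exact mem_insert_of_mem (mem_insert_self _ _)
      · exact mem_insert_of_mem (mem_insert_of_mem h)
    have keyO : ∀ a ∈ Outer, 1 ≤ dB a →
        ∀ w ∈ G.neighborFinset a ∩ A, w ∈ ({x1, x2} : Finset V) := by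
      intro a ha hdBa w hw
      by_contra hwnot
      have hdBa' : 0 < #(G.neighborFinset a ∩ B) := by simp only [hdB] at hdBa; omega
      obtain ⟨b, hb⟩ := card_pos.1 hdBa'
      rcases mem_inter.1 hb with ⟨hbn, hbB⟩
      rcases mem_inter.1 hw with ⟨hwn, hwA⟩
      have hub : G.Adj u b := hBfull b hbB
      have hba : G.Adj b a := ((mem_neighborFinset _ _ _).1 hbn).symm
      have haw : G.Adj a w := (mem_neighborFinset _ _ _).1 hwn
      have hau : ¬ G.Adj u a := hOuter_nadj a ha
      have hane : a ≠ u := by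
        intro h
        exact (mem_sdiff.1 ha).2 (h ▸ mem_insert_self _ _)
      have hwu : w ≠ u := by
        intro h
        subst h
        exact hau haw.symm
      have hwb : w ≠ b := by
        intro h
        subst h
        exact (mem_sdiff.1 hbB).2 hwA
      have hbound := free_path_bound hfree hub hba haw hane hwu hwb
      have haN : a ∉ G.neighborFinset u := by
        rw [mem_neighborFinset]; exact hau
      have hwN : w ∉ G.neighborFinset u := by
        intro hwN
        have : w ∈ G.neighborFinset u ∩ A := mem_inter.2 ⟨hwN, hwA⟩
        rw [hXeq] at this
        exact hwnot this
      have h2 := card_le_sdiff_two (s := G.neighborFinset u) (a := b) haN hwN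
      rw [card_neighborFinset_eq_degree, hdegu] at h2
      omega
    set cx := fun a => #(G.neighborFinset a ∩ ({x1, x2} : Finset V)) with hcx
    have hOuterψ : ∀ a ∈ Outer, ψ a ≤ cx a + 12 := by
      intro a ha
      rcases Nat.eq_zero_or_pos (dB a) with h0 | h1
      · have hsub : G.neighborFinset a ∩ A ⊆
            (G.neighborFinset a ∩ ({x1, x2} : Finset V)) ∪ (Outer.erase a) := by
          intro w hw
          rcases mem_inter.1 hw with ⟨hwn, hwA⟩
          by_cases hwx : w ∈ ({x1, x2} : Finset V)
          · exact mem_union_left _ (mem_inter.2 ⟨hwn, hwx⟩)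
          · have hwadj : G.Adj a w := (mem_neighborFinset _ _ _).1 hwn
            have hwne : w ≠ a := (G.ne_of_adj hwadj).symm
            have hwu : w ≠ u := by
              intro h
              subst h
              exact (hOuter_nadj a ha) hwadj.symm
            refine mem_union_right _ (mem_erase.2 ⟨hwne, mem_sdiff.2 ⟨hwA, ?_⟩⟩)
            intro hmem
            rcases mem_insert.1 hmem with rfl | hmem
            · exact hwu rfl
            · exact hwx hmem
        have hce : #(Outer.erase a) = 4 := by
          rw [card_erase_of_mem ha, hOcard]
        have hcard2 : dA a ≤ cx a + 4 := by
          have hc1 := card_le_card hsub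
          have hc2 := card_union_le (G.neighborFinset a ∩ ({x1, x2} : Finset V))
            (Outer.erase a)
          simp only [hdA, hcx]
          omega
        simp only [hψ]
        omega
      · have hsub : G.neighborFinset a ∩ A ⊆
            G.neighborFinset a ∩ ({x1, x2} : Finset V) := by
          intro w hw
          exact mem_inter.2 ⟨(mem_inter.1 hw).1, keyO a ha h1 w hw⟩
        have hc1 : dA a ≤ cx a := card_le_card hsub
        have := hdB6 a
        simp only [hψ]
        omega
    have hxb : ∀ x, x ∈ A → G.Adj u x →
        ψ x + #(Outer.filter (fun a => G.Adj x a)) + 1 ≤ 16 := by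
      intro x hxA hux
      set t1 := Outer.filter (fun a => G.Adj x a) with ht1
      have hsub : insert u t1 ⊆ G.neighborFinset x ∩ A := by
        intro w hw
        rcases mem_insert.1 hw with rfl | hw
        · exact mem_inter.2 ⟨(mem_neighborFinset _ _ _).2 hux.symm, huA⟩
        · rcases mem_filter.1 hw with ⟨hwO, hadj⟩
          exact mem_inter.2 ⟨(mem_neighborFinset _ _ _).2 hadj, hOuterA hwO⟩
      have hut1 : u ∉ t1 := by
        intro h
        exact (mem_sdiff.1 (mem_filter.1 h).1).2 (mem_insert_self _ _)
      have hc1 : #t1 + 1 ≤ dA x := by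
        have := card_le_card hsub
        rw [card_insert_of_notMem hut1] at this
        simp only [hdA]
        omega
      have hc2 : dA x + dB x ≤ 8 := by
        have := hdeg_split x (hAS hxA)
        have := hdegle x (hAS hxA)
        omega
      simp only [hψ, ht1] at *
      omega
    have hx1b := hxb x1 hx1A hux1
    have hx2b := hxb x2 hx2A hux2
    have hsumc : ∑ a ∈ Outer, cx a =
        #(Outer.filter (fun a => G.Adj x1 a)) + #(Outer.filter (fun a => G.Adj x2 a)) := by
      have h1 := double_count (G := G) Outer {x1, x2}
      have h2 : ∀ x : V, G.neighborFinset x ∩ Outer = Outer.filter (fun a => G.Adj x a) := by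
        intro x
        ext w
        simp only [mem_inter, mem_filter, mem_neighborFinset]
        tauto
      rw [hcx]
      rw [h1, Finset.sum_pair hx12ne, h2, h2]
    have hsdiff : ∑ a ∈ Outer, ψ a + ∑ a ∈ ({u, x1, x2} : Finset V), ψ a
        = ∑ a ∈ A, ψ a := by
      rw [hOuter]
      exact Finset.sum_sdiff htsub
    have htriple : ∑ a ∈ ({u, x1, x2} : Finset V), ψ a = ψ u + (ψ x1 + ψ x2) := by
      rw [Finset.sum_insert (by simp [hune1, hune2]),
        Finset.sum_insert (by simp [hx12ne]), Finset.sum_singleton]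
    have hsumOuter : ∑ a ∈ Outer, ψ a ≤ ∑ a ∈ Outer, cx a + 60 := by
      calc ∑ a ∈ Outer, ψ a ≤ ∑ a ∈ Outer, (cx a + 12) := Finset.sum_le_sum hOuterψ
        _ = ∑ a ∈ Outer, cx a + 60 := by
            rw [Finset.sum_add_distrib, Finset.sum_const, hOcard]; rfl
    rw [hSS]
    omega

/-- small component bound -/
lemma comp_bound_small {S : Finset V}
    (hcl : ∀ v ∈ S, ∀ w, G.Adj v w → w ∈ S)
    (hne : S.Nonempty) (h10 : S.card ≤ 10) :
    ∑ u ∈ S, G.degree u + dfn S.card ≤ 9 * S.card := by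
  classical
  have hdeg : ∀ u ∈ S, G.degree u ≤ S.card - 1 := by
    intro u hu
    have hsub : G.neighborFinset u ⊆ S.erase u := by
      intro w hw
      have hadj : G.Adj u w := (mem_neighborFinset _ _ _).1 hw
      exact mem_erase.2 ⟨(G.ne_of_adj hadj).symm, hcl u hu w hadj⟩
    rw [← card_neighborFinset_eq_degree]
    calc #(G.neighborFinset u) ≤ #(S.erase u) := card_le_card hsub
      _ = #S - 1 := card_erase_of_mem hu
  have hSig : ∑ u ∈ S, G.degree u ≤ #S * (#S - 1) := by
    have := Finset.sum_le_card_nsmul S (fun u => G.degree u) (#S - 1) hdeg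
    rw [smul_eq_mul] at this
    omega
  have h1 : 1 ≤ #S := card_pos.2 hne
  have := dfn_small h1 h10
  omega

/-- full component bound -/
lemma comp_bound (hfree : ¬ ContainsCopy G (TnStar 11)) {S : Finset V}
    (hcl : ∀ v ∈ S, ∀ w, G.Adj v w → w ∈ S)
    (hconn : ∀ v ∈ S, ∀ w ∈ S, G.Reachable v w)
    (hne : S.Nonempty) :
    ∑ u ∈ S, G.degree u + dfn S.card ≤ 9 * S.card := by
  classical
  rcases le_or_gt S.card 10 with h10 | h11
  · exact comp_bound_small hcl hne h10
  · by_cases hd10 : ∃ u ∈ S, 10 ≤ G.degree u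
    · obtain ⟨v, hv, hdv⟩ := hd10
      have hb := comp_bound_ge10 hfree hcl hconn hv hdv
      have := dfn_le_25 S.card
      omega
    · push_neg at hd10
      have hle9 : ∀ u ∈ S, G.degree u ≤ 9 := fun u hu => by
        have := hd10 u hu; omega
      by_cases hd9 : ∃ u ∈ S, G.degree u = 9
      · obtain ⟨v, hv, hdv⟩ := hd9
        have hb := comp_bound_eq9 hfree hcl hconn hle9 hv hdv (by omega)
        have := dfn_7n (n := S.card) (by omega)
        omega
      · push_neg at hd9
        have hle8 : ∀ u ∈ S, G.degree u ≤ 8 := fun u hu => by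
          have h1 := hle9 u hu; have h2 := hd9 u hu; omega
        by_cases hd8 : ∃ u ∈ S, G.degree u = 8
        · obtain ⟨v, hv, hdv⟩ := hd8
          have hbig := comp_bound_le8_big hfree hcl hconn hle8 hv hdv
          have h8n : ∑ u ∈ S, G.degree u ≤ 8 * S.card := by
            calc ∑ u ∈ S, G.degree u ≤ #S • 8 := Finset.sum_le_card_nsmul _ _ _ hle8
              _ = 8 * S.card := by rw [smul_eq_mul, mul_comm]
          rcases le_or_gt 17 S.card with h17 | h17
          · rw [dfn_ge17 h17]; omega
          · rcases eq_or_ne S.card 14 with h14 | h14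
            · have hb14 := comp_bound_le8_14 hfree hcl hconn hle8 hv hdv h14
              rw [h14, dfn14]
              omega
            · rw [dfn_mid (by omega) (by omega) h14]
              omega
        · push_neg at hd8
          have hle7 : ∀ u ∈ S, G.degree u ≤ 7 := fun u hu => by
            have h1 := hle8 u hu; have h2 := hd8 u hu; omega
          have h7n : ∑ u ∈ S, G.degree u ≤ 7 * S.card := by
            calc ∑ u ∈ S, G.degree u ≤ #S • 7 := Finset.sum_le_card_nsmul _ _ _ hle7
              _ = 7 * S.card := by rw [smul_eq_mul, mul_comm]
          have := dfn_7n' (n := S.card) (by omega)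
          omega

/-- The global upper bound. -/
lemma upper_bound (p : ℕ) (hp : 11 ≤ p) (hmod : p % 10 = 4)
    (G : SimpleGraph (Fin p)) (hfree : ¬ ContainsCopy G (TnStar 11)) :
    Nat.card G.edgeSet ≤ (9 * p - 22) / 2 := by
  classical
  letI : DecidableRel G.Adj := Classical.decRel _
  set cset := (univ : Finset (Fin p)).image G.connectedComponentMk with hcset
  set Sf : G.ConnectedComponent → Finset (Fin p) :=
    fun c => univ.filter (fun v => G.connectedComponentMk v = c) with hSf
  have hmaps : ∀ v : Fin p, v ∈ (univ : Finset (Fin p)) →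
      G.connectedComponentMk v ∈ cset := by
    intro v _
    exact mem_image_of_mem _ (mem_univ v)
  have hsum : ∑ c ∈ cset, ∑ v ∈ Sf c, G.degree v = ∑ v, G.degree v :=
    Finset.sum_fiberwise_of_maps_to hmaps _
  have hcards : ∑ c ∈ cset, (Sf c).card = p := by
    have := Finset.card_eq_sum_card_fiberwise hmaps
    rw [card_univ, Fintype.card_fin] at this
    exact this.symm
  have hfib : ∀ c ∈ cset, (Sf c).Nonempty := by
    intro c hc
    obtain ⟨v, _, hv⟩ := mem_image.1 hc
    exact ⟨v, by simp [hSf, hv]⟩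
  have hcomp : ∀ c ∈ cset,
      ∑ v ∈ Sf c, G.degree v + dfn (Sf c).card ≤ 9 * (Sf c).card := by
    intro c hc
    refine comp_bound hfree ?_ ?_ (hfib c hc)
    · intro v hv w hadj
      have hv' : G.connectedComponentMk v = c := (mem_filter.1 hv).2
      have : G.connectedComponentMk w = G.connectedComponentMk v :=
        ConnectedComponent.sound hadj.symm.reachable
      simp [hSf, this, hv']
    · intro v hv w hw
      have hv' : G.connectedComponentMk v = c := (mem_filter.1 hv).2
      have hw' : G.connectedComponentMk w = c := (mem_filter.1 hw).2
      exact ConnectedComponent.eq.1 (hv'.trans hw'.symm)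
  have hNL : 22 ≤ ∑ c ∈ cset, dfn ((Sf c).card) := by
    refine numberLemma cset (fun c => (Sf c).card) ?_ ?_
    · intro c hc
      exact card_pos.2 (hfib c hc)
    · rw [hcards]; exact hmod
  have hsum9 : ∑ c ∈ cset, (∑ v ∈ Sf c, G.degree v + dfn (Sf c).card)
      ≤ ∑ c ∈ cset, 9 * (Sf c).card := Finset.sum_le_sum hcomp
  have hsplit : ∑ c ∈ cset, (∑ v ∈ Sf c, G.degree v + dfn (Sf c).card)
      = ∑ c ∈ cset, ∑ v ∈ Sf c, G.degree v + ∑ c ∈ cset, dfn (Sf c).card :=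
    Finset.sum_add_distrib
  have hmul : ∑ c ∈ cset, 9 * (Sf c).card = 9 * p := by
    rw [← Finset.mul_sum, hcards]
  have hdeg : ∑ v, G.degree v + 22 ≤ 9 * p := by omega
  rw [SimpleGraph.sum_degrees_eq_twice_card_edges] at hdeg
  have hcardeq : Nat.card G.edgeSet = G.edgeFinset.card := by
    rw [Nat.card_eq_fintype_card, SimpleGraph.edgeFinset_card]
  omega

/-- vertex type of the extremal construction: `k` copies of `K₁₀` plus a
14-vertex component. -/
abbrev CV (k : ℕ) := (Fin k × Fin 10) ⊕ (Fin 14)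

/-- adjacency in the 14-vertex component: complete bipartite `K_{8,6}`
(`A = {0..7}`, `B = {8..13}`) together with a perfect matching on `A`. -/
def r14 (a b : Fin 14) : Prop :=
  (a.val < 8 ∧ 8 ≤ b.val) ∨ (b.val < 8 ∧ 8 ≤ a.val) ∨
    (a.val < 8 ∧ b.val < 8 ∧ a.val / 2 = b.val / 2 ∧ a ≠ b)

instance : DecidableRel r14 := fun a b => by unfold r14; infer_instance

/-- the extremal graph -/
def cG (k : ℕ) : SimpleGraph (CV k) where
  Adj x y :=
    match x, y with
    | .inl a, .inl b => a.1 = b.1 ∧ a.2 ≠ b.2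
    | .inr a, .inr b => r14 a b
    | _, _ => False
  symm := by
    constructor
    rintro (a | a) (b | b) h
    · exact ⟨h.1.symm, h.2.symm⟩
    · exact h.elim
    · exact h.elim
    · unfold r14 at h ⊢
      rcases h with h | h | ⟨h1, h2, h3, h4⟩
      · exact Or.inr (Or.inl h)
      · exact Or.inl h
      · exact Or.inr (Or.inr ⟨h2, h1, h3.symm, h4.symm⟩)
  loopless := by
    constructor
    rintro (a | a) h
    · exact h.2 rfl
    · unfold r14 at h
      rcases h with h | h | ⟨h1, h2, h3, h4⟩
      · omega
      · omega
      · exact h4 rfl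

instance (k : ℕ) : DecidableRel (cG k).Adj := fun x y => by
  rcases x with a | a <;> rcases y with b | b <;>
    simp only [cG] <;> infer_instance

lemma cG_inl_inr (k : ℕ) (a : Fin k × Fin 10) (b : Fin 14) :
    ¬ (cG k).Adj (.inl a) (.inr b) := fun h => h

lemma cG_inr_inl (k : ℕ) (a : Fin 14) (b : Fin k × Fin 10) :
    ¬ (cG k).Adj (.inr a) (.inl b) := fun h => h

lemma cG_inl_iff (k : ℕ) (a b : Fin k × Fin 10) :
    (cG k).Adj (.inl a) (.inl b) ↔ a.1 = b.1 ∧ a.2 ≠ b.2 := Iff.rfl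

lemma cG_inr_iff (k : ℕ) (a b : Fin 14) :
    (cG k).Adj (.inr a) (.inr b) ↔ r14 a b := Iff.rfl



lemma neighborFinset_inl (k : ℕ) (b : Fin k) (i : Fin 10) :
    (cG k).neighborFinset (.inl (b, i)) =
      ((univ.erase i).map ⟨fun j => Sum.inl (b, j), fun x y h => by simpa using h⟩) := by
  ext w
  rcases w with ⟨b', j⟩ | a
  · rw [mem_neighborFinset, cG_inl_iff]
    simp only [Finset.mem_map, Finset.mem_erase, Function.Embedding.coeFn_mk, mem_univ,
      and_true, Sum.inl.injEq, Prod.mk.injEq]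
    constructor
    · rintro ⟨hb, hij⟩
      exact ⟨j, fun h => hij h.symm, by subst hb; rfl⟩
    · rintro ⟨j', hj', hfeq⟩
      have hfeq' : (Sum.inl (b, j') : CV k) = Sum.inl (b', j) := hfeq
      simp only [Sum.inl.injEq, Prod.mk.injEq] at hfeq'
      obtain ⟨hb, hj⟩ := hfeq'
      refine ⟨hb, fun h => hj' ?_⟩
      rw [hj, ← h]
  · simp only [mem_neighborFinset, Finset.mem_map]
    constructor
    · intro h; exact (cG_inr_inl k _ _ h.symm).elim
    · rintro ⟨j', -, heq⟩
      exact absurd heq (by simp)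



lemma deg_inl (k : ℕ) (b : Fin k) (i : Fin 10) : (cG k).degree (.inl (b, i)) = 9 := by
  rw [← card_neighborFinset_eq_degree, neighborFinset_inl, Finset.card_map,
    Finset.card_erase_of_mem (mem_univ i), card_univ]
  rfl

lemma neighborFinset_inr (k : ℕ) (a : Fin 14) :
    (cG k).neighborFinset (.inr a) =
      (univ.filter (fun b => r14 a b)).map ⟨Sum.inr, Sum.inr_injective⟩ := by
  ext w
  rcases w with ⟨b', j⟩ | a'
  · simp only [mem_neighborFinset, Finset.mem_map]
    constructor
    · intro h; exact (cG_inr_inl k _ _ h).elim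
    · rintro ⟨j', -, heq⟩
      exact absurd heq (by simp)
  · rw [mem_neighborFinset, cG_inr_iff]
    simp only [Finset.mem_map, Finset.mem_filter, mem_univ, true_and,
      Function.Embedding.coeFn_mk, Sum.inr.injEq]
    constructor
    · intro h; exact ⟨a', h, rfl⟩
    · rintro ⟨b, hb, rfl⟩; exact hb

lemma deg_inr (k : ℕ) (a : Fin 14) :
    (cG k).degree (.inr a) = if a.val < 8 then 7 else 8 := by
  rw [← card_neighborFinset_eq_degree, neighborFinset_inr, Finset.card_map]
  revert a
  decide

lemma sum_deg (k : ℕ) : ∑ v : CV k, (cG k).degree v = 90 * k + 104 := by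
  rw [Fintype.sum_sum_type]
  have h1 : ∑ x : Fin k × Fin 10, (cG k).degree (.inl x) = 90 * k := by
    have heq : ∀ x : Fin k × Fin 10, (cG k).degree (.inl x) = 9 := fun ⟨b, i⟩ => deg_inl k b i
    rw [Finset.sum_congr rfl (fun x _ => heq x), Finset.sum_const, card_univ,
      Fintype.card_prod, Fintype.card_fin, Fintype.card_fin, smul_eq_mul]
    ring
  have h2 : ∑ a : Fin 14, (cG k).degree (.inr a) = 104 := by
    rw [Finset.sum_congr rfl (fun a _ => deg_inr k a)]
    decide
  rw [h1, h2]

lemma edge_count (k : ℕ) : (cG k).edgeFinset.card = 45 * k + 52 := by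
  have h := SimpleGraph.sum_degrees_eq_twice_card_edges (cG k)
  rw [sum_deg] at h
  omega

lemma tnstar_adj_left {i : Fin 11} (h1 : 1 ≤ i.val) (h8 : i.val ≤ 8) :
    (TnStar 11).Adj 0 i := by
  rw [TnStar, SimpleGraph.fromRel_adj]
  constructor
  · intro h
    rw [Fin.ext_iff] at h
    simp only [Fin.val_zero] at h
    omega
  · exact Or.inl (Or.inl ⟨rfl, h1, by omega⟩)

lemma tnstar_adj_89 : (TnStar 11).Adj 8 9 := by
  rw [TnStar, SimpleGraph.fromRel_adj]
  exact ⟨by decide, Or.inl (Or.inr (Or.inl (by decide)))⟩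

lemma tnstar_adj_910 : (TnStar 11).Adj 9 10 := by
  rw [TnStar, SimpleGraph.fromRel_adj]
  exact ⟨by decide, Or.inl (Or.inr (Or.inr (by decide)))⟩

lemma cfree (k : ℕ) : ¬ ContainsCopy (cG k) (TnStar 11) := by
  rintro ⟨f, hf⟩
  have hadj : ∀ i : Fin 11, 1 ≤ i.val → i.val ≤ 8 → (cG k).Adj (f 0) (f i) :=
    fun i h1 h8 => hf 0 i (tnstar_adj_left h1 h8)
  have h89 : (cG k).Adj (f 8) (f 9) := hf 8 9 tnstar_adj_89
  have h910 : (cG k).Adj (f 9) (f 10) := hf 9 10 tnstar_adj_910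
  rcases hv : f 0 with ⟨b, i⟩ | a
  · -- the image lies in one K₁₀ block: impossible since 11 > 10
    set Bl : Finset (CV k) :=
      univ.map ⟨fun j : Fin 10 => Sum.inl (b, j), fun x y h => by simpa using h⟩ with hBl
    have hBl10 : Bl.card = 10 := by simp [hBl]
    have hblock : ∀ (j : Fin 10) w, (cG k).Adj (.inl (b, j)) w → w ∈ Bl := by
      intro j w hw
      rcases w with ⟨b', j'⟩ | a'
      · have hb : b = b' := hw.1
        subst hb
        simp [hBl]
        exact ⟨j', rfl⟩
      · exact (cG_inl_inr k _ _ hw).elim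
    have hm18 : ∀ i' : Fin 11, 1 ≤ i'.val → i'.val ≤ 8 → f i' ∈ Bl := by
      intro i' h1 h8
      have h := hadj i' h1 h8
      rw [hv] at h
      exact hblock i (f i') h
    have hm8 : ∃ j8 : Fin 10, f 8 = .inl (b, j8) := by
      have := hm18 8 (by decide) (by decide)
      rw [hBl] at this
      simp only [Finset.mem_map, Function.Embedding.coeFn_mk, mem_univ, true_and] at this
      obtain ⟨j8, hj8⟩ := this
      exact ⟨j8, hj8.symm⟩
    obtain ⟨j8, hj8⟩ := hm8
    have hm9 : f 9 ∈ Bl := by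
      rw [hj8] at h89
      exact hblock j8 (f 9) h89
    have hm9' : ∃ j9 : Fin 10, f 9 = .inl (b, j9) := by
      rw [hBl] at hm9
      simp only [Finset.mem_map, Function.Embedding.coeFn_mk, mem_univ, true_and] at hm9
      obtain ⟨j9, hj9⟩ := hm9
      exact ⟨j9, hj9.symm⟩
    obtain ⟨j9, hj9⟩ := hm9'
    have hm10 : f 10 ∈ Bl := by
      rw [hj9] at h910
      exact hblock j9 (f 10) h910
    have hmem : ∀ i' : Fin 11, f i' ∈ Bl := by
      intro i'
      by_cases h0 : i' = 0
      · subst h0; rw [hv]; simp [hBl]; exact ⟨i, rfl⟩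
      rcases le_or_gt i'.val 8 with h8 | h8
      · refine hm18 i' ?_ h8
        rcases Nat.eq_zero_or_pos i'.val with h | h
        · exact absurd (Fin.ext h) h0
        · exact h
      · have : i'.val = 9 ∨ i'.val = 10 := by omega
        rcases this with h | h
        · have : i' = 9 := Fin.ext h
          rw [this, hj9]
          simp [hBl]
          exact ⟨j9, rfl⟩
        · have : i' = 10 := Fin.ext h
          rw [this]
          exact hm10
    have hcard := Finset.card_le_card_of_injOn (s := (univ : Finset (Fin 11))) (t := Bl) f
      (fun x _ => hmem x) f.injective.injOn
    rw [card_univ, Fintype.card_fin, hBl10] at hcard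
    omega
  · -- the image is in the 14-vertex component
    have h8nb : ∀ i' : Fin 11, 1 ≤ i'.val → i'.val ≤ 8 →
        f i' ∈ (cG k).neighborFinset (.inr a) := by
      intro i' h1 h8
      rw [mem_neighborFinset, ← hv]
      exact hadj i' h1 h8
    set Idx : Finset (Fin 11) := univ.filter (fun i' : Fin 11 => 1 ≤ i'.val ∧ i'.val ≤ 8)
      with hIdx
    have hIdxcard : Idx.card = 8 := by rw [hIdx]; decide
    have hsub : ∀ x ∈ Idx, f x ∈ (cG k).neighborFinset (.inr a) := by
      intro x hx
      rcases Finset.mem_filter.1 hx with ⟨-, h1, h8⟩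
      exact h8nb x h1 h8
    have hge8 := Finset.card_le_card_of_injOn f hsub f.injective.injOn
    rw [hIdxcard, card_neighborFinset_eq_degree, deg_inr] at hge8
    by_cases ha8 : a.val < 8
    · rw [if_pos ha8] at hge8
      omega
    · rw [if_neg ha8] at hge8
      -- the 8 images fill up the whole neighborhood
      set T : Finset (CV k) := Idx.image f with hT
      have hTcard : T.card = 8 := by
        rw [hT, Finset.card_image_of_injOn f.injective.injOn, hIdxcard]
      have hTsub : T ⊆ (cG k).neighborFinset (.inr a) := by
        intro w hw
        rcases Finset.mem_image.1 hw with ⟨x, hx, rfl⟩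
        exact hsub x hx
      have hTN : T = (cG k).neighborFinset (.inr a) := by
        refine Finset.eq_of_subset_of_card_le hTsub ?_
        rw [hTcard, card_neighborFinset_eq_degree, deg_inr, if_neg ha8]
      have hNT : ∀ w, (cG k).Adj (.inr a) w → w ∈ T := by
        intro w hw
        rw [hTN, mem_neighborFinset]
        exact hw
      have hinj9 : ∀ w ∈ T, w ≠ f 9 := by
        intro w hw hne
        rcases Finset.mem_image.1 hw with ⟨x, hx, hfx⟩
        have : x = 9 := f.injective (hfx.trans hne ▸ rfl)
        subst this
        rcases Finset.mem_filter.1 hx with ⟨-, -, h8⟩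
        exact absurd h8 (by decide)
      have hinj10 : ∀ w ∈ T, w ≠ f 10 := by
        intro w hw hne
        rcases Finset.mem_image.1 hw with ⟨x, hx, hfx⟩
        have : x = 10 := f.injective (hfx.trans hne ▸ rfl)
        subst this
        rcases Finset.mem_filter.1 hx with ⟨-, -, h8⟩
        exact absurd h8 (by decide)
      -- f 8 is an A-side vertex
      have hf8T : f 8 ∈ T := by
        rw [hT]
        refine Finset.mem_image.2 ⟨8, ?_, rfl⟩
        rw [hIdx]; simp only [Finset.mem_filter, mem_univ, true_and]; decide
      have hf8N : f 8 ∈ (cG k).neighborFinset (.inr a) := hTsub hf8T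
      rcases hf8v : f 8 with x8 | a8
      · rw [hf8v, mem_neighborFinset] at hf8N
        exact (cG_inr_inl k a x8 hf8N).elim
      · rw [hf8v, mem_neighborFinset, cG_inr_iff] at hf8N
        have ha8lt : a8.val < 8 := by
          rcases hf8N with h | h | h <;> omega
        -- f 9
        rw [hf8v] at h89
        rcases hf9v : f 9 with x9 | a9
        · rw [hf9v] at h89
          exact (cG_inl_inr k _ _ h89.symm).elim
        · rw [hf9v] at h89
          rw [cG_inr_iff] at h89
          have ha9 : 8 ≤ a9.val ∨ (a9.val < 8) := by omega
          by_cases ha9lt : a9.val < 8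
          · -- then f 9 would be a neighbor of inr a, i.e. in T
            have : (cG k).Adj (.inr a) (.inr a9) := by
              rw [cG_inr_iff]
              exact Or.inr (Or.inl ⟨ha9lt, by omega⟩)
            have h9T : f 9 ∈ T := by
              rw [hf9v]
              exact hNT _ this
            exact hinj9 (f 9) (hf9v ▸ h9T) rfl
          · -- a9 is a B-side vertex, so f 10 is A-side, in T : contradiction
            rw [hf9v] at h910
            rcases hf10v : f 10 with x10 | a10
            · rw [hf10v] at h910
              exact (cG_inl_inr k _ _ h910.symm).elim
            · rw [hf10v] at h910
              rw [cG_inr_iff] at h910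
              have ha10 : a10.val < 8 := by
                rcases h910 with h | h | h <;> omega
              have : (cG k).Adj (.inr a) (.inr a10) := by
                rw [cG_inr_iff]
                exact Or.inr (Or.inl ⟨ha10, by omega⟩)
              have h10T : f 10 ∈ T := hNT _ (hf10v ▸ this)
              exact hinj10 _ h10T rfl
  
lemma lower_bound (p : ℕ) (hp : 11 ≤ p) (hmod : p % 10 = 4) :
    ∃ G : SimpleGraph (Fin p), ¬ ContainsCopy G (TnStar 11) ∧
      Nat.card G.edgeSet = (9 * p - 22) / 2 := by
  classical
  set k := p / 10 - 1 with hk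
  have hpk : p = 10 * k + 14 := by omega
  have hcard : Fintype.card (CV k) = p := by
    simp only [CV, Fintype.card_sum, Fintype.card_prod, Fintype.card_fin]
    omega
  let e : CV k ≃ Fin p := Fintype.equivFinOfCardEq hcard
  let G0 : SimpleGraph (Fin p) :=
    { Adj := fun x y => (cG k).Adj (e.symm x) (e.symm y)
      symm := ⟨fun x y h => (cG k).adj_symm h⟩
      loopless := ⟨fun x h => (cG k).irrefl h⟩ }
  let iso : cG k ≃g G0 :=
    { toEquiv := e
      map_rel_iff' := by
        intro a b
        show (cG k).Adj (e.symm (e a)) (e.symm (e b)) ↔ (cG k).Adj a b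
        rw [e.symm_apply_apply, e.symm_apply_apply] }
  refine ⟨G0, ?_, ?_⟩
  · rintro ⟨f, hfcopy⟩
    exact cfree k ⟨f.trans e.symm.toEmbedding, fun a b h => hfcopy a b h⟩
  · have h1 : Nat.card G0.edgeSet = Nat.card (cG k).edgeSet :=
      (Nat.card_congr iso.mapEdgeSet).symm
    have h2 : Nat.card (cG k).edgeSet = (cG k).edgeFinset.card := by
      rw [Nat.card_eq_fintype_card, SimpleGraph.edgeFinset_card]
    rw [h1, h2, edge_count]
    omega


end Stmt18

theorem stmt18 (p : ℕ) (hp : 11 ≤ p) (hmod : p % 10 = 4) :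
    exNum p (TnStar 11) = (9 * p - 22) / 2 := by
  obtain ⟨G0, hG0f, hG0c⟩ := Stmt18.lower_bound p hp hmod
  have hmem : (9 * p - 22) / 2 ∈
      {m : ℕ | ∃ G : SimpleGraph (Fin p), ¬ ContainsCopy G (TnStar 11) ∧
        Nat.card G.edgeSet = m} := ⟨G0, hG0f, hG0c⟩
  have hub : ∀ m ∈ {m : ℕ | ∃ G : SimpleGraph (Fin p), ¬ ContainsCopy G (TnStar 11) ∧
      Nat.card G.edgeSet = m}, m ≤ (9 * p - 22) / 2 := by
    rintro m ⟨G, hf, rfl⟩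
    exact Stmt18.upper_bound p hp hmod G hf
  exact le_antisymm (csSup_le ⟨_, hmem⟩ hub) (le_csSup ⟨_, hub⟩ hmem)
end

section
/- Let p ≥ n with n ∈ {6,7} and let r ∈ {0,…,n−2} satisfy p ≡ r (mod n−1). Then ex(p;T_n*) = ((n−2)p − r(n−1−r))/2. -/
open SimpleGraph

/-- The conjectured extremal bound. -/
def fB (n p : ℕ) : ℕ := ((n-2)*p - (p % (n-1)) * ((n-1) - p % (n-1))) / 2

lemma fB6 (p : ℕ) : fB 6 p = (4*p - (p % 5) * (5 - p % 5)) / 2 := rfl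
lemma fB7 (p : ℕ) : fB 7 p = (5*p - (p % 6) * (6 - p % 6)) / 2 := rfl

lemma fB_small (n : ℕ) (hn : n = 6 ∨ n = 7) (p : ℕ) (h : p ≤ n - 1) :
    fB n p = p*(p-1)/2 := by
  rcases hn with rfl | rfl
  · rw [fB6]
    rcases Nat.lt_or_ge p 5 with h5 | h5
    · rw [Nat.mod_eq_of_lt h5]; interval_cases p <;> rfl
    · have : p = 5 := by omega
      subst this; rfl
  · rw [fB7]
    rcases Nat.lt_or_ge p 6 with h5 | h5
    · rw [Nat.mod_eq_of_lt h5]; interval_cases p <;> rfl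
    · have : p = 6 := by omega
      subst this; rfl

lemma fB_superadd (n : ℕ) (hn : n = 6 ∨ n = 7) (a b : ℕ) :
    fB n a + fB n b ≤ fB n (a + b) := by
  rcases hn with rfl | rfl
  · obtain ⟨qa, ra, hra, rfl⟩ : ∃ q r, r < 5 ∧ a = 5*q + r := ⟨a/5, a%5, by omega, by omega⟩
    obtain ⟨qb, rb, hrb, rfl⟩ : ∃ q r, r < 5 ∧ b = 5*q + r := ⟨b/5, b%5, by omega, by omega⟩
    simp only [fB6]
    have h1 : (5*qa + ra) % 5 = ra := by omega
    have h2 : (5*qb + rb) % 5 = rb := by omega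
    have h3 : (5*qa + ra + (5*qb + rb)) % 5 = (ra + rb) % 5 := by omega
    rw [h1, h2, h3]
    interval_cases ra <;> interval_cases rb <;> omega
  · obtain ⟨qa, ra, hra, rfl⟩ : ∃ q r, r < 6 ∧ a = 6*q + r := ⟨a/6, a%6, by omega, by omega⟩
    obtain ⟨qb, rb, hrb, rfl⟩ : ∃ q r, r < 6 ∧ b = 6*q + r := ⟨b/6, b%6, by omega, by omega⟩
    simp only [fB7]
    have h1 : (6*qa + ra) % 6 = ra := by omega
    have h2 : (6*qb + rb) % 6 = rb := by omega
    have h3 : (6*qa + ra + (6*qb + rb)) % 6 = (ra + rb) % 6 := by omega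
    rw [h1, h2, h3]
    interval_cases ra <;> interval_cases rb <;> omega

lemma fB_step_zero (n : ℕ) (hn : n = 6 ∨ n = 7) (p : ℕ) (h0 : p % (n-1) = 0) (h1 : 1 ≤ p) :
    fB n p = fB n (p-1) + (n-2) := by
  rcases hn with rfl | rfl
  · obtain ⟨q, rfl⟩ : ∃ q, p = 5*q := ⟨p/5, by omega⟩
    simp only [fB6]
    have hq : 1 ≤ q := by omega
    have e1 : (5*q) % 5 = 0 := by omega
    have e2 : (5*q - 1) % 5 = 4 := by omega
    rw [e1, e2]; omega
  · obtain ⟨q, rfl⟩ : ∃ q, p = 6*q := ⟨p/6, by omega⟩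
    simp only [fB7]
    have hq : 1 ≤ q := by omega
    have e1 : (6*q) % 6 = 0 := by omega
    have e2 : (6*q - 1) % 6 = 5 := by omega
    rw [e1, e2]; omega

lemma fB_step_pos (n : ℕ) (hn : n = 6 ∨ n = 7) (p : ℕ) (h0 : p % (n-1) ≠ 0) :
    fB n p = fB n (p-1) + (p % (n-1) - 1) := by
  rcases hn with rfl | rfl
  · obtain ⟨q, r, hr1, hr5, rfl⟩ : ∃ q r, 1 ≤ r ∧ r < 5 ∧ p = 5*q + r :=
      ⟨p/5, p%5, by omega, by omega, by omega⟩
    simp only [fB6]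
    have e1 : (5*q + r) % 5 = r := by omega
    have e2 : (5*q + r - 1) % 5 = r - 1 := by omega
    rw [e1, e2]
    interval_cases r <;> omega
  · obtain ⟨q, r, hr1, hr5, rfl⟩ : ∃ q r, 1 ≤ r ∧ r < 6 ∧ p = 6*q + r :=
      ⟨p/6, p%6, by omega, by omega, by omega⟩
    simp only [fB7]
    have e1 : (6*q + r) % 6 = r := by omega
    have e2 : (6*q + r - 1) % 6 = r - 1 := by omega
    rw [e1, e2]
    interval_cases r <;> omega

lemma fB_star_case (n : ℕ) (hn : n = 6 ∨ n = 7) (p : ℕ) (h : 3 ≤ p) :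
    (p - 1) + (p-1)/2 ≤ fB n p := by
  rcases hn with rfl | rfl
  · obtain ⟨q, r, hr, rfl⟩ : ∃ q r, r < 5 ∧ p = 5*q + r := ⟨p/5, p%5, by omega, by omega⟩
    simp only [fB6]
    have e1 : (5*q + r) % 5 = r := by omega
    rw [e1]; interval_cases r <;> omega
  · obtain ⟨q, r, hr, rfl⟩ : ∃ q r, r < 6 ∧ p = 6*q + r := ⟨p/6, p%6, by omega, by omega⟩
    simp only [fB7]
    have e1 : (6*q + r) % 6 = r := by omega
    rw [e1]; interval_cases r <;> omega

lemma fB_pendant_case (n : ℕ) (hn : n = 6 ∨ n = 7) (p : ℕ) (h : n ≤ p) :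
    (n-2) + (n-3)*(n-4)/2 + (p - (n-1)) ≤ fB n p := by
  rcases hn with rfl | rfl
  · obtain ⟨q, r, hr, rfl⟩ : ∃ q r, r < 5 ∧ p = 5*q + r := ⟨p/5, p%5, by omega, by omega⟩
    simp only [fB6]
    have e1 : (5*q + r) % 5 = r := by omega
    rw [e1]; interval_cases r <;> omega
  · obtain ⟨q, r, hr, rfl⟩ : ∃ q r, r < 6 ∧ p = 6*q + r := ⟨p/6, p%6, by omega, by omega⟩
    simp only [fB7]
    have e1 : (6*q + r) % 6 = r := by omega
    rw [e1]; interval_cases r <;> omega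

lemma fB_lowdeg_case (n : ℕ) (hn : n = 6 ∨ n = 7) (p : ℕ) (h : n ≤ p) :
    (n-3)*p/2 ≤ fB n p := by
  rcases hn with rfl | rfl
  · obtain ⟨q, r, hr, rfl⟩ : ∃ q r, r < 5 ∧ p = 5*q + r := ⟨p/5, p%5, by omega, by omega⟩
    simp only [fB6]
    have e1 : (5*q + r) % 5 = r := by omega
    rw [e1]; interval_cases r <;> omega
  · obtain ⟨q, r, hr, rfl⟩ : ∃ q r, r < 6 ∧ p = 6*q + r := ⟨p/6, p%6, by omega, by omega⟩
    simp only [fB7]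
    have e1 : (6*q + r) % 6 = r := by omega
    rw [e1]; interval_cases r <;> omega

lemma fB_construction (n : ℕ) (hn : n = 6 ∨ n = 7) (p : ℕ) :
    2 * fB n p = (n-1)*(p/(n-1))*(n-2) + (p % (n-1))*(p % (n-1) - 1) := by
  rcases hn with rfl | rfl
  · obtain ⟨q, r, hr, rfl⟩ : ∃ q r, r < 5 ∧ p = 5*q + r := ⟨p/5, p%5, by omega, by omega⟩
    simp only [fB6]
    have e1 : (5*q + r) % 5 = r := by omega
    have e2 : (5*q + r) / 5 = q := by omega
    rw [e1, e2]; interval_cases r <;> omega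
  · obtain ⟨q, r, hr, rfl⟩ : ∃ q r, r < 6 ∧ p = 6*q + r := ⟨p/6, p%6, by omega, by omega⟩
    simp only [fB7]
    have e1 : (6*q + r) % 6 = r := by omega
    have e2 : (6*q + r) / 6 = q := by omega
    rw [e1, e2]; interval_cases r <;> omega

lemma fB_rhs (n : ℕ) (hn : n = 6 ∨ n = 7) (p r : ℕ) (hmod : p % (n - 1) = r) :
    fB n p = ((n - 2) * p - r * (n - 1 - r)) / 2 := by
  subst hmod; rfl

open Finset

variable {V : Type*} [DecidableEq V]

open Classical in
/-- Number of neighbours of `v` inside `s`. -/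
noncomputable def degIn (G : SimpleGraph V) (s : Finset V) (v : V) : ℕ :=
  (s.filter (fun w => G.Adj v w)).card

open Classical in
/-- The edges of `G` with both endpoints in `s`. -/
noncomputable def ein (G : SimpleGraph V) (s : Finset V) : Finset (Sym2 V) :=
  s.sym2.filter (fun e => e ∈ G.edgeSet)

lemma mem_ein_iff (G : SimpleGraph V) (s : Finset V) (a b : V) :
    s(a,b) ∈ ein G s ↔ G.Adj a b ∧ a ∈ s ∧ b ∈ s := by
  classical
  simp only [ein, Finset.mem_filter, Finset.mk_mem_sym2_iff, SimpleGraph.mem_edgeSet]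
  tauto

lemma degIn_eq_card_filter (G : SimpleGraph V) (s : Finset V) (v : V)
    [DecidablePred (fun w => G.Adj v w)] :
    degIn G s v = (s.filter (fun w => G.Adj v w)).card := by
  simp [degIn]; congr 1; exact Finset.filter_congr_decidable ..

lemma degIn_mono (G : SimpleGraph V) {s t : Finset V} (h : s ⊆ t) (v : V) :
    degIn G s v ≤ degIn G t v := by
  classical
  simp only [degIn]
  exact Finset.card_le_card (Finset.filter_subset_filter _ h)

lemma degIn_le (G : SimpleGraph V) (s : Finset V) (v : V) (hv : v ∈ s) :
    degIn G s v ≤ s.card - 1 := by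
  classical
  simp only [degIn]
  have h1 : s.filter (fun w => G.Adj v w) ⊆ s.erase v := by
    intro w hw
    simp only [Finset.mem_filter] at hw
    exact Finset.mem_erase.2 ⟨(G.ne_of_adj hw.2).symm, hw.1⟩
  calc (s.filter (fun w => G.Adj v w)).card ≤ (s.erase v).card := Finset.card_le_card h1
    _ = s.card - 1 := Finset.card_erase_of_mem hv

lemma card_ein_insert (G : SimpleGraph V) {v : V} {t : Finset V} (hv : v ∉ t) :
    (ein G (insert v t)).card = (ein G t).card + degIn G t v := by
  classical
  have hins : ein G (insert v t)
      = ein G t ∪ (t.filter (fun w => G.Adj v w)).image (fun w => s(v,w)) := by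
    ext e
    induction e using Sym2.ind with
    | _ a b =>
      simp only [mem_ein_iff, Finset.mem_union, Finset.mem_image, Finset.mem_filter,
        Finset.mem_insert]
      constructor
      · rintro ⟨hab, (rfl | ha), (rfl | hb)⟩
        · exact absurd hab (G.irrefl)
        · exact Or.inr ⟨b, ⟨hb, hab⟩, rfl⟩
        · exact Or.inr ⟨a, ⟨ha, hab.symm⟩, Sym2.eq_swap⟩
        · exact Or.inl ⟨hab, ha, hb⟩
      · rintro (⟨hab, ha, hb⟩ | ⟨w, ⟨hw, hadj⟩, he⟩)
        · exact ⟨hab, Or.inr ha, Or.inr hb⟩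
        · rcases Sym2.eq_iff.1 he with ⟨rfl, rfl⟩ | ⟨rfl, rfl⟩
          · exact ⟨hadj, Or.inl rfl, Or.inr hw⟩
          · exact ⟨hadj.symm, Or.inr hw, Or.inl rfl⟩
  rw [hins, Finset.card_union_of_disjoint, Finset.card_image_of_injective,
    degIn_eq_card_filter]
  · intro a b hab
    simpa using Sym2.congr_right.mp hab
  · rw [Finset.disjoint_left]
    intro e he hei
    simp only [Finset.mem_image, Finset.mem_filter] at hei
    obtain ⟨w, ⟨hw, hadj⟩, rfl⟩ := hei
    rw [mem_ein_iff] at he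
    exact hv he.2.1

lemma handshake_ein (G : SimpleGraph V) (s : Finset V) :
    ∑ v ∈ s, degIn G s v = 2 * (ein G s).card := by
  classical
  induction s using Finset.induction_on with
  | empty => simp [ein, degIn]
  | @insert v t hv ih =>
    rw [Finset.sum_insert hv, card_ein_insert G hv]
    have h1 : degIn G (insert v t) v = degIn G t v := by
      simp only [degIn, Finset.filter_insert]
      rw [if_neg (G.irrefl)]
    have h2 : ∀ u ∈ t, degIn G (insert v t) u
        = degIn G t u + (if G.Adj v u then 1 else 0) := by
      intro u hu
      simp only [degIn, Finset.filter_insert]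
      by_cases h : G.Adj u v
      · rw [if_pos h, if_pos h.symm,
          Finset.card_insert_of_notMem (fun hc => hv (Finset.filter_subset _ _ hc))]
      · rw [if_neg h, if_neg (fun hc => h hc.symm), Nat.add_zero]
    rw [Finset.sum_congr rfl h2, Finset.sum_add_distrib, ih, h1]
    have h4 : ∑ x ∈ t, (if G.Adj v x then 1 else 0) = degIn G t v := by
      rw [degIn_eq_card_filter, Finset.card_filter]
    omega

lemma ein_card_le_choose (G : SimpleGraph V) (s : Finset V) :
    (ein G s).card ≤ s.card * (s.card - 1) / 2 := by
  classical
  have h := handshake_ein G s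
  have h2 : ∑ v ∈ s, degIn G s v ≤ ∑ _v ∈ s, (s.card - 1) :=
    Finset.sum_le_sum (fun v hv => degIn_le G s v hv)
  rw [Finset.sum_const, smul_eq_mul] at h2
  omega

lemma ein_erase_le (G : SimpleGraph V) {v : V} {s : Finset V} (hv : v ∈ s) :
    (ein G s).card ≤ (ein G (s.erase v)).card + degIn G s v := by
  classical
  have h : insert v (s.erase v) = s := Finset.insert_erase hv
  have h2 := card_ein_insert G (Finset.notMem_erase v s)
  rw [h] at h2
  have h3 := degIn_mono G (Finset.erase_subset v s) v
  omega

lemma ein_mono (G : SimpleGraph V) {s t : Finset V} (h : t ⊆ s) : ein G t ⊆ ein G s := by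
  classical
  intro e
  induction e using Sym2.ind with
  | _ a b =>
    rw [mem_ein_iff, mem_ein_iff]
    exact fun ⟨h1, h2, h3⟩ => ⟨h1, h h2, h h3⟩

lemma ein_split (G : SimpleGraph V) {s t : Finset V} (h : t ⊆ s)
    (hcross : ∀ a ∈ t, ∀ b ∈ s \ t, ¬ G.Adj a b) :
    (ein G s).card = (ein G t).card + (ein G (s \ t)).card := by
  classical
  have hunion : ein G s = ein G t ∪ ein G (s \ t) := by
    ext e
    induction e using Sym2.ind with
    | _ a b =>
      simp only [mem_ein_iff, Finset.mem_union]
      constructor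
      · rintro ⟨hab, ha, hb⟩
        by_cases hat : a ∈ t
        · by_cases hbt : b ∈ t
          · exact Or.inl ⟨hab, hat, hbt⟩
          · exact absurd hab (hcross a hat b (Finset.mem_sdiff.2 ⟨hb, hbt⟩))
        · by_cases hbt : b ∈ t
          · exact absurd hab.symm (hcross b hbt a (Finset.mem_sdiff.2 ⟨ha, hat⟩))
          · exact Or.inr ⟨hab, Finset.mem_sdiff.2 ⟨ha, hat⟩, Finset.mem_sdiff.2 ⟨hb, hbt⟩⟩
      · rintro (⟨hab, ha, hb⟩ | ⟨hab, ha, hb⟩)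
        · exact ⟨hab, h ha, h hb⟩
        · exact ⟨hab, (Finset.sdiff_subset) ha, (Finset.sdiff_subset) hb⟩
  rw [hunion, Finset.card_union_of_disjoint]
  rw [Finset.disjoint_left]
  intro e he1 he2
  induction e using Sym2.ind with
  | _ a b =>
    rw [mem_ein_iff] at he1 he2
    exact (Finset.mem_sdiff.1 he2.2.1).2 he1.2.1

lemma degIn_split (G : SimpleGraph V) {s t : Finset V} (h : t ⊆ s) (v : V) :
    degIn G s v = degIn G t v + degIn G (s \ t) v := by
  classical
  simp only [degIn]
  rw [← Finset.card_union_of_disjoint, ← Finset.filter_union, Finset.union_sdiff_of_subset h]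
  exact Finset.disjoint_filter_filter (Finset.disjoint_sdiff)

lemma sum_degIn_comm (G : SimpleGraph V) (a b : Finset V) :
    ∑ v ∈ a, degIn G b v = ∑ v ∈ b, degIn G a v := by
  classical
  have key : ∀ (x y : Finset V), ∑ v ∈ x, degIn G y v
      = ∑ v ∈ x, ∑ w ∈ y, (if G.Adj v w then 1 else 0) := by
    intro x y
    refine Finset.sum_congr rfl fun v _ => ?_
    rw [degIn_eq_card_filter, Finset.card_filter]
  rw [key, key, Finset.sum_comm]
  refine Finset.sum_congr rfl fun v _ => Finset.sum_congr rfl fun w _ => ?_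
  by_cases h : G.Adj v w
  · rw [if_pos h, if_pos h.symm]
  · rw [if_neg h, if_neg (fun hc => h hc.symm)]

lemma ein_pendant (G : SimpleGraph V) {s t : Finset V} (h : t ⊆ s)
    (hdeg : ∀ p ∈ s \ t, degIn G s p ≤ 1) :
    (ein G s).card ≤ (ein G t).card + (s \ t).card := by
  classical
  have h1 : ∑ v ∈ s \ t, degIn G s v + ∑ v ∈ t, degIn G s v = ∑ v ∈ s, degIn G s v :=
    Finset.sum_sdiff h
  have h2 : ∑ v ∈ t, degIn G s v = ∑ v ∈ t, degIn G t v + ∑ v ∈ t, degIn G (s \ t) v := by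
    rw [← Finset.sum_add_distrib]
    exact Finset.sum_congr rfl fun v _ => degIn_split G h v
  have h3 : ∑ v ∈ t, degIn G (s \ t) v = ∑ v ∈ s \ t, degIn G t v := sum_degIn_comm ..
  have h4 : ∑ v ∈ s \ t, degIn G t v ≤ ∑ v ∈ s \ t, degIn G s v :=
    Finset.sum_le_sum fun v _ => degIn_mono G h v
  have h5 : ∑ v ∈ s \ t, degIn G s v ≤ ∑ _v ∈ s \ t, 1 :=
    Finset.sum_le_sum fun v hv => hdeg v hv
  rw [Finset.sum_const, smul_eq_mul, mul_one] at h5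
  have hs := handshake_ein G s
  have ht := handshake_ein G t
  omega

lemma ein_univ_card (G : SimpleGraph V) [Fintype V] :
    (ein G Finset.univ).card = Nat.card G.edgeSet := by
  classical
  have h1 : ein G Finset.univ = G.edgeSet.toFinset := by
    ext e
    simp only [ein, Finset.mem_filter, Set.mem_toFinset, Finset.sym2_univ, Finset.mem_univ,
      true_and]
  rw [h1, Set.toFinset_card, Nat.card_eq_fintype_card]
instance (n : ℕ) : DecidableRel (TnStar n).Adj := fun i j =>
  decidable_of_iff _ (SimpleGraph.fromRel_adj _ i j).symm

variable {V : Type*}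

lemma tnstar6_copy (G : SimpleGraph V) {c a b x y z : V}
    (hab : a ≠ b) (hax : a ≠ x) (hay : a ≠ y) (haz : a ≠ z)
    (hbx : b ≠ x) (hby : b ≠ y) (hbz : b ≠ z)
    (hcy : c ≠ y) (hcz : c ≠ z) (hxz : x ≠ z)
    (h1 : G.Adj c a) (h2 : G.Adj c b) (h3 : G.Adj c x) (h4 : G.Adj x y) (h5 : G.Adj y z) :
    ContainsCopy G (TnStar 6) := by
  classical
  have hca : c ≠ a := G.ne_of_adj h1
  have hcb : c ≠ b := G.ne_of_adj h2
  have hcx : c ≠ x := G.ne_of_adj h3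
  have hxy : x ≠ y := G.ne_of_adj h4
  have hyz : y ≠ z := G.ne_of_adj h5
  refine ⟨⟨![c,a,b,x,y,z], ?_⟩, ?_⟩
  · intro i j hij
    fin_cases i <;> fin_cases j <;>
      simp only [Matrix.cons_val_zero, Matrix.cons_val_one, Matrix.head_cons,
        Matrix.cons_val_two, Matrix.tail_cons, Matrix.cons_val_three,
        Matrix.cons_val_four, Matrix.cons_val_fin_one, Fin.mk_zero,
        Matrix.cons_val', Matrix.cons_val_succ] at hij ⊢ <;>
      first
        | rfl
        | (exact absurd hij (by assumption))
        | (exact absurd hij.symm (by assumption))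
  · intro i j hij
    fin_cases i <;> fin_cases j <;>
      first
        | (exfalso; revert hij; decide)
        | exact h1 | exact h1.symm | exact h2 | exact h2.symm | exact h3 | exact h3.symm
        | exact h4 | exact h4.symm | exact h5 | exact h5.symm

lemma tnstar7_copy (G : SimpleGraph V) {c a b d x y z : V}
    (hab : a ≠ b) (had : a ≠ d) (hax : a ≠ x) (hay : a ≠ y) (haz : a ≠ z)
    (hbd : b ≠ d) (hbx : b ≠ x) (hby : b ≠ y) (hbz : b ≠ z)
    (hdx : d ≠ x) (hdy : d ≠ y) (hdz : d ≠ z)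
    (hcy : c ≠ y) (hcz : c ≠ z) (hxz : x ≠ z)
    (h1 : G.Adj c a) (h2 : G.Adj c b) (h2' : G.Adj c d)
    (h3 : G.Adj c x) (h4 : G.Adj x y) (h5 : G.Adj y z) :
    ContainsCopy G (TnStar 7) := by
  classical
  have hca : c ≠ a := G.ne_of_adj h1
  have hcb : c ≠ b := G.ne_of_adj h2
  have hcd : c ≠ d := G.ne_of_adj h2'
  have hcx : c ≠ x := G.ne_of_adj h3
  have hxy : x ≠ y := G.ne_of_adj h4
  have hyz : y ≠ z := G.ne_of_adj h5
  refine ⟨⟨![c,a,b,d,x,y,z], ?_⟩, ?_⟩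
  · intro i j hij
    fin_cases i <;> fin_cases j <;>
      simp only [Matrix.cons_val_zero, Matrix.cons_val_one, Matrix.head_cons,
        Matrix.cons_val_two, Matrix.tail_cons, Matrix.cons_val_three,
        Matrix.cons_val_four, Matrix.cons_val_fin_one, Fin.mk_zero,
        Matrix.cons_val', Matrix.cons_val_succ] at hij ⊢ <;>
      first
        | rfl
        | (exact absurd hij (by assumption))
        | (exact absurd hij.symm (by assumption))
  · intro i j hij
    fin_cases i <;> fin_cases j <;>
      first
        | (exfalso; revert hij; decide)
        | exact h1 | exact h1.symm | exact h2 | exact h2.symm | exact h2' | exact h2'.symm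
        | exact h3 | exact h3.symm | exact h4 | exact h4.symm | exact h5 | exact h5.symm

/-- If `c` has `n-4` neighbours besides a path `c-x-y-z`, we get a copy of `TnStar n`. -/
lemma broom_of (n : ℕ) (hn : n = 6 ∨ n = 7) (G : SimpleGraph V) {c x y z : V} (L : Finset V)
    (hL : n - 4 ≤ L.card) (hLadj : ∀ l ∈ L, G.Adj c l)
    (hLx : x ∉ L) (hLy : y ∉ L) (hLz : z ∉ L)
    (hcx : G.Adj c x) (hxy : G.Adj x y) (hyz : G.Adj y z)
    (hcy : c ≠ y) (hcz : c ≠ z) (hxz : x ≠ z) :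
    ContainsCopy G (TnStar n) := by
  classical
  rcases hn with rfl | rfl
  · obtain ⟨a, ha, b, hb, hab⟩ := Finset.one_lt_card.mp (by omega : 1 < L.card)
    exact tnstar6_copy G hab (ne_of_mem_of_not_mem ha hLx) (ne_of_mem_of_not_mem ha hLy)
      (ne_of_mem_of_not_mem ha hLz) (ne_of_mem_of_not_mem hb hLx) (ne_of_mem_of_not_mem hb hLy)
      (ne_of_mem_of_not_mem hb hLz) hcy hcz hxz (hLadj a ha) (hLadj b hb) hcx hxy hyz
  · obtain ⟨a, ha, b, hb, d, hd, hab, had, hbd⟩ :=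
      Finset.two_lt_card.mp (by omega : 2 < L.card)
    exact tnstar7_copy G hab had (ne_of_mem_of_not_mem ha hLx) (ne_of_mem_of_not_mem ha hLy)
      (ne_of_mem_of_not_mem ha hLz) hbd (ne_of_mem_of_not_mem hb hLx) (ne_of_mem_of_not_mem hb hLy)
      (ne_of_mem_of_not_mem hb hLz) (ne_of_mem_of_not_mem hd hLx) (ne_of_mem_of_not_mem hd hLy)
      (ne_of_mem_of_not_mem hd hLz) hcy hcz hxz (hLadj a ha) (hLadj b hb) (hLadj d hd)
      hcx hxy hyz

variable [DecidableEq V]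

lemma card_triple_le {x y z : V} : ({x,y,z} : Finset V).card ≤ 3 :=
  (Finset.card_insert_le _ _).trans (Nat.succ_le_succ ((Finset.card_insert_le _ _).trans (by simp)))

lemma key_broom (n : ℕ) (hn : n = 6 ∨ n = 7) (G : SimpleGraph V)
    (hfree : ¬ ContainsCopy G (TnStar n)) {c : V} {A : Finset V}
    (hAadj : ∀ a ∈ A, G.Adj c a) {x y z : V} (hx : x ∈ A)
    (hxy : G.Adj x y) (hyc : y ≠ c) (hyz : G.Adj y z) (hzc : z ≠ c) (hzx : z ≠ x)
    (hL : n - 4 ≤ (A \ {x,y,z}).card) : False := by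
  apply hfree
  refine broom_of n hn G (A \ {x,y,z}) hL (fun l hl => hAadj l (Finset.mem_sdiff.1 hl).1)
    ?_ ?_ ?_ (hAadj x hx) hxy hyz hyc.symm hzc.symm hzx.symm
  · simp
  · simp
  · simp

theorem ein_le_fB (n : ℕ) (hn : n = 6 ∨ n = 7) (G : SimpleGraph V)
    (hfree : ¬ ContainsCopy G (TnStar n)) :
    ∀ (N : ℕ) (s : Finset V), s.card ≤ N → (ein G s).card ≤ fB n s.card := by
  classical
  have hn4 : 4 ≤ n := by rcases hn with rfl | rfl <;> omega
  intro N
  induction N with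
  | zero =>
    intro s hs
    have h0 : s = ∅ := Finset.card_eq_zero.mp (by omega)
    subst h0
    have hsub : ein G (∅ : Finset V) ⊆ ∅ := by
      intro e he
      induction e using Sym2.ind with
      | _ a b => exact absurd ((mem_ein_iff G ∅ a b).1 he).2.1 (by simp)
    simp [Finset.subset_empty.mp hsub]
  | succ N ih =>
    intro s hsN
    by_cases hm : s.card ≤ n - 1
    · calc (ein G s).card ≤ s.card * (s.card - 1)/2 := ein_card_le_choose G s
        _ = fB n s.card := (fB_small n hn s.card hm).symm
    push_neg at hm
    have hmn : n ≤ s.card := by omega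
    by_cases hsplit : ∃ t, t ⊆ s ∧ t.Nonempty ∧ (s\t).Nonempty ∧ ∀ a ∈ t, ∀ b ∈ s\t, ¬G.Adj a b
    · obtain ⟨t, hts, htne, hstne, hcross⟩ := hsplit
      rw [ein_split G hts hcross]
      have hsum : t.card + (s\t).card = s.card := by
        rw [Finset.card_sdiff_of_subset hts]
        have := Finset.card_le_card hts
        omega
      have h1 : 1 ≤ t.card := Finset.card_pos.2 htne
      have h2 : 1 ≤ (s\t).card := Finset.card_pos.2 hstne
      calc (ein G t).card + (ein G (s\t)).card
          ≤ fB n t.card + fB n (s\t).card :=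
            add_le_add (ih t (by omega)) (ih (s\t) (by omega))
        _ ≤ fB n (t.card + (s\t).card) := fB_superadd n hn _ _
        _ = fB n s.card := by rw [hsum]
    have hfull : ∀ t, t ⊆ s → t.Nonempty → (∀ a ∈ t, ∀ b ∈ s \ t, ¬ G.Adj a b) → t = s := by
      intro t hts htne hcr
      by_contra hne
      have hd : (s \ t).Nonempty := by
        rw [Finset.sdiff_nonempty]
        intro hsub
        exact hne (Finset.Subset.antisymm hts hsub)
      exact hsplit ⟨t, hts, htne, hd, hcr⟩
    obtain ⟨c, hc, hcmax⟩ := s.exists_max_image (degIn G s) (Finset.card_pos.1 (by omega))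
    set A := s.filter (fun w => G.Adj c w) with hAdef
    have hAcard : A.card = degIn G s c := (degIn_eq_card_filter G s c).symm
    have hAadj : ∀ a ∈ A, G.Adj c a := fun a ha => (Finset.mem_filter.1 ha).2
    have hAmem : ∀ w, w ∈ A ↔ (w ∈ s ∧ G.Adj c w) := fun w => Finset.mem_filter
    have hcA : c ∉ A := fun h => G.irrefl (hAadj c h)
    have hAs : A ⊆ s := Finset.filter_subset _ _
    have hAsub : A ⊆ s.erase c :=
      fun a ha => Finset.mem_erase.2 ⟨(G.ne_of_adj (hAadj a ha)).symm, hAs ha⟩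
    have hAlt : A.card ≤ s.card - 1 := by
      have := Finset.card_le_card hAsub
      rw [Finset.card_erase_of_mem hc] at this
      exact this
    have hicA : insert c A ⊆ s := Finset.insert_subset hc hAs
    have hicAcard : (insert c A).card = A.card + 1 := Finset.card_insert_of_notMem hcA
    rcases lt_or_ge (degIn G s c) (n-2) with hdc | hdc
    · -- Case I : maximum degree at most n-3
      have h2 : ∑ v ∈ s, degIn G s v = 2*(ein G s).card := handshake_ein G s
      have h3 : ∑ v ∈ s, degIn G s v ≤ ∑ _v ∈ s, (n-3) :=
        Finset.sum_le_sum fun v hv => by have := hcmax v hv; omega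
      rw [Finset.sum_const, smul_eq_mul] at h3
      have h3' : ∑ v ∈ s, degIn G s v ≤ (n-3) * s.card := by rw [mul_comm] at h3; exact h3
      have h4 := fB_lowdeg_case n hn s.card hmn
      omega
    rcases lt_or_ge A.card (n-1) with hAn | hAn
    · -- Case II : maximum degree exactly n-2
      have hA2 : A.card = n-2 := by omega
      have hK2 : ∀ x ∈ A, ∀ y z : V, G.Adj x y → y ≠ c → G.Adj y z → z ≠ c → z ≠ x →
          (y ∈ A ∧ z ∈ A) := by
        intro x hx y z hxy hyc hyz hzc hzx
        by_contra hcon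
        apply key_broom n hn G hfree hAadj hx hxy hyc hyz hzc hzx
        have hinter : (A ∩ {x,y,z}).card ≤ 2 := by
          by_cases hyA : y ∈ A
          · have hzA : z ∉ A := fun h => hcon ⟨hyA, h⟩
            have hss : A ∩ {x,y,z} ⊆ {x,y} := by
              intro a ha
              obtain ⟨haA, ham⟩ := Finset.mem_inter.1 ha
              simp only [Finset.mem_insert, Finset.mem_singleton] at ham ⊢
              rcases ham with rfl | rfl | rfl
              · exact Or.inl rfl
              · exact Or.inr rfl
              · exact absurd haA hzA
            exact (Finset.card_le_card hss).trans
              ((Finset.card_insert_le _ _).trans (by simp))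
          · have hss : A ∩ {x,y,z} ⊆ {x,z} := by
              intro a ha
              obtain ⟨haA, ham⟩ := Finset.mem_inter.1 ha
              simp only [Finset.mem_insert, Finset.mem_singleton] at ham ⊢
              rcases ham with rfl | rfl | rfl
              · exact Or.inl rfl
              · exact absurd haA hyA
              · exact Or.inr rfl
            exact (Finset.card_le_card hss).trans
              ((Finset.card_insert_le _ _).trans (by simp))
        have hsd : (A \ {x,y,z}).card + (A ∩ {x,y,z}).card = A.card :=
          Finset.card_sdiff_add_card_inter A {x,y,z}
        omega
      have hOut : ∀ p, p ∈ s → p ∉ insert c A → ∀ x ∈ A, G.Adj p x → ∀ w, G.Adj p w → w = x := by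
        intro p hps hpni x hxA hpx w hpw
        by_contra hwx
        by_cases hwc : w = c
        · subst hwc
          exact hpni (Finset.mem_insert_of_mem ((hAmem p).2 ⟨hps, hpw.symm⟩))
        · have hpc : p ≠ c := fun h => hpni (h ▸ Finset.mem_insert_self c A)
          exact hpni (Finset.mem_insert_of_mem
            ((hK2 x hxA p w hpx.symm hpc hpw hwc hwx).1))
      -- structure: everything outside {c} ∪ A is a pendant vertex
      have hallP : ∀ p ∈ s \ insert c A, ∃ x ∈ A, G.Adj p x := by
        intro p hp
        set P := (s \ insert c A).filter (fun q => ∃ x ∈ A, G.Adj q x) with hPdef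
        have htfull : insert c A ∪ P = s := by
          apply hfull _ (Finset.union_subset hicA ((Finset.filter_subset _ _).trans
            Finset.sdiff_subset)) ⟨c, Finset.mem_union_left _ (Finset.mem_insert_self c A)⟩
          intro a hat b hbt hab
          obtain ⟨hbs, hbnt⟩ := Finset.mem_sdiff.1 hbt
          rcases Finset.mem_union.1 hat with hai | haP
          · rcases Finset.mem_insert.1 hai with rfl | haA
            · exact hbnt (Finset.mem_union_left _
                (Finset.mem_insert_of_mem ((hAmem b).2 ⟨hbs, hab⟩)))
            · have hbP : b ∈ P := by
                rw [hPdef, Finset.mem_filter, Finset.mem_sdiff]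
                refine ⟨⟨hbs, fun hbi => hbnt (Finset.mem_union_left _ hbi)⟩, a, haA, hab.symm⟩
              exact hbnt (Finset.mem_union_right _ hbP)
          · have haP' := Finset.mem_filter.1 haP
            obtain ⟨has, hani⟩ := Finset.mem_sdiff.1 haP'.1
            obtain ⟨x, hxA, hax⟩ := haP'.2
            have := hOut a has hani x hxA hax b hab
            subst this
            exact hbnt (Finset.mem_union_left _ (Finset.mem_insert_of_mem hxA))
        obtain ⟨hps, hpni⟩ := Finset.mem_sdiff.1 hp
        have : p ∈ insert c A ∪ P := htfull ▸ hps
        rcases Finset.mem_union.1 this with h | h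
        · exact absurd h hpni
        · exact (Finset.mem_filter.1 h).2
      have hpend : ∀ p ∈ s \ insert c A, degIn G s p ≤ 1 := by
        intro p hp
        obtain ⟨x, hxA, hpx⟩ := hallP p hp
        obtain ⟨hps, hpni⟩ := Finset.mem_sdiff.1 hp
        rw [degIn_eq_card_filter]
        refine (Finset.card_le_card ?_).trans (le_of_eq (Finset.card_singleton x))
        intro w hw
        obtain ⟨hws, hpw⟩ := Finset.mem_filter.1 hw
        exact Finset.mem_singleton.2 (hOut p hps hpni x hxA hpx w hpw)
      have hest := ein_pendant G hicA hpend
      have hsd : (s \ insert c A).card = s.card - (A.card + 1) := by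
        rw [Finset.card_sdiff_of_subset hicA, hicAcard]
      have hinsert : (ein G (insert c A)).card = (ein G A).card + degIn G A c :=
        card_ein_insert G hcA
      have hdegAc : degIn G A c = A.card := by
        rw [degIn_eq_card_filter]
        congr 1
        exact Finset.filter_true_of_mem hAadj
      -- bound ein A using the host vertex
      have houtne : (s \ insert c A).Nonempty := by
        rw [← Finset.card_pos, hsd]
        omega
      obtain ⟨p, hp⟩ := houtne
      obtain ⟨x₀, hx₀A, hpx₀⟩ := hallP p hp
      obtain ⟨hps, hpni⟩ := Finset.mem_sdiff.1 hp
      have hx₀c : x₀ ≠ c := ne_of_mem_of_not_mem hx₀A hcA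
      have hpc : p ≠ c := fun h => hpni (h ▸ Finset.mem_insert_self c A)
      have hpA : p ∉ A := fun h => hpni (Finset.mem_insert_of_mem h)
      have hx₀0 : degIn G A x₀ = 0 := by
        rw [degIn_eq_card_filter, Finset.card_eq_zero]
        rw [Finset.filter_eq_empty_iff]
        intro w hwA hadj
        exact hpA (hK2 w hwA x₀ p hadj.symm hx₀c hpx₀.symm hpc
          (ne_of_mem_of_not_mem hwA hpA).symm).2
      have heA : (ein G A).card ≤ (ein G (A.erase x₀)).card + degIn G A x₀ :=
        ein_erase_le G hx₀A
      have heA2 : (ein G (A.erase x₀)).card ≤ (n-3) * (n-4)/2 := by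
        have h1 := ein_card_le_choose G (A.erase x₀)
        rw [Finset.card_erase_of_mem hx₀A, hA2] at h1
        have e1 : n - 2 - 1 = n - 3 := by omega
        have e2 : n - 3 - 1 = n - 4 := by omega
        rw [e1, e2] at h1
        exact h1
      have hfin := fB_pendant_case n hn s.card hmn
      omega
    · -- Case III : maximum degree at least n-1
      have hKF : ∀ x ∈ A, ∀ y z : V, G.Adj x y → y ≠ c → G.Adj y z → z ≠ c → z ≠ x →
          False := by
        intro x hx y z hxy hyc hyz hzc hzx
        apply key_broom n hn G hfree hAadj hx hxy hyc hyz hzc hzx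
        have hsd : (A \ {x,y,z}).card + (A ∩ {x,y,z}).card = A.card :=
          Finset.card_sdiff_add_card_inter A {x,y,z}
        have h3 : (A ∩ {x,y,z}).card ≤ 3 :=
          (Finset.card_le_card Finset.inter_subset_right).trans card_triple_le
        omega
      have hOut : ∀ p, p ∈ s → p ∉ insert c A → ∀ x ∈ A, G.Adj p x → ∀ w, G.Adj p w → w = x := by
        intro p hps hpni x hxA hpx w hpw
        by_contra hwx
        by_cases hwc : w = c
        · subst hwc
          exact hpni (Finset.mem_insert_of_mem ((hAmem p).2 ⟨hps, hpw.symm⟩))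
        · have hpc : p ≠ c := fun h => hpni (h ▸ Finset.mem_insert_self c A)
          exact hKF x hxA p w hpx.symm hpc hpw hwc hwx
      have hallP : ∀ p ∈ s \ insert c A, ∃ x ∈ A, G.Adj p x := by
        intro p hp
        set P := (s \ insert c A).filter (fun q => ∃ x ∈ A, G.Adj q x) with hPdef
        have htfull : insert c A ∪ P = s := by
          apply hfull _ (Finset.union_subset hicA ((Finset.filter_subset _ _).trans
            Finset.sdiff_subset)) ⟨c, Finset.mem_union_left _ (Finset.mem_insert_self c A)⟩
          intro a hat b hbt hab
          obtain ⟨hbs, hbnt⟩ := Finset.mem_sdiff.1 hbt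
          rcases Finset.mem_union.1 hat with hai | haP
          · rcases Finset.mem_insert.1 hai with rfl | haA
            · exact hbnt (Finset.mem_union_left _
                (Finset.mem_insert_of_mem ((hAmem b).2 ⟨hbs, hab⟩)))
            · have hbP : b ∈ P := by
                rw [hPdef, Finset.mem_filter, Finset.mem_sdiff]
                refine ⟨⟨hbs, fun hbi => hbnt (Finset.mem_union_left _ hbi)⟩, a, haA, hab.symm⟩
              exact hbnt (Finset.mem_union_right _ hbP)
          · have haP' := Finset.mem_filter.1 haP
            obtain ⟨has, hani⟩ := Finset.mem_sdiff.1 haP'.1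
            obtain ⟨x, hxA, hax⟩ := haP'.2
            have := hOut a has hani x hxA hax b hab
            subst this
            exact hbnt (Finset.mem_union_left _ (Finset.mem_insert_of_mem hxA))
        obtain ⟨hps, hpni⟩ := Finset.mem_sdiff.1 hp
        have : p ∈ insert c A ∪ P := htfull ▸ hps
        rcases Finset.mem_union.1 this with h | h
        · exact absurd h hpni
        · exact (Finset.mem_filter.1 h).2
      have hpend : ∀ p ∈ s \ insert c A, degIn G s p ≤ 1 := by
        intro p hp
        obtain ⟨x, hxA, hpx⟩ := hallP p hp
        obtain ⟨hps, hpni⟩ := Finset.mem_sdiff.1 hp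
        rw [degIn_eq_card_filter]
        refine (Finset.card_le_card ?_).trans (le_of_eq (Finset.card_singleton x))
        intro w hw
        obtain ⟨hws, hpw⟩ := Finset.mem_filter.1 hw
        exact Finset.mem_singleton.2 (hOut p hps hpni x hxA hpx w hpw)
      have hest := ein_pendant G hicA hpend
      have hsd : (s \ insert c A).card = s.card - (A.card + 1) := by
        rw [Finset.card_sdiff_of_subset hicA, hicAcard]
      have hinsert : (ein G (insert c A)).card = (ein G A).card + degIn G A c :=
        card_ein_insert G hcA
      have hdegAc : degIn G A c = A.card := by
        rw [degIn_eq_card_filter]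
        congr 1
        exact Finset.filter_true_of_mem hAadj
      -- each vertex of A has at most one neighbour inside A
      have hdeg1 : ∀ x ∈ A, degIn G A x ≤ 1 := by
        intro x hxA
        rw [degIn_eq_card_filter]
        rw [Finset.card_le_one]
        intro a ha b hb
        obtain ⟨haA, hxa⟩ := Finset.mem_filter.1 ha
        obtain ⟨hbA, hxb⟩ := Finset.mem_filter.1 hb
        by_contra hab
        exact hKF a haA x b hxa.symm (ne_of_mem_of_not_mem hxA hcA) hxb
          (ne_of_mem_of_not_mem hbA hcA) (Ne.symm hab)
      have hhs : ∑ v ∈ A, degIn G A v = 2*(ein G A).card := handshake_ein G A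
      have hhs2 : ∑ v ∈ A, degIn G A v ≤ ∑ _v ∈ A, 1 :=
        Finset.sum_le_sum fun v hv => hdeg1 v hv
      rw [Finset.sum_const, smul_eq_mul, mul_one] at hhs2
      have hfin := fB_star_case n hn s.card (by omega)
      omega

/-- Disjoint union of cliques of size `k` (and one of size `p % k`) on `Fin p`. -/
def cliquesGraph (k p : ℕ) : SimpleGraph (Fin p) where
  Adj u v := u ≠ v ∧ u.val / k = v.val / k
  symm := ⟨by rintro u v ⟨h1, h2⟩; exact ⟨h1.symm, h2.symm⟩⟩
  loopless := ⟨by rintro u ⟨h, _⟩; exact h rfl⟩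

lemma cliquesGraph_free (n p : ℕ) (hn : n = 6 ∨ n = 7) :
    ¬ ContainsCopy (cliquesGraph (n-1) p) (TnStar n) := by
  rintro ⟨f, hf⟩
  rcases hn with rfl | rfl
  · have hb : ∀ i : Fin 6, (f i).val / 5 = (f 0).val / 5 := by
      have h1 := hf 0 1 (by decide)
      have h2 := hf 0 2 (by decide)
      have h3 := hf 0 3 (by decide)
      have h4 := hf 3 4 (by decide)
      have h5 := hf 4 5 (by decide)
      intro i
      fin_cases i
      · rfl
      · exact h1.2.symm
      · exact h2.2.symm
      · exact h3.2.symm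
      · exact h4.2.symm.trans h3.2.symm
      · exact (h5.2.symm.trans h4.2.symm).trans h3.2.symm
    have hinj : Function.Injective (fun i : Fin 6 => (⟨(f i).val % 5, Nat.mod_lt _ (by omega)⟩ : Fin 5)) := by
      intro i j hij
      apply f.injective
      have hbi := hb i
      have hbj := hb j
      have hm : (f i).val % 5 = (f j).val % 5 := by
        simpa using congrArg Fin.val hij
      have : (f i).val = (f j).val := by omega
      exact Fin.ext this
    have := Fintype.card_le_of_injective _ hinj
    simp at this
  · have hb : ∀ i : Fin 7, (f i).val / 6 = (f 0).val / 6 := by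
      have h1 := hf 0 1 (by decide)
      have h2 := hf 0 2 (by decide)
      have h3 := hf 0 3 (by decide)
      have h3' := hf 0 4 (by decide)
      have h4 := hf 4 5 (by decide)
      have h5 := hf 5 6 (by decide)
      intro i
      fin_cases i
      · rfl
      · exact h1.2.symm
      · exact h2.2.symm
      · exact h3.2.symm
      · exact h3'.2.symm
      · exact h4.2.symm.trans h3'.2.symm
      · exact (h5.2.symm.trans h4.2.symm).trans h3'.2.symm
    have hinj : Function.Injective (fun i : Fin 7 => (⟨(f i).val % 6, Nat.mod_lt _ (by omega)⟩ : Fin 6)) := by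
      intro i j hij
      apply f.injective
      have hbi := hb i
      have hbj := hb j
      have hm : (f i).val % 6 = (f j).val % 6 := by
        simpa using congrArg Fin.val hij
      have : (f i).val = (f j).val := by omega
      exact Fin.ext this
    have := Fintype.card_le_of_injective _ hinj
    simp at this

lemma card_filter_fin (p : ℕ) (Q : ℕ → Prop) [DecidablePred Q] :
    ((Finset.univ : Finset (Fin p)).filter (fun u => Q u.val)).card
      = ((Finset.range p).filter Q).card := by
  apply Finset.card_bij (fun u _ => u.val)
  · intro u hu
    simp only [Finset.mem_filter, Finset.mem_range]
    exact ⟨u.isLt, (Finset.mem_filter.1 hu).2⟩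
  · intro a _ b _ hab
    exact Fin.ext hab
  · intro m hm
    obtain ⟨hmp, hQ⟩ := Finset.mem_filter.1 hm
    rw [Finset.mem_range] at hmp
    exact ⟨⟨m, hmp⟩, by simp [hQ], rfl⟩


lemma cliquesGraph_degIn5 (p : ℕ) (v : Fin p) :
    degIn (cliquesGraph 5 p) Finset.univ v
      = min (5*(v.val/5) + 5) p - 5*(v.val/5) - 1 := by
  classical
  rw [degIn_eq_card_filter]
  have e1 : (Finset.univ.filter (fun w => (cliquesGraph 5 p).Adj v w))
      = (Finset.univ.filter (fun w : Fin p => w.val / 5 = v.val / 5)).erase v := by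
    ext w
    simp only [Finset.mem_filter, Finset.mem_erase, Finset.mem_univ, true_and]
    show (cliquesGraph 5 p).Adj v w ↔ _
    constructor
    · rintro ⟨h1, h2⟩; exact ⟨fun h => h1 h.symm, h2.symm⟩
    · rintro ⟨h1, h2⟩; exact ⟨fun h => h1 h.symm, h2.symm⟩
  have hvmem : v ∈ Finset.univ.filter (fun w : Fin p => w.val / 5 = v.val / 5) :=
    Finset.mem_filter.2 ⟨Finset.mem_univ v, rfl⟩
  rw [e1, Finset.card_erase_of_mem hvmem]
  have e2 : (Finset.univ.filter (fun w : Fin p => w.val / 5 = v.val / 5)).card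
      = ((Finset.range p).filter (fun m => m / 5 = v.val / 5)).card :=
    card_filter_fin p (fun m => m / 5 = v.val / 5)
  have e3 : (Finset.range p).filter (fun m => m / 5 = v.val / 5)
      = Finset.Ico (5*(v.val/5)) (min (5*(v.val/5) + 5) p) := by
    ext m
    simp only [Finset.mem_filter, Finset.mem_range, Finset.mem_Ico]
    omega
  rw [e2, e3, Nat.card_Ico]

lemma cliquesGraph_sum5 (p : ℕ) :
    ∑ v ∈ (Finset.univ : Finset (Fin p)), degIn (cliquesGraph 5 p) Finset.univ v
      = 5*(p/5)*(5-1) + (p%5)*(p%5 - 1) := by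
  classical
  have hsplit := Finset.sum_filter_add_sum_filter_not (Finset.univ : Finset (Fin p))
    (fun v => v.val < 5*(p/5)) (fun v => degIn (cliquesGraph 5 p) Finset.univ v)
  have hlow : ∀ v ∈ (Finset.univ : Finset (Fin p)).filter (fun v => v.val < 5*(p/5)),
      degIn (cliquesGraph 5 p) Finset.univ v = 5 - 1 := by
    intro v hv
    have hvlt : v.val < 5*(p/5) := (Finset.mem_filter.1 hv).2
    rw [cliquesGraph_degIn5 p v]
    omega
  have hhigh : ∀ v ∈ (Finset.univ : Finset (Fin p)).filter (fun v => ¬ v.val < 5*(p/5)),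
      degIn (cliquesGraph 5 p) Finset.univ v = p%5 - 1 := by
    intro v hv
    have hvge : ¬ v.val < 5*(p/5) := (Finset.mem_filter.1 hv).2
    have hvlt : v.val < p := v.isLt
    rw [cliquesGraph_degIn5 p v]
    omega
  have hclow : ((Finset.univ : Finset (Fin p)).filter
      (fun v => v.val < 5*(p/5))).card = 5*(p/5) := by
    rw [card_filter_fin p (fun m => m < 5*(p/5))]
    have he : (Finset.range p).filter (fun m => m < 5*(p/5)) = Finset.range (5*(p/5)) := by
      ext m
      simp only [Finset.mem_filter, Finset.mem_range]
      omega
    rw [he, Finset.card_range]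
  have hchigh : ((Finset.univ : Finset (Fin p)).filter
      (fun v => ¬ v.val < 5*(p/5))).card = p%5 := by
    rw [card_filter_fin p (fun m => ¬ m < 5*(p/5))]
    have he : (Finset.range p).filter (fun m => ¬ m < 5*(p/5))
        = Finset.Ico (5*(p/5)) p := by
      ext m
      simp only [Finset.mem_filter, Finset.mem_range, Finset.mem_Ico]
      omega
    rw [he, Nat.card_Ico]
    omega
  rw [Finset.sum_congr rfl hlow, Finset.sum_congr rfl hhigh, Finset.sum_const,
    Finset.sum_const, smul_eq_mul, smul_eq_mul, hclow, hchigh] at hsplit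
  omega

lemma cliquesGraph_degIn6 (p : ℕ) (v : Fin p) :
    degIn (cliquesGraph 6 p) Finset.univ v
      = min (6*(v.val/6) + 6) p - 6*(v.val/6) - 1 := by
  classical
  rw [degIn_eq_card_filter]
  have e1 : (Finset.univ.filter (fun w => (cliquesGraph 6 p).Adj v w))
      = (Finset.univ.filter (fun w : Fin p => w.val / 6 = v.val / 6)).erase v := by
    ext w
    simp only [Finset.mem_filter, Finset.mem_erase, Finset.mem_univ, true_and]
    show (cliquesGraph 6 p).Adj v w ↔ _
    constructor
    · rintro ⟨h1, h2⟩; exact ⟨fun h => h1 h.symm, h2.symm⟩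
    · rintro ⟨h1, h2⟩; exact ⟨fun h => h1 h.symm, h2.symm⟩
  have hvmem : v ∈ Finset.univ.filter (fun w : Fin p => w.val / 6 = v.val / 6) :=
    Finset.mem_filter.2 ⟨Finset.mem_univ v, rfl⟩
  rw [e1, Finset.card_erase_of_mem hvmem]
  have e2 : (Finset.univ.filter (fun w : Fin p => w.val / 6 = v.val / 6)).card
      = ((Finset.range p).filter (fun m => m / 6 = v.val / 6)).card :=
    card_filter_fin p (fun m => m / 6 = v.val / 6)
  have e3 : (Finset.range p).filter (fun m => m / 6 = v.val / 6)
      = Finset.Ico (6*(v.val/6)) (min (6*(v.val/6) + 6) p) := by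
    ext m
    simp only [Finset.mem_filter, Finset.mem_range, Finset.mem_Ico]
    omega
  rw [e2, e3, Nat.card_Ico]

lemma cliquesGraph_sum6 (p : ℕ) :
    ∑ v ∈ (Finset.univ : Finset (Fin p)), degIn (cliquesGraph 6 p) Finset.univ v
      = 6*(p/6)*(6-1) + (p%6)*(p%6 - 1) := by
  classical
  have hsplit := Finset.sum_filter_add_sum_filter_not (Finset.univ : Finset (Fin p))
    (fun v => v.val < 6*(p/6)) (fun v => degIn (cliquesGraph 6 p) Finset.univ v)
  have hlow : ∀ v ∈ (Finset.univ : Finset (Fin p)).filter (fun v => v.val < 6*(p/6)),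
      degIn (cliquesGraph 6 p) Finset.univ v = 6 - 1 := by
    intro v hv
    have hvlt : v.val < 6*(p/6) := (Finset.mem_filter.1 hv).2
    rw [cliquesGraph_degIn6 p v]
    omega
  have hhigh : ∀ v ∈ (Finset.univ : Finset (Fin p)).filter (fun v => ¬ v.val < 6*(p/6)),
      degIn (cliquesGraph 6 p) Finset.univ v = p%6 - 1 := by
    intro v hv
    have hvge : ¬ v.val < 6*(p/6) := (Finset.mem_filter.1 hv).2
    have hvlt : v.val < p := v.isLt
    rw [cliquesGraph_degIn6 p v]
    omega
  have hclow : ((Finset.univ : Finset (Fin p)).filter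
      (fun v => v.val < 6*(p/6))).card = 6*(p/6) := by
    rw [card_filter_fin p (fun m => m < 6*(p/6))]
    have he : (Finset.range p).filter (fun m => m < 6*(p/6)) = Finset.range (6*(p/6)) := by
      ext m
      simp only [Finset.mem_filter, Finset.mem_range]
      omega
    rw [he, Finset.card_range]
  have hchigh : ((Finset.univ : Finset (Fin p)).filter
      (fun v => ¬ v.val < 6*(p/6))).card = p%6 := by
    rw [card_filter_fin p (fun m => ¬ m < 6*(p/6))]
    have he : (Finset.range p).filter (fun m => ¬ m < 6*(p/6))
        = Finset.Ico (6*(p/6)) p := by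
      ext m
      simp only [Finset.mem_filter, Finset.mem_range, Finset.mem_Ico]
      omega
    rw [he, Nat.card_Ico]
    omega
  rw [Finset.sum_congr rfl hlow, Finset.sum_congr rfl hhigh, Finset.sum_const,
    Finset.sum_const, smul_eq_mul, smul_eq_mul, hclow, hchigh] at hsplit
  omega

lemma cliquesGraph_card (n p : ℕ) (hn : n = 6 ∨ n = 7) :
    Nat.card (cliquesGraph (n-1) p).edgeSet = fB n p := by
  classical
  have h2fB := fB_construction n hn p
  rw [← ein_univ_card]
  rcases hn with rfl | rfl
  · have hhs := handshake_ein (cliquesGraph 5 p) (Finset.univ : Finset (Fin p))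
    have hsum := cliquesGraph_sum5 p
    norm_num at h2fB hhs hsum ⊢
    omega
  · have hhs := handshake_ein (cliquesGraph 6 p) (Finset.univ : Finset (Fin p))
    have hsum := cliquesGraph_sum6 p
    norm_num at h2fB hhs hsum ⊢
    omega

theorem stmt19 (p n r : ℕ) (hn : n = 6 ∨ n = 7) (hp : n ≤ p)
    (hr : r ≤ n - 2) (hmod : p % (n - 1) = r) :
    exNum p (TnStar n) = ((n - 2) * p - r * (n - 1 - r)) / 2 := by
  classical
  rw [← fB_rhs n hn p r hmod]
  have hgreat : IsGreatest {m : ℕ | ∃ G : SimpleGraph (Fin p),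
      ¬ ContainsCopy G (TnStar n) ∧ Nat.card G.edgeSet = m} (fB n p) := by
    constructor
    · exact ⟨cliquesGraph (n-1) p, cliquesGraph_free n p hn, cliquesGraph_card n p hn⟩
    · rintro m ⟨G, hfree, hcard⟩
      have h1 := ein_le_fB n hn G hfree p Finset.univ (by simp)
      rw [ein_univ_card] at h1
      simp only [Finset.card_univ, Fintype.card_fin] at h1
      rw [← hcard]
      exact h1
  exact hgreat.csSup_eq
end
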